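/- arXiv:2001.01567 — 6 statements merged into one kernel-verified Lean document; each statement's English description precedes it below -/
import Mathlib

section
/- Let 0 < α < 1, 0 ≤ β ≤ 1, γ = α + β(1−α), and suppose ω ∈ C_{1−γ;ψ}[a,b] is such that D_{a+}^{γ;ψ}ω exists and belongs to C_{1−γ;ψ}[a,b]. Then for every t ∈ (a,b], I_{a+}^{γ;ψ}( D_{a+}^{γ;ψ} ω )(t) = I_{a+}^{α;ψ}( ^H D_{a+}^{α,β;ψ} ω )(t). -/
open Real MeasureTheory Set Filter Topology

section BetaAux
open intervalIntegral

lemma beta01 {p q : ℝ} (hp : 0 < p) (hq : 0 < q) :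
    ∫ x in (0:ℝ)..1, x ^ (p-1) * (1-x) ^ (q-1)
      = Real.Gamma p * Real.Gamma q / Real.Gamma (p+q) := by
  have h := Complex.Gamma_mul_Gamma_eq_betaIntegral (s := (p:ℂ)) (t := (q:ℂ))
    (by simpa using hp) (by simpa using hq)
  have hbeta : Complex.betaIntegral (p:ℂ) (q:ℂ)
      = ((∫ x in (0:ℝ)..1, x ^ (p-1) * (1-x) ^ (q-1) : ℝ) : ℂ) := by
    rw [Complex.betaIntegral, ← intervalIntegral.integral_ofReal]
    apply intervalIntegral.integral_congr
    intro x hx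
    rw [uIcc_of_le (by norm_num : (0:ℝ) ≤ 1)] at hx
    push_cast
    rw [Complex.ofReal_cpow hx.1, Complex.ofReal_cpow (by linarith [hx.2])]
    push_cast
    ring
  rw [hbeta] at h
  have hG : Real.Gamma (p+q) ≠ 0 := (Real.Gamma_pos_of_pos (by linarith)).ne'
  have := congrArg Complex.re h
  simp only [Complex.Gamma_ofReal, ← Complex.ofReal_add, ← Complex.ofReal_mul,
    Complex.ofReal_re] at this
  field_simp
  linarith [this]

lemma betaFlat_integrableOn {p q c d : ℝ} (hp : 0 < p) (hq : 0 < q) (hcd : c < d) :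
    IntegrableOn (fun u => (d-u) ^ (p-1) * (u-c) ^ (q-1)) (Ioo c d) := by
  set m := (c+d)/2 with hm
  have hcm : c < m := by simp [hm]; linarith
  have hmd : m < d := by simp [hm]; linarith
  have h1 : IntervalIntegrable (fun u => (d-u) ^ (p-1) * (u-c) ^ (q-1)) volume c m := by
    have hq' : IntervalIntegrable (fun u => (u-c) ^ (q-1)) volume c m := by
      simpa using (intervalIntegrable_rpow' (a := 0) (b := m - c)
        (r := q-1) (by linarith)).comp_sub_right c
    have := hq'.continuousOn_mul (g := fun u => (d-u) ^ (p-1)) ?_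
    · simpa [mul_comm] using this
    · apply ContinuousOn.rpow_const
      · fun_prop
      · intro x hx
        rw [uIcc_of_le hcm.le] at hx
        left
        intro h; nlinarith [hx.2]
  have h2 : IntervalIntegrable (fun u => (d-u) ^ (p-1) * (u-c) ^ (q-1)) volume m d := by
    have hp' : IntervalIntegrable (fun u => (d-u) ^ (p-1)) volume m d := by
      simpa using (intervalIntegrable_rpow' (a := d - m) (b := 0)
        (r := p-1) (by linarith)).comp_sub_left d
    exact hp'.mul_continuousOn (by
      apply ContinuousOn.rpow_const
      · fun_prop
      · intro x hx
        rw [uIcc_of_le hmd.le] at hx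
        left
        intro h; nlinarith [hx.1])
  have := h1.trans h2
  rw [intervalIntegrable_iff_integrableOn_Ioc_of_le (by linarith)] at this
  exact this.mono_set Ioo_subset_Ioc_self

lemma betaFlat_integral {p q c d : ℝ} (hp : 0 < p) (hq : 0 < q) (hcd : c < d) :
    ∫ u in Ioo c d, (d-u) ^ (p-1) * (u-c) ^ (q-1)
      = (d-c) ^ (p+q-1) * (Real.Gamma p * Real.Gamma q / Real.Gamma (p+q)) := by
  have hdc : (0:ℝ) < d - c := by linarith
  have e0 : ∫ u in Ioo c d, (d-u) ^ (p-1) * (u-c) ^ (q-1)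
      = ∫ u in c..d, (d-u) ^ (p-1) * (u-c) ^ (q-1) := by
    rw [intervalIntegral.integral_of_le hcd.le, MeasureTheory.integral_Ioc_eq_integral_Ioo]
  rw [e0]
  have e1 : ∫ u in c..d, (d-u) ^ (p-1) * (u-c) ^ (q-1)
      = ∫ x in (0:ℝ)..(d-c), (d-(x+c)) ^ (p-1) * ((x+c)-c) ^ (q-1) := by
    rw [intervalIntegral.integral_comp_add_right (fun u => (d-u) ^ (p-1) * (u-c) ^ (q-1)) c]
    norm_num
  have e2 : ∫ x in (0:ℝ)..(d-c), (d-(x+c)) ^ (p-1) * ((x+c)-c) ^ (q-1)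
      = (d-c) • ∫ y in (0:ℝ)..1, (d-((d-c)*y+c)) ^ (p-1) * (((d-c)*y+c)-c) ^ (q-1) := by
    rw [intervalIntegral.smul_integral_comp_mul_left
      (fun x => (d-(x+c)) ^ (p-1) * ((x+c)-c) ^ (q-1)) (d-c)]
    norm_num
  rw [e1, e2]
  have e3 : ∫ y in (0:ℝ)..1, (d-((d-c)*y+c)) ^ (p-1) * (((d-c)*y+c)-c) ^ (q-1)
      = (d-c) ^ (p-1) * (d-c) ^ (q-1) * ∫ y in (0:ℝ)..1, y ^ (q-1) * (1-y) ^ (p-1) := by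
    rw [← intervalIntegral.integral_const_mul]
    apply intervalIntegral.integral_congr
    intro y hy
    rw [uIcc_of_le (by norm_num : (0:ℝ) ≤ 1)] at hy
    simp only []
    have h1 : d - ((d-c)*y+c) = (d-c)*(1-y) := by ring
    have h2 : ((d-c)*y+c)-c = (d-c)*y := by ring
    rw [h1, h2, Real.mul_rpow hdc.le (by linarith [hy.2]), Real.mul_rpow hdc.le hy.1]
    ring
  rw [e3, beta01 hq hp]
  have : (d-c) • ((d-c) ^ (p-1) * (d-c) ^ (q-1) *
      (Real.Gamma q * Real.Gamma p / Real.Gamma (q+p)))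
      = ((d-c)^(1:ℝ) * ((d-c) ^ (p-1) * (d-c) ^ (q-1))) *
      (Real.Gamma p * Real.Gamma q / Real.Gamma (p+q)) := by
    rw [Real.rpow_one, add_comm q p, smul_eq_mul]; ring
  rw [this, ← Real.rpow_add hdc, ← Real.rpow_add hdc]
  ring_nf

end BetaAux

section PsiBeta
variable {ψ ψ' : ℝ → ℝ} {c d : ℝ}
  (hcd : c < d)
  (hder : ∀ x ∈ Icc c d, HasDerivWithinAt ψ (ψ' x) (Icc c d) x)
  (hpos : ∀ x ∈ Icc c d, 0 ≤ ψ' x)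
  (hmono : StrictMonoOn ψ (Icc c d))

include hcd hder hmono

lemma psi_image_Ioo : ψ '' Ioo c d = Ioo (ψ c) (ψ d) := by
  have hc : ContinuousOn ψ (Icc c d) := fun x hx => (hder x hx).continuousWithinAt
  apply Subset.antisymm
  · rintro _ ⟨x, hx, rfl⟩
    exact ⟨hmono (left_mem_Icc.2 hcd.le) (Ioo_subset_Icc_self hx) hx.1,
      hmono (Ioo_subset_Icc_self hx) (right_mem_Icc.2 hcd.le) hx.2⟩
  · exact intermediate_value_Ioo hcd.le hc

include hpos

lemma psi_beta_integral {p q : ℝ} (hp : 0 < p) (hq : 0 < q) :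
    ∫ s in Ioo c d, ψ' s * ((ψ d - ψ s) ^ (p-1) * (ψ s - ψ c) ^ (q-1))
      = (ψ d - ψ c) ^ (p+q-1) * (Real.Gamma p * Real.Gamma q / Real.Gamma (p+q)) := by
  have h' : ∀ x ∈ Ioo c d, HasDerivWithinAt ψ (ψ' x) (Ioo c d) x :=
    fun x hx => (hder x (Ioo_subset_Icc_self hx)).mono Ioo_subset_Icc_self
  have hinj : InjOn ψ (Ioo c d) := hmono.injOn.mono Ioo_subset_Icc_self
  have key := MeasureTheory.integral_image_eq_integral_abs_deriv_smul
    measurableSet_Ioo h' hinj (fun u => (ψ d - u) ^ (p-1) * (u - ψ c) ^ (q-1))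
  rw [psi_image_Ioo hcd hder hmono] at key
  have e : ∫ s in Ioo c d, ψ' s * ((ψ d - ψ s) ^ (p-1) * (ψ s - ψ c) ^ (q-1))
      = ∫ x in Ioo c d, |ψ' x| • ((ψ d - ψ x) ^ (p-1) * (ψ x - ψ c) ^ (q-1)) := by
    apply setIntegral_congr_fun measurableSet_Ioo
    intro x hx
    simp [abs_of_nonneg (hpos x (Ioo_subset_Icc_self hx))]
  rw [e, ← key,
    betaFlat_integral hp hq (hmono (left_mem_Icc.2 hcd.le) (right_mem_Icc.2 hcd.le) hcd)]

lemma psi_beta_integrableOn {p q : ℝ} (hp : 0 < p) (hq : 0 < q) :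
    IntegrableOn (fun s => ψ' s * ((ψ d - ψ s) ^ (p-1) * (ψ s - ψ c) ^ (q-1))) (Ioo c d) := by
  have h' : ∀ x ∈ Ioo c d, HasDerivWithinAt ψ (ψ' x) (Ioo c d) x :=
    fun x hx => (hder x (Ioo_subset_Icc_self hx)).mono Ioo_subset_Icc_self
  have hinj : InjOn ψ (Ioo c d) := hmono.injOn.mono Ioo_subset_Icc_self
  have key := (MeasureTheory.integrableOn_image_iff_integrableOn_abs_deriv_smul
    measurableSet_Ioo h' hinj (fun u => (ψ d - u) ^ (p-1) * (u - ψ c) ^ (q-1))).1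
  rw [psi_image_Ioo hcd hder hmono] at key
  have := key (betaFlat_integrableOn hp hq
    (hmono (left_mem_Icc.2 hcd.le) (right_mem_Icc.2 hcd.le) hcd))
  apply this.congr_fun _ measurableSet_Ioo
  intro x hx
  simp [abs_of_nonneg (hpos x (Ioo_subset_Icc_self hx))]

end PsiBeta

/-- The ψ-Riemann–Liouville fractional integral of order `α` with base point `a`.
(By convention, order `0` gives the identity.) -/
noncomputable def psiInt (ψ ψ' : ℝ → ℝ) (a α : ℝ) (ω : ℝ → ℝ) (t : ℝ) : ℝ :=
  if α = 0 then ω t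
  else (Real.Gamma α)⁻¹ * ∫ s in a..t, ψ' s * (ψ t - ψ s) ^ (α - 1) * ω s

/-- The ψ-Riemann–Liouville fractional derivative of order `γ`. -/
noncomputable def psiRLD (ψ ψ' : ℝ → ℝ) (a γ : ℝ) (ω : ℝ → ℝ) (t : ℝ) : ℝ :=
  (ψ' t)⁻¹ * deriv (psiInt ψ ψ' a (1 - γ) ω) t

/-- The ψ-Hilfer fractional derivative of order `α` and type `β`. -/
noncomputable def psiHilferD (ψ ψ' : ℝ → ℝ) (a α β : ℝ) (ω : ℝ → ℝ) (t : ℝ) : ℝ :=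
  psiInt ψ ψ' a (β * (1 - α))
    (fun τ => (ψ' τ)⁻¹ * deriv (psiInt ψ ψ' a ((1 - β) * (1 - α)) ω) τ) t


lemma psiInt_of_ne {ψ ψ' : ℝ → ℝ} {a α : ℝ} {ω : ℝ → ℝ} {t : ℝ} (h : α ≠ 0) :
    psiInt ψ ψ' a α ω t
      = (Real.Gamma α)⁻¹ * ∫ s in a..t, ψ' s * (ψ t - ψ s) ^ (α - 1) * ω s := if_neg h

set_option maxHeartbeats 2000000 in
/-- `I^{γ;ψ} D^{γ;ψ} ω = I^{α;ψ} {}^H D^{α,β;ψ} ω` for ω in the weighted space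
`C_{1-γ;ψ}[a,b]` whose RL-derivative of order γ exists and lies in the same space. -/
theorem psiInt_psiRLD_eq_psiInt_psiHilferD
    (a b : ℝ) (hab : a < b) (ψ ψ' : ℝ → ℝ)
    (hψ : ∀ t ∈ Icc a b, HasDerivWithinAt ψ (ψ' t) (Icc a b) t)
    (hψ'c : ContinuousOn ψ' (Icc a b))
    (hψ'pos : ∀ t ∈ Icc a b, 0 < ψ' t)
    (hψmono : StrictMonoOn ψ (Icc a b))
    (α β γ : ℝ) (hα0 : 0 < α) (hα1 : α < 1) (hβ0 : 0 ≤ β) (hβ1 : β ≤ 1)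
    (hγ : γ = α + β * (1 - α))
    (ω : ℝ → ℝ)
    (hω : ∃ W : ℝ → ℝ, ContinuousOn W (Icc a b) ∧
      ∀ t ∈ Ioc a b, W t = (ψ t - ψ a) ^ (1 - γ) * ω t)
    (hdiff : ∀ t ∈ Ioc a b, DifferentiableAt ℝ (psiInt ψ ψ' a (1 - γ) ω) t)
    (hD : ∃ W : ℝ → ℝ, ContinuousOn W (Icc a b) ∧
      ∀ t ∈ Ioc a b, W t = (ψ t - ψ a) ^ (1 - γ) * psiRLD ψ ψ' a γ ω t) :
    ∀ t ∈ Ioc a b,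
      psiInt ψ ψ' a γ (psiRLD ψ ψ' a γ ω) t
        = psiInt ψ ψ' a α (psiHilferD ψ ψ' a α β ω) t := by
  intro t ht
  rcases eq_or_lt_of_le hβ0 with hβz | hβpos
  · -- β = 0 : both sides are the same function
    have hγα : γ = α := by rw [hγ, ← hβz]; ring
    have h1 : (1 - β) * (1 - α) = 1 - γ := by rw [hγ, ← hβz]; ring
    have h2 : β * (1 - α) = 0 := by rw [← hβz]; ring
    have hfun : psiHilferD ψ ψ' a α β ω = psiRLD ψ ψ' a γ ω := by
      funext s
      unfold psiHilferD psiRLD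
      simp only [h1, h2, psiInt, if_pos rfl]
      simp
    rw [hfun, hγα]
  · -- main case : 0 < β
    have htb : t ≤ b := ht.2
    have hta : a < t := ht.1
    have hψcont : ContinuousOn ψ (Icc a b) := fun x hx => (hψ x hx).continuousWithinAt
    obtain ⟨W, hWc, hWeq⟩ := hD
    set δ := β * (1 - α) with hδ
    have hδpos : 0 < δ := mul_pos hβpos (by linarith)
    have hγδ : γ = α + δ := hγ
    have hγpos : 0 < γ := by rw [hγδ]; linarith
    have hγne : γ ≠ 0 := hγpos.ne'
    have hαne : α ≠ 0 := hα0.ne'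
    have hδne : δ ≠ 0 := hδpos.ne'
    have h1γ : (1 - β) * (1 - α) = 1 - γ := by rw [hγ]; ring
    -- clamping to [a,b]
    set cl : ℝ → ℝ := fun x => max a (min b x) with hcl
    have hclmem : ∀ x, cl x ∈ Icc a b :=
      fun x => ⟨le_max_left _ _, max_le hab.le (min_le_left _ _)⟩
    have hclcont : Continuous cl := continuous_const.max (continuous_const.min continuous_id)
    have hclid : ∀ x ∈ Icc a b, cl x = x := by
      intro x hx
      rw [hcl]
      simp only [min_eq_right hx.2, max_eq_right hx.1]
    set Ψ : ℝ → ℝ := fun x => ψ (cl x) with hΨdef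
    set Ψ' : ℝ → ℝ := fun x => ψ' (cl x) with hΨ'def
    set WE : ℝ → ℝ := fun x => W (cl x) with hWEdef
    have hΨc : Continuous Ψ := hψcont.comp_continuous hclcont hclmem
    have hΨ'c : Continuous Ψ' := hψ'c.comp_continuous hclcont hclmem
    have hWEc : Continuous WE := hWc.comp_continuous hclcont hclmem
    have hΨeq : ∀ x ∈ Icc a b, Ψ x = ψ x := fun x hx => by rw [hΨdef]; simp [hclid x hx]
    have hΨ'eq : ∀ x ∈ Icc a b, Ψ' x = ψ' x := fun x hx => by rw [hΨ'def]; simp [hclid x hx]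
    have hWEeq : ∀ x ∈ Icc a b, WE x = W x := fun x hx => by rw [hWEdef]; simp [hclid x hx]
    obtain ⟨CW, hCW⟩ : ∃ C, ∀ x, ‖WE x‖ ≤ C := by
      obtain ⟨C, hC⟩ := isCompact_Icc.exists_bound_of_continuousOn hWc
      exact ⟨C, fun x => hC _ (hclmem x)⟩
    have hΨ'nonneg : ∀ x, 0 ≤ Ψ' x := fun x => (hψ'pos _ (hclmem x)).le
    set gg : ℝ → ℝ := fun τ => (Ψ τ - Ψ a) ^ (γ - 1) * WE τ with hggdef
    have hmem : ∀ {x}, x ∈ Ioo a t → x ∈ Icc a b :=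
      fun {x} hx => ⟨hx.1.le, hx.2.le.trans htb⟩
    have hamem : a ∈ Icc a b := left_mem_Icc.2 hab.le
    have htmem : t ∈ Icc a b := ⟨hta.le, htb⟩
    have hΨa : Ψ a = ψ a := hΨeq a hamem
    have hΨt : Ψ t = ψ t := hΨeq t htmem
    -- the RL derivative coincides with the continuous representative gg on (a,t)
    have hgg : ∀ τ ∈ Ioo a t, psiRLD ψ ψ' a γ ω τ = gg τ := by
      intro τ hτ
      have hτab : τ ∈ Icc a b := hmem hτ
      have hτIoc : τ ∈ Ioc a b := ⟨hτ.1, hτab.2⟩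
      have hx : 0 < ψ τ - ψ a := sub_pos.2 (hψmono hamem hτab hτ.1)
      have e1 : gg τ = (ψ τ - ψ a) ^ (γ - 1) * W τ := by
        rw [hggdef]
        simp only [hΨeq τ hτab, hΨa, hWEeq τ hτab]
      rw [show gg τ = gg τ from rfl] at e1
      have e2 : gg τ = (ψ τ - ψ a) ^ (γ - 1) *
          ((ψ τ - ψ a) ^ (1 - γ) * psiRLD ψ ψ' a γ ω τ) := by
        rw [e1, hWeq τ hτIoc]
      rw [e2, ← mul_assoc, ← Real.rpow_add hx, show γ - 1 + (1 - γ) = 0 by ring,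
        Real.rpow_zero, one_mul]
    -- beta-type facts for Ψ on subintervals of [a,b]
    have hsubder : ∀ c' d', a ≤ c' → d' ≤ b →
        ∀ x ∈ Icc c' d', HasDerivWithinAt Ψ (Ψ' x) (Icc c' d') x := by
      intro c' d' hc' hd' x hx
      have hsub : Icc c' d' ⊆ Icc a b := Icc_subset_Icc hc' hd'
      have h0 := (hψ x (hsub hx)).mono hsub
      rw [hΨ'eq x (hsub hx)]
      exact h0.congr (fun y hy => hΨeq y (hsub hy)) (hΨeq x (hsub hx))
    have hsubmono : ∀ c' d', a ≤ c' → d' ≤ b → StrictMonoOn Ψ (Icc c' d') := by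
      intro c' d' hc' hd' x hx y hy hxy
      have hsub : Icc c' d' ⊆ Icc a b := Icc_subset_Icc hc' hd'
      rw [hΨeq x (hsub hx), hΨeq y (hsub hy)]
      exact hψmono (hsub hx) (hsub hy) hxy
    have betaI : ∀ c' d', a ≤ c' → c' < d' → d' ≤ b → ∀ p q : ℝ, 0 < p → 0 < q →
        ∫ s in Ioo c' d', Ψ' s * ((Ψ d' - Ψ s) ^ (p-1) * (Ψ s - Ψ c') ^ (q-1))
          = (Ψ d' - Ψ c') ^ (p+q-1) * (Real.Gamma p * Real.Gamma q / Real.Gamma (p+q)) :=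
      fun c' d' h1 h2 h3 p q hp hq =>
        psi_beta_integral h2 (hsubder c' d' h1 h3) (fun x _ => hΨ'nonneg x)
          (hsubmono c' d' h1 h3) hp hq
    have betaInt : ∀ c' d', a ≤ c' → c' < d' → d' ≤ b → ∀ p q : ℝ, 0 < p → 0 < q →
        IntegrableOn (fun s => Ψ' s * ((Ψ d' - Ψ s) ^ (p-1) * (Ψ s - Ψ c') ^ (q-1)))
          (Ioo c' d') :=
      fun c' d' h1 h2 h3 p q hp hq =>
        psi_beta_integrableOn h2 (hsubder c' d' h1 h3) (fun x _ => hΨ'nonneg x)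
          (hsubmono c' d' h1 h3) hp hq
    have hΨlt : ∀ {x y}, x ∈ Icc a b → y ∈ Icc a b → x < y → Ψ x < Ψ y := by
      intro x y hx hy hxy
      rw [hΨeq x hx, hΨeq y hy]
      exact hψmono hx hy hxy
    -- the double-integral kernel
    set Ki : ℝ → ℝ → ℝ := fun s τ => Ψ' τ * ((Ψ s - Ψ τ) ^ (δ-1) * gg τ) with hKidef
    set Fi : ℝ → ℝ → ℝ := fun s τ => Ψ' s * (Ψ t - Ψ s) ^ (α-1) * Ki s τ with hFidef
    set H : ℝ → ℝ → ℝ := fun s τ => if τ < s then Fi s τ else 0 with hHdef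
    have hHs : ∀ s, (fun τ => H s τ) = (Iio s).indicator (fun τ => Fi s τ) := by
      intro s; funext τ
      rw [hHdef]; simp [Set.indicator_apply, mem_Iio]
    have hHt : ∀ τ, (fun s => H s τ) = (Ioi τ).indicator (fun s => Fi s τ) := by
      intro τ; funext s
      rw [hHdef]; simp [Set.indicator_apply, mem_Ioi]
    have hIio : ∀ s ∈ Ioo a t, Iio s ∩ Ioo a t = Ioo a s := by
      intro s hs; ext x
      simp only [mem_inter_iff, mem_Iio, mem_Ioo]
      exact ⟨fun ⟨h1, h2, _⟩ => ⟨h2, h1⟩, fun ⟨h1, h2⟩ => ⟨h2, h1, h2.trans hs.2⟩⟩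
    have hIoi : ∀ τ ∈ Ioo a t, Ioi τ ∩ Ioo a t = Ioo τ t := by
      intro τ hτ; ext x
      simp only [mem_inter_iff, mem_Ioi, mem_Ioo]
      exact ⟨fun ⟨h1, _, h3⟩ => ⟨h1, h3⟩, fun ⟨h1, h2⟩ => ⟨h1, hτ.1.trans h1, h2⟩⟩
    -- sectionwise integrability
    have hFiInt : ∀ s ∈ Ioo a t, IntegrableOn (fun τ => Fi s τ) (Ioo a s) := by
      intro s hs
      have base := betaInt a s le_rfl hs.1 (hs.2.le.trans htb) δ γ hδpos hγpos
      have b2 := base.bdd_mul (c := CW) hWEc.aestronglyMeasurable.restrict (Filter.Eventually.of_forall fun x => hCW x)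
      have b3 := b2.const_mul (Ψ' s * (Ψ t - Ψ s) ^ (α-1))
      apply b3.congr
      refine Filter.Eventually.of_forall (fun τ => ?_)
      rw [hFidef, hKidef, hggdef]
      ring
    -- measurability of the kernel
    have hFim : Measurable (fun z : ℝ × ℝ => Fi z.1 z.2) := by
      rw [hFidef, hKidef, hggdef]
      have m1 : Measurable Ψ := hΨc.measurable
      have m2 : Measurable Ψ' := hΨ'c.measurable
      have m3 : Measurable WE := hWEc.measurable
      fun_prop
    have hmH : Measurable (Function.uncurry H) := by
      have : Function.uncurry H = fun z : ℝ × ℝ =>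
          if z.2 < z.1 then Fi z.1 z.2 else 0 := by
        funext z; rw [Function.uncurry, hHdef]
      rw [this]
      exact Measurable.ite (measurableSet_lt measurable_snd measurable_fst) hFim
        measurable_const
    have hHaesm : AEStronglyMeasurable (Function.uncurry H)
        ((volume.restrict (Ioo a t)).prod (volume.restrict (Ioo a t))) :=
      hmH.aestronglyMeasurable
    -- Fubini condition 1
    have cond1 : ∀ᵐ s ∂(volume.restrict (Ioo a t)),
        Integrable (fun τ => H s τ) (volume.restrict (Ioo a t)) := by
      rw [ae_restrict_iff' measurableSet_Ioo]
      refine Filter.Eventually.of_forall (fun s hs => ?_)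
      rw [hHs s, integrable_indicator_iff measurableSet_Iio]
      rw [IntegrableOn, Measure.restrict_restrict measurableSet_Iio, hIio s hs]
      exact hFiInt s hs
    -- the norm integral and its bound
    have hnormint : ∀ s ∈ Ioo a t,
        ∫ τ, ‖H s τ‖ ∂(volume.restrict (Ioo a t)) = ∫ τ in Ioo a s, ‖Fi s τ‖ := by
      intro s hs
      have e2 : (fun τ => ‖H s τ‖)
          = fun τ => (Iio s).indicator (fun τ => ‖Fi s τ‖) τ := by
        funext τ
        rw [hHdef]
        simp only [Set.indicator_apply, mem_Iio]
        split <;> simp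
      rw [show (∫ τ, ‖H s τ‖ ∂(volume.restrict (Ioo a t)))
          = ∫ τ, (Iio s).indicator (fun τ => ‖Fi s τ‖) τ ∂(volume.restrict (Ioo a t)) from by
        rw [e2]]
      rw [integral_indicator measurableSet_Iio,
        Measure.restrict_restrict measurableSet_Iio, hIio s hs]
    set Bδγ := Real.Gamma δ * Real.Gamma γ / Real.Gamma (δ+γ) with hBδγ
    set Bαδ := Real.Gamma α * Real.Gamma δ / Real.Gamma (α+δ) with hBαδ
    have hCW0 : 0 ≤ CW := le_trans (norm_nonneg _) (hCW a)
    -- Fubini condition 2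
    have cond2 : Integrable (fun s => ∫ τ, ‖H s τ‖ ∂(volume.restrict (Ioo a t)))
        (volume.restrict (Ioo a t)) := by
      set Φ : ℝ → ℝ := fun s =>
        CW * Bδγ * (Ψ' s * ((Ψ t - Ψ s) ^ (α-1) * (Ψ s - Ψ a) ^ (δ+γ-1))) with hΦdef
      have hΦint : Integrable Φ (volume.restrict (Ioo a t)) := by
        have := betaInt a t le_rfl hta htb α (δ+γ) hα0 (by positivity)
        exact this.const_mul (CW * Bδγ)
      have haesm2 : AEStronglyMeasurable
          (fun s => ∫ τ, ‖H s τ‖ ∂(volume.restrict (Ioo a t)))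
          (volume.restrict (Ioo a t)) := hHaesm.norm.integral_prod_right'
      apply Integrable.mono' hΦint haesm2
      rw [ae_restrict_iff' measurableSet_Ioo]
      refine Filter.Eventually.of_forall (fun s hs => ?_)
      have h0 : 0 ≤ ∫ τ, ‖H s τ‖ ∂(volume.restrict (Ioo a t)) :=
        integral_nonneg fun τ => norm_nonneg _
      rw [Real.norm_eq_abs, abs_of_nonneg h0, hnormint s hs]
      have hsab : s ∈ Icc a b := hmem hs
      have hbase := betaInt a s le_rfl hs.1 (hs.2.le.trans htb) δ γ hδpos hγpos
      have hΨts : 0 ≤ Ψ t - Ψ s := sub_nonneg.2 (hΨlt hsab htmem hs.2).le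
      have hC1 : 0 ≤ Ψ' s * (Ψ t - Ψ s) ^ (α-1) :=
        mul_nonneg (hΨ'nonneg s) (Real.rpow_nonneg hΨts _)
      have hmono1 : ∫ τ in Ioo a s, ‖Fi s τ‖
          ≤ ∫ τ in Ioo a s, CW * (Ψ' s * (Ψ t - Ψ s) ^ (α-1))
              * (Ψ' τ * ((Ψ s - Ψ τ) ^ (δ-1) * (Ψ τ - Ψ a) ^ (γ-1))) := by
        apply setIntegral_mono_on (hFiInt s hs).norm
          (hbase.const_mul (CW * (Ψ' s * (Ψ t - Ψ s) ^ (α-1)))) measurableSet_Ioo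
        intro τ hτ
        have hτab : τ ∈ Icc a b := ⟨hτ.1.le, (hτ.2.le.trans hs.2.le).trans htb⟩
        have hP : Fi s τ = (Ψ' s * (Ψ t - Ψ s) ^ (α-1)
            * (Ψ' τ * ((Ψ s - Ψ τ) ^ (δ-1) * (Ψ τ - Ψ a) ^ (γ-1)))) * WE τ := by
          rw [hFidef, hKidef, hggdef]; ring
        have hΨsτ : 0 ≤ Ψ s - Ψ τ := sub_nonneg.2 (hΨlt hτab hsab hτ.2).le
        have hΨτa : 0 ≤ Ψ τ - Ψ a := sub_nonneg.2 (hΨlt hamem hτab hτ.1).le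
        have hPn : 0 ≤ Ψ' s * (Ψ t - Ψ s) ^ (α-1)
            * (Ψ' τ * ((Ψ s - Ψ τ) ^ (δ-1) * (Ψ τ - Ψ a) ^ (γ-1))) :=
          mul_nonneg hC1 (mul_nonneg (hΨ'nonneg τ)
            (mul_nonneg (Real.rpow_nonneg hΨsτ _) (Real.rpow_nonneg hΨτa _)))
        rw [Real.norm_eq_abs, hP, abs_mul, abs_of_nonneg hPn]
        calc _ ≤ (Ψ' s * (Ψ t - Ψ s) ^ (α-1)
              * (Ψ' τ * ((Ψ s - Ψ τ) ^ (δ-1) * (Ψ τ - Ψ a) ^ (γ-1)))) * CW := by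
              apply mul_le_mul_of_nonneg_left _ hPn
              exact hCW τ
          _ = _ := by ring
      have heval : ∫ τ in Ioo a s, CW * (Ψ' s * (Ψ t - Ψ s) ^ (α-1))
            * (Ψ' τ * ((Ψ s - Ψ τ) ^ (δ-1) * (Ψ τ - Ψ a) ^ (γ-1)))
          = CW * (Ψ' s * (Ψ t - Ψ s) ^ (α-1)) * ((Ψ s - Ψ a) ^ (δ+γ-1) * Bδγ) := by
        rw [MeasureTheory.integral_const_mul,
          betaI a s le_rfl hs.1 (hs.2.le.trans htb) δ γ hδpos hγpos, hBδγ]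
      calc ∫ τ in Ioo a s, ‖Fi s τ‖ ≤ _ := hmono1
        _ = CW * (Ψ' s * (Ψ t - Ψ s) ^ (α-1)) * ((Ψ s - Ψ a) ^ (δ+γ-1) * Bδγ) := heval
        _ = Φ s := by rw [hΦdef]; ring
    have hHint : Integrable (Function.uncurry H)
        ((volume.restrict (Ioo a t)).prod (volume.restrict (Ioo a t))) :=
      (MeasureTheory.integrable_prod_iff hHaesm).2 ⟨cond1, cond2⟩
    -- rewrite the left-hand side
    have hL : psiInt ψ ψ' a γ (psiRLD ψ ψ' a γ ω) t
        = (Real.Gamma γ)⁻¹ * ∫ s in Ioo a t, Ψ' s * ((Ψ t - Ψ s) ^ (γ-1) * gg s) := by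
      rw [psiInt_of_ne hγne, intervalIntegral.integral_of_le hta.le,
        MeasureTheory.integral_Ioc_eq_integral_Ioo]
      congr 1
      apply setIntegral_congr_fun measurableSet_Ioo
      intro s hs
      simp only []
      have hsab := hmem hs
      rw [← hgg s hs, hΨeq s hsab, hΨt, hΨ'eq s hsab]
      ring
    -- rewrite the right-hand side
    have hR : psiInt ψ ψ' a α (psiHilferD ψ ψ' a α β ω) t
        = (Real.Gamma α)⁻¹ * ∫ s in Ioo a t,
            (Real.Gamma δ)⁻¹ * (Ψ' s * (Ψ t - Ψ s) ^ (α-1) * ∫ τ in Ioo a s, Ki s τ) := by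
      rw [psiInt_of_ne hαne, intervalIntegral.integral_of_le hta.le,
        MeasureTheory.integral_Ioc_eq_integral_Ioo]
      congr 1
      apply setIntegral_congr_fun measurableSet_Ioo
      intro s hs
      simp only []
      have hsab := hmem hs
      have hhil : psiHilferD ψ ψ' a α β ω s
          = (Real.Gamma δ)⁻¹ * ∫ τ in Ioo a s, Ki s τ := by
        unfold psiHilferD
        rw [← hδ, psiInt_of_ne hδne, intervalIntegral.integral_of_le hs.1.le,
          MeasureTheory.integral_Ioc_eq_integral_Ioo]
        congr 1
        apply setIntegral_congr_fun measurableSet_Ioo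
        intro τ hτ
        have hτab : τ ∈ Icc a b := ⟨hτ.1.le, (hτ.2.le.trans hs.2.le).trans htb⟩
        have hτIoo : τ ∈ Ioo a t := ⟨hτ.1, hτ.2.trans hs.2⟩
        simp only [h1γ]
        rw [show (ψ' τ)⁻¹ * deriv (psiInt ψ ψ' a (1 - γ) ω) τ = gg τ from hgg τ hτIoo]
        rw [hKidef]
        simp only []
        rw [hΨeq s hsab, hΨeq τ hτab, hΨ'eq τ hτab]
        ring
      rw [hhil, hΨeq s hsab, hΨt, hΨ'eq s hsab]
      ring
    rw [hL, hR]
    -- pull out the constant and pass to the iterated integral of H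
    rw [MeasureTheory.integral_const_mul]
    have step2 : ∫ s in Ioo a t, (Ψ' s * (Ψ t - Ψ s) ^ (α-1) * ∫ τ in Ioo a s, Ki s τ)
        = ∫ s in Ioo a t, ∫ τ in Ioo a t, H s τ := by
      apply setIntegral_congr_fun measurableSet_Ioo
      intro s hs
      simp only []
      rw [hHs s, integral_indicator measurableSet_Iio,
        Measure.restrict_restrict measurableSet_Iio, hIio s hs]
      rw [show (fun τ => Fi s τ) = fun τ => (Ψ' s * (Ψ t - Ψ s) ^ (α-1)) * Ki s τ from by
        funext τ; rw [hFidef]]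
      rw [MeasureTheory.integral_const_mul]
    have step3 : ∫ s in Ioo a t, ∫ τ in Ioo a t, H s τ
        = ∫ τ in Ioo a t, ∫ s in Ioo a t, H s τ :=
      MeasureTheory.integral_integral_swap hHint
    have step4 : ∫ τ in Ioo a t, ∫ s in Ioo a t, H s τ
        = ∫ τ in Ioo a t, (Ψ' τ * gg τ) * ((Ψ t - Ψ τ) ^ (α+δ-1) * Bαδ) := by
      apply setIntegral_congr_fun measurableSet_Ioo
      intro τ hτ
      simp only []
      have hτab : τ ∈ Icc a b := hmem hτ
      rw [hHt τ, integral_indicator measurableSet_Ioi,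
        Measure.restrict_restrict measurableSet_Ioi, hIoi τ hτ]
      rw [show (fun s => Fi s τ) = fun s => (Ψ' τ * gg τ)
          * (Ψ' s * ((Ψ t - Ψ s) ^ (α-1) * (Ψ s - Ψ τ) ^ (δ-1))) from by
        funext s; rw [hFidef, hKidef]; ring]
      rw [MeasureTheory.integral_const_mul, betaI τ t hτ.1.le hτ.2 htb α δ hα0 hδpos, hBαδ]
    have step5 : ∫ τ in Ioo a t, (Ψ' τ * gg τ) * ((Ψ t - Ψ τ) ^ (α+δ-1) * Bαδ)
        = Bαδ * ∫ τ in Ioo a t, Ψ' τ * ((Ψ t - Ψ τ) ^ (γ-1) * gg τ) := by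
      rw [← MeasureTheory.integral_const_mul]
      apply setIntegral_congr_fun measurableSet_Ioo
      intro τ hτ
      simp only []
      rw [show γ - 1 = α + δ - 1 from by rw [hγδ]]
      ring
    rw [step2, step3, step4, step5]
    -- final constants
    have hGα : Real.Gamma α ≠ 0 := (Real.Gamma_pos_of_pos hα0).ne'
    have hGδ : Real.Gamma δ ≠ 0 := (Real.Gamma_pos_of_pos hδpos).ne'
    have hGγ : Real.Gamma γ ≠ 0 := (Real.Gamma_pos_of_pos hγpos).ne'
    rw [hBαδ, ← hγδ]
    field_simp
end

section
/- Abstract Gronwall lemma for Picard operators: let (X,d) be a metric space equipped with a partial order ≤ that is closed under limits (if xₙ → x, yₙ → y and xₙ ≤ yₙ for all n, then x ≤ y). Let T : X → X be a monotone increasing Picard operator with fixed point set F_T = {u*}. Then for every u ∈ X, u ≤ T(u) implies u ≤ u*. -/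
open Filter Topology

/-- Abstract Gronwall lemma for Picard operators: if `(X,d)` is a metric space with a
partial order closed under limits, and `T : X → X` is a monotone increasing Picard
operator with fixed point set `{ustar}`, then `u ≤ T u` implies `u ≤ ustar`. -/
theorem picard_abstract_gronwall {X : Type*} [MetricSpace X] [PartialOrder X]
    (hclosed : ∀ (x y : ℕ → X) (x₀ y₀ : X),
      Tendsto x atTop (𝓝 x₀) → Tendsto y atTop (𝓝 y₀) → (∀ n, x n ≤ y n) → x₀ ≤ y₀)
    (T : X → X) (hT : Monotone T) (ustar : X)
    (hfix : {u : X | T u = u} = {ustar})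
    (hpicard : ∀ u₀ : X, Tendsto (fun n => T^[n] u₀) atTop (𝓝 ustar)) :
    ∀ u : X, u ≤ T u → u ≤ ustar := by
  intro u hu
  have key : ∀ n, u ≤ T^[n] u := by
    intro n
    induction n with
    | zero => simp
    | succ n ih =>
      calc u ≤ T u := hu
      _ ≤ T (T^[n] u) := hT ih
      _ = T^[n+1] u := (Function.iterate_succ_apply' T n u).symm
  exact hclosed (fun _ => u) (fun n => T^[n] u) u ustar tendsto_const_nhds (hpicard u) key
end

section
/- Pachpatte's integral inequality: let x, p, q : [0,∞) → ℝ be nonnegative continuous functions and let η : [0,∞) → ℝ be a positive, nondecreasing continuous function, such that for all t ≥ 0, x(t) ≤ η(t) + ∫₀ᵗ p(s)[ x(s) + ∫₀ˢ q(σ) x(σ) dσ ] ds. Then for all t ≥ 0, x(t) ≤ η(t) · [ 1 + ∫₀ᵗ p(s) exp( ∫₀ˢ ( p(σ) + q(σ) ) dσ ) ds ]. -/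
open Real MeasureTheory Set Filter Topology

lemma my_prim_hasDerivAt {f : ℝ → ℝ} (hf : Continuous f) (t : ℝ) :
    HasDerivAt (fun u => ∫ s in (0:ℝ)..u, f s) (f t) t :=
  intervalIntegral.integral_hasDerivAt_right (hf.intervalIntegrable 0 t)
    (hf.stronglyMeasurableAtFilter _ _) hf.continuousAt

lemma my_prim_continuous {f : ℝ → ℝ} (hf : Continuous f) :
    Continuous (fun u => ∫ s in (0:ℝ)..u, f s) :=
  continuous_iff_continuousAt.2 fun t => (my_prim_hasDerivAt hf t).continuousAt

lemma my_reduced {P Q U : ℝ → ℝ} (hP : Continuous P) (hQ : Continuous Q) (hU : Continuous U)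
    (hPnn : ∀ t, 0 ≤ P t) (hQnn : ∀ t, 0 ≤ Q t) (hUnn : ∀ t, 0 ≤ U t)
    (h : ∀ t ≥ (0:ℝ), U t ≤ 1 + ∫ s in (0:ℝ)..t, P s * (U s + ∫ σ in (0:ℝ)..s, Q σ * U σ)) :
    ∀ t ≥ (0:ℝ), U t ≤ 1 + ∫ s in (0:ℝ)..t,
      P s * Real.exp (∫ σ in (0:ℝ)..s, (P σ + Q σ)) := by
  set g : ℝ → ℝ := fun s => P s * (U s + ∫ σ in (0:ℝ)..s, Q σ * U σ) with hg_def
  have hg : Continuous g := hP.mul (hU.add (my_prim_continuous (hQ.mul hU)))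
  set Z : ℝ → ℝ := fun t => 1 + ∫ s in (0:ℝ)..t, g s with hZ_def
  have hZd : ∀ t, HasDerivAt Z (g t) t := fun t => (my_prim_hasDerivAt hg t).const_add 1
  have hZc : Continuous Z := continuous_const.add (my_prim_continuous hg)
  have hUZ : ∀ t ≥ (0:ℝ), U t ≤ Z t := h
  have hZ1 : ∀ t ≥ (0:ℝ), 1 ≤ Z t := by
    intro t ht
    have : 0 ≤ ∫ s in (0:ℝ)..t, g s := by
      apply intervalIntegral.integral_nonneg ht
      intro s hs
      apply mul_nonneg (hPnn s)
      apply add_nonneg (hUnn s)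
      exact intervalIntegral.integral_nonneg hs.1 fun σ hσ => mul_nonneg (hQnn σ) (hUnn σ)
    simpa [hZ_def] using this
  have hZnn : ∀ t ≥ (0:ℝ), 0 ≤ Z t := fun t ht => le_trans zero_le_one (hZ1 t ht)
  set V : ℝ → ℝ := fun t => Z t + ∫ s in (0:ℝ)..t, Q s * Z s with hV_def
  have hVd : ∀ t, HasDerivAt V (g t + Q t * Z t) t :=
    fun t => (hZd t).add (my_prim_hasDerivAt (hQ.mul hZc) t)
  have hVc : Continuous V := hZc.add (my_prim_continuous (hQ.mul hZc))
  have hZV : ∀ t ≥ (0:ℝ), Z t ≤ V t := by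
    intro t ht
    have : 0 ≤ ∫ s in (0:ℝ)..t, Q s * Z s :=
      intervalIntegral.integral_nonneg ht fun s hs => mul_nonneg (hQnn s) (hZnn s hs.1)
    calc Z t = Z t + 0 := by ring
      _ ≤ Z t + ∫ s in (0:ℝ)..t, Q s * Z s := by linarith
  have hgPV : ∀ t ≥ (0:ℝ), g t ≤ P t * V t := by
    intro t ht
    apply mul_le_mul_of_nonneg_left _ (hPnn t)
    apply add_le_add (hUZ t ht)
    apply intervalIntegral.integral_mono_on ht ((hQ.mul hU).intervalIntegrable 0 t)
      ((hQ.mul hZc).intervalIntegrable 0 t)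
    intro σ hσ
    exact mul_le_mul_of_nonneg_left (hUZ σ hσ.1) (hQnn σ)
  have hVineq : ∀ t ≥ (0:ℝ), g t + Q t * Z t ≤ (P t + Q t) * V t := by
    intro t ht
    have h2 : Q t * Z t ≤ Q t * V t := mul_le_mul_of_nonneg_left (hZV t ht) (hQnn t)
    calc g t + Q t * Z t ≤ P t * V t + Q t * V t := add_le_add (hgPV t ht) h2
      _ = (P t + Q t) * V t := by ring
  set E : ℝ → ℝ := fun t => ∫ s in (0:ℝ)..t, (P s + Q s) with hE_def
  have hEd : ∀ t, HasDerivAt E (P t + Q t) t := fun t => my_prim_hasDerivAt (hP.add hQ) t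
  have hEc : Continuous E := my_prim_continuous (hP.add hQ)
  set W : ℝ → ℝ := fun t => V t * Real.exp (-E t) with hW_def
  have hWd : ∀ t, HasDerivAt W
      ((g t + Q t * Z t) * Real.exp (-E t) + V t * (Real.exp (-E t) * -(P t + Q t))) t :=
    fun t => (hVd t).mul (((hEd t).neg).exp)
  have hWanti : AntitoneOn W (Ici 0) := by
    apply antitoneOn_of_deriv_nonpos (convex_Ici 0)
      (hVc.mul ((hEc.neg).rexp)).continuousOn
      (fun t _ => ((hWd t).differentiableAt).differentiableWithinAt)
    intro t ht
    rw [interior_Ici] at ht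
    change deriv W t ≤ 0; rw [(hWd t).deriv]
    have key : g t + Q t * Z t ≤ (P t + Q t) * V t := hVineq t ht.le
    have hexp : (0:ℝ) < Real.exp (-E t) := Real.exp_pos _
    nlinarith [hexp]
  have hVexp : ∀ t ≥ (0:ℝ), V t ≤ Real.exp (E t) := by
    intro t ht
    have hW0 : W t ≤ W 0 := hWanti (le_refl (0:ℝ)) ht ht
    have hE0 : E 0 = 0 := by simp [hE_def]
    have hZ0 : Z 0 = 1 := by simp [hZ_def]
    have hV0 : V 0 = 1 := by simp [hV_def, hZ0]
    have hW0' : W 0 = 1 := by simp [hW_def, hV0, hE0]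
    rw [hW0'] at hW0
    have h2 := mul_le_mul_of_nonneg_right hW0 (Real.exp_pos (E t)).le
    have h3 : V t * Real.exp (-E t) * Real.exp (E t) = V t := by
      rw [mul_assoc, ← Real.exp_add]; simp
    simpa [hW_def, h3] using h2
  set D : ℝ → ℝ := fun t => Z t - ∫ s in (0:ℝ)..t, P s * Real.exp (E s) with hD_def
  have hh : Continuous fun s => P s * Real.exp (E s) := hP.mul hEc.rexp
  have hDd : ∀ t, HasDerivAt D (g t - P t * Real.exp (E t)) t :=
    fun t => (hZd t).sub (my_prim_hasDerivAt hh t)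
  have hDanti : AntitoneOn D (Ici 0) := by
    apply antitoneOn_of_deriv_nonpos (convex_Ici 0)
      (hZc.sub (my_prim_continuous hh)).continuousOn
      (fun t _ => ((hDd t).differentiableAt).differentiableWithinAt)
    intro t ht
    rw [interior_Ici] at ht
    change deriv D t ≤ 0; rw [(hDd t).deriv]
    have : g t ≤ P t * Real.exp (E t) :=
      le_trans (hgPV t ht.le) (mul_le_mul_of_nonneg_left (hVexp t ht.le) (hPnn t))
    linarith
  intro t ht
  have hD0 : D t ≤ D 0 := hDanti (le_refl (0:ℝ)) ht ht
  have : D 0 = 1 := by simp [hD_def, hZ_def]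
  rw [this] at hD0
  have := hUZ t ht
  simp only [hD_def] at hD0
  linarith

/-- Pachpatte's integral inequality: if `x, p, q` are nonnegative continuous functions on
`[0,∞)`, `η` is a positive nondecreasing continuous function on `[0,∞)`, and
`x(t) ≤ η(t) + ∫₀ᵗ p(s)[x(s) + ∫₀ˢ q(σ)x(σ)dσ]ds` for all `t ≥ 0`, then
`x(t) ≤ η(t)[1 + ∫₀ᵗ p(s) exp(∫₀ˢ (p(σ)+q(σ))dσ) ds]` for all `t ≥ 0`. -/
theorem pachpatte_inequality
    (x p q η : ℝ → ℝ)
    (hx : ContinuousOn x (Ici 0)) (hp : ContinuousOn p (Ici 0))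
    (hq : ContinuousOn q (Ici 0)) (hη : ContinuousOn η (Ici 0))
    (hxnn : ∀ t ∈ Ici (0:ℝ), 0 ≤ x t) (hpnn : ∀ t ∈ Ici (0:ℝ), 0 ≤ p t)
    (hqnn : ∀ t ∈ Ici (0:ℝ), 0 ≤ q t)
    (hηpos : ∀ t ∈ Ici (0:ℝ), 0 < η t) (hηmono : MonotoneOn η (Ici 0))
    (hineq : ∀ t ∈ Ici (0:ℝ),
      x t ≤ η t + ∫ s in (0:ℝ)..t, p s * (x s + ∫ σ in (0:ℝ)..s, q σ * x σ)) :
    ∀ t ∈ Ici (0:ℝ),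
      x t ≤ η t * (1 + ∫ s in (0:ℝ)..t,
        p s * Real.exp (∫ σ in (0:ℝ)..s, (p σ + q σ))) := by
  have hm : Continuous fun t : ℝ => max t 0 := continuous_id.max continuous_const
  have hmem : ∀ t : ℝ, max t 0 ∈ Ici (0:ℝ) := fun t => le_max_right t 0
  set P : ℝ → ℝ := fun t => p (max t 0) with hP_def
  set Q : ℝ → ℝ := fun t => q (max t 0) with hQ_def
  set U : ℝ → ℝ := fun t => x (max t 0) / η (max t 0) with hU_def
  have hPc : Continuous P := hp.comp_continuous hm hmem
  have hQc : Continuous Q := hq.comp_continuous hm hmem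
  have hUc : Continuous U :=
    (hx.comp_continuous hm hmem).div (hη.comp_continuous hm hmem)
      (fun t => (hηpos _ (hmem t)).ne')
  have hPnn : ∀ t, 0 ≤ P t := fun t => hpnn _ (hmem t)
  have hQnn : ∀ t, 0 ≤ Q t := fun t => hqnn _ (hmem t)
  have hUnn : ∀ t, 0 ≤ U t := fun t => div_nonneg (hxnn _ (hmem t)) (hηpos _ (hmem t)).le
  -- basic rewrites for t ≥ 0
  have hmax : ∀ t : ℝ, 0 ≤ t → max t 0 = t := fun t ht => max_eq_left ht
  have hUeq : ∀ t : ℝ, 0 ≤ t → U t = x t / η t := by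
    intro t ht; simp [hU_def, hmax t ht]
  have hPeq : ∀ t : ℝ, 0 ≤ t → P t = p t := by intro t ht; simp [hP_def, hmax t ht]
  have hQeq : ∀ t : ℝ, 0 ≤ t → Q t = q t := by intro t ht; simp [hQ_def, hmax t ht]
  -- hypothesis of reduced lemma
  have hred : ∀ t ≥ (0:ℝ), U t ≤ 1 + ∫ s in (0:ℝ)..t,
      P s * (U s + ∫ σ in (0:ℝ)..s, Q σ * U σ) := by
    intro t ht
    have hηt := hηpos t ht
    rw [hUeq t ht, div_le_iff₀ hηt]
    have key : (∫ s in (0:ℝ)..t, p s * (x s + ∫ σ in (0:ℝ)..s, q σ * x σ))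
        ≤ ∫ s in (0:ℝ)..t, η t * (P s * (U s + ∫ σ in (0:ℝ)..s, Q σ * U σ)) := by
      apply intervalIntegral.integral_mono_on ht
      · -- integrability of LHS integrand
        apply ContinuousOn.intervalIntegrable
        rw [uIcc_of_le ht]
        apply ContinuousOn.mul (hp.mono (Icc_subset_Ici_self))
        apply ContinuousOn.add (hx.mono (Icc_subset_Ici_self))
        have hXTc : Continuous fun σ : ℝ => x (max σ 0) := hx.comp_continuous hm hmem
        have hprim : Continuous fun s => ∫ σ in (0:ℝ)..s, Q σ * x (max σ 0) :=
          my_prim_continuous (hQc.mul hXTc)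
        have hcg : ContinuousOn (fun s => ∫ σ in (0:ℝ)..s, q σ * x σ) (Icc 0 t) := by
          apply hprim.continuousOn.congr
          intro s hs
          apply intervalIntegral.integral_congr
          intro σ hσ
          rw [uIcc_of_le hs.1] at hσ
          show q σ * x σ = Q σ * x (max σ 0)
          rw [hQeq σ hσ.1, hmax σ hσ.1]
        exact hcg
      · exact (continuous_const.mul (hPc.mul (hUc.add
          (my_prim_continuous (hQc.mul hUc))))).intervalIntegrable 0 t
      · intro s hs
        have hs0 := hs.1
        have hst := hs.2
        have hηs : (0:ℝ) < η s := hηpos s hs0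
        have hηst : η s ≤ η t := hηmono hs0 ht hst
        rw [hPeq s hs0]
        have hx_le : x s ≤ η t * U s := by
          rw [hUeq s hs0]
          calc x s = η s * (x s / η s) := by field_simp
            _ ≤ η t * (x s / η s) :=
              mul_le_mul_of_nonneg_right hηst (div_nonneg (hxnn s hs0) hηs.le)
        have hint_le : (∫ σ in (0:ℝ)..s, q σ * x σ)
            ≤ η t * ∫ σ in (0:ℝ)..s, Q σ * U σ := by
          rw [← intervalIntegral.integral_const_mul]
          apply intervalIntegral.integral_mono_on hs0
          · apply ContinuousOn.intervalIntegrable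
            rw [uIcc_of_le hs0]
            exact (hq.mono Icc_subset_Ici_self).mul (hx.mono Icc_subset_Ici_self)
          · exact (continuous_const.mul (hQc.mul hUc)).intervalIntegrable 0 s
          · intro σ hσ
            have hσ0 := hσ.1
            have hσt : σ ≤ t := le_trans hσ.2 hst
            have hησ : (0:ℝ) < η σ := hηpos σ hσ0
            rw [hQeq σ hσ0, hUeq σ hσ0]
            have : η t * (q σ * (x σ / η σ)) = (q σ * x σ) * (η t / η σ) := by
              field_simp
            rw [this]
            have h1 : (1:ℝ) ≤ η t / η σ :=
              (one_le_div hησ).2 (hηmono hσ0 ht hσt)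
            nlinarith [mul_nonneg (hqnn σ hσ0) (hxnn σ hσ0)]
        calc p s * (x s + ∫ σ in (0:ℝ)..s, q σ * x σ)
            ≤ p s * (η t * U s + η t * ∫ σ in (0:ℝ)..s, Q σ * U σ) := by
              apply mul_le_mul_of_nonneg_left (add_le_add hx_le hint_le) (hpnn s hs0)
          _ = η t * (p s * (U s + ∫ σ in (0:ℝ)..s, Q σ * U σ)) := by ring
    have := hineq t ht
    rw [intervalIntegral.integral_const_mul] at key
    nlinarith [hηpos t ht]
  -- apply reduced lemma
  have hmain := my_reduced hPc hQc hUc hPnn hQnn hUnn hred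
  intro t ht
  have h1 := hmain t ht
  rw [hUeq t ht, div_le_iff₀ (hηpos t ht)] at h1
  have heq : (∫ s in (0:ℝ)..t, P s * Real.exp (∫ σ in (0:ℝ)..s, (P σ + Q σ)))
      = ∫ s in (0:ℝ)..t, p s * Real.exp (∫ σ in (0:ℝ)..s, (p σ + q σ)) := by
    apply intervalIntegral.integral_congr
    intro s hs
    rw [uIcc_of_le ht] at hs
    show P s * Real.exp (∫ σ in (0:ℝ)..s, (P σ + Q σ))
      = p s * Real.exp (∫ σ in (0:ℝ)..s, (p σ + q σ))
    rw [hPeq s hs.1]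
    congr 1
    congr 1
    apply intervalIntegral.integral_congr
    intro σ hσ
    rw [uIcc_of_le hs.1] at hσ
    show P σ + Q σ = p σ + q σ
    rw [hPeq σ hσ.1, hQeq σ hσ.1]
  rw [heq] at h1
  linarith [h1, mul_comm (η t) (1 + ∫ s in (0:ℝ)..t, p s * Real.exp (∫ σ in (0:ℝ)..s, (p σ + q σ)))]
end

section
/- Mittag-Leffler invariance under the ψ-fractional integral: for 0 < α < 1 and every t ∈ (a,b], (1/Γ(α)) ∫_a^t ψ'(s)(ψ(t)−ψ(s))^{α−1} E_α( (ψ(s)−ψ(a))^{α} ) ds ≤ E_α( (ψ(t)−ψ(a))^{α} ). -/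
open Real MeasureTheory Set Filter Topology

lemma ml_summable {α : ℝ} (hα : 0 < α) {z : ℝ} (hz : 0 ≤ z) :
    Summable (fun k : ℕ => z ^ k / Real.Gamma (α * k + 1)) := by
  set R : ℝ := max 1 ((z + 1) ^ (1 / α)) with hRdef
  have hR1 : (1 : ℝ) ≤ R := le_max_left _ _
  have hR0 : (0 : ℝ) < R := lt_of_lt_of_le one_pos hR1
  have hRα : z + 1 ≤ R ^ α := by
    have h1 : ((z + 1) ^ (1 / α)) ^ α = z + 1 := by
      rw [← Real.rpow_mul (by positivity), one_div, inv_mul_cancel₀ hα.ne', Real.rpow_one]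
    calc z + 1 = ((z + 1) ^ (1 / α)) ^ α := h1.symm
      _ ≤ R ^ α := Real.rpow_le_rpow (by positivity) (le_max_right _ _) hα.le
  have hRα0 : (0 : ℝ) < R ^ α := Real.rpow_pos_of_pos hR0 α
  set r : ℝ := z / R ^ α with hrdef
  have hr0 : 0 ≤ r := div_nonneg hz hRα0.le
  have hr1 : r < 1 := by
    rw [hrdef, div_lt_one hRα0]
    exact lt_of_lt_of_le (lt_add_one z) hRα
  obtain ⟨C, hC⟩ : ∃ C : ℝ, ∀ n : ℕ, R ^ n / n.factorial ≤ C := by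
    obtain ⟨C, hC⟩ := (FloorSemiring.tendsto_pow_div_factorial_atTop (K := ℝ) R).bddAbove_range
    exact ⟨C, fun n => hC ⟨n, rfl⟩⟩
  have hC0 : (0 : ℝ) < C := lt_of_lt_of_le one_pos (by simpa using hC 0)
  apply summable_of_isBigO_nat (g := fun k : ℕ => r ^ k)
    (summable_geometric_of_lt_one hr0 hr1)
  rw [Asymptotics.isBigO_iff]
  refine ⟨C * R ^ (2 : ℝ), ?_⟩
  have hev : ∀ᶠ k : ℕ in atTop, (3 : ℝ) ≤ α * k := by
    exact ((tendsto_natCast_atTop_atTop (R := ℝ)).const_mul_atTop hα).eventually_ge_atTop 3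
  filter_upwards [hev] with k hk
  set n : ℕ := ⌊α * k⌋₊ with hndef
  have hαk0 : (0 : ℝ) ≤ α * k := le_trans (by norm_num) hk
  have hn3 : 3 ≤ n := by rw [hndef]; exact Nat.le_floor (by exact_mod_cast hk)
  have hn1 : 1 ≤ n := le_trans (by norm_num) hn3
  have hnle : (n : ℝ) ≤ α * k := Nat.floor_le hαk0
  have hΓpos : 0 < Real.Gamma (α * k + 1) := Real.Gamma_pos_of_pos (by linarith)
  have hGam : Real.Gamma (n : ℝ) ≤ Real.Gamma (α * k + 1) := by
    apply Real.Gamma_strictMonoOn_Ici.monotoneOn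
    · simp only [mem_Ici]; exact_mod_cast le_trans (by norm_num) hn3
    · simp only [mem_Ici]; linarith
    · linarith
  have hcast : ((n - 1 : ℕ) : ℝ) = (n : ℝ) - 1 := by
    push_cast [Nat.cast_sub hn1]; ring
  have hfact : ((n - 1).factorial : ℝ) = Real.Gamma (n : ℝ) := by
    rw [← Real.Gamma_nat_eq_factorial, hcast]; norm_num
  have hRn : (R : ℝ) ^ ((n - 1 : ℕ) : ℝ) ≤ C * (n - 1).factorial := by
    have h := hC (n - 1)
    rw [div_le_iff₀ (by positivity)] at h
    rw [Real.rpow_natCast]; linarith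
  have hexp : R ^ (α * k - 2) ≤ R ^ ((n - 1 : ℕ) : ℝ) := by
    apply Real.rpow_le_rpow_of_exponent_le hR1
    have := Nat.lt_floor_add_one (α * k)
    rw [hcast]
    have : α * k < (n : ℝ) + 1 := by rw [hndef]; exact_mod_cast Nat.lt_floor_add_one (α * k)
    linarith
  have key : R ^ (α * k - 2) ≤ C * Real.Gamma (α * k + 1) := by
    calc R ^ (α * k - 2) ≤ C * (n - 1).factorial := le_trans hexp hRn
      _ = C * Real.Gamma (n : ℝ) := by rw [hfact]
      _ ≤ C * Real.Gamma (α * k + 1) := by nlinarith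
  -- now the norm bound
  have hRk : (R ^ α) ^ k = R ^ (α * k) := by
    rw [← Real.rpow_natCast (R ^ α) k, ← Real.rpow_mul hR0.le]
  have hRsub : R ^ (α * k - 2) = R ^ (α * k) / R ^ (2 : ℝ) := Real.rpow_sub hR0 _ _
  have hRak0 : (0 : ℝ) < R ^ (α * k) := Real.rpow_pos_of_pos hR0 _
  have hR20 : (0 : ℝ) < R ^ (2 : ℝ) := Real.rpow_pos_of_pos hR0 _
  have hnorm1 : ‖z ^ k / Real.Gamma (α * k + 1)‖ = z ^ k / Real.Gamma (α * k + 1) := by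
    rw [Real.norm_eq_abs, abs_of_nonneg (by positivity)]
  have hnorm2 : ‖r ^ k‖ = r ^ k := by rw [Real.norm_eq_abs, abs_of_nonneg (by positivity)]
  rw [hnorm1, hnorm2, hrdef, div_pow, hRk]
  rw [div_le_iff₀ hΓpos]
  have expand : C * R ^ (2 : ℝ) * (z ^ k / R ^ (α * k)) * Real.Gamma (α * k + 1)
      = z ^ k * ((C * Real.Gamma (α * k + 1)) / R ^ (α * k - 2)) := by
    rw [hRsub]; field_simp
  rw [expand]
  have h1 : (1 : ℝ) ≤ (C * Real.Gamma (α * k + 1)) / R ^ (α * k - 2) := by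
    rw [le_div_iff₀ (Real.rpow_pos_of_pos hR0 _)]; linarith
  nlinarith [pow_nonneg hz k]


lemma real_betaIntegral {u v : ℝ} (hu : 0 < u) (hv : 0 < v) :
    ∫ x in (0:ℝ)..1, x ^ (u - 1) * (1 - x) ^ (v - 1)
      = Real.Gamma u * Real.Gamma v / Real.Gamma (u + v) := by
  have h := Complex.Gamma_mul_Gamma_eq_betaIntegral (s := (u : ℂ)) (t := (v : ℂ))
    (by simpa using hu) (by simpa using hv)
  have hB : Complex.betaIntegral (u : ℂ) (v : ℂ)
      = ((∫ x in (0:ℝ)..1, x ^ (u - 1) * (1 - x) ^ (v - 1) : ℝ) : ℂ) := by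
    rw [Complex.betaIntegral]
    rw [show (((∫ x in (0:ℝ)..1, x ^ (u - 1) * (1 - x) ^ (v - 1) : ℝ)) : ℂ)
      = ∫ x in (0:ℝ)..1, ((x ^ (u - 1) * (1 - x) ^ (v - 1) : ℝ) : ℂ)
      from (RCLike.intervalIntegral_ofReal (𝕜 := ℂ)).symm]
    apply intervalIntegral.integral_congr
    intro x hx
    rw [uIcc_of_le (by norm_num : (0:ℝ) ≤ 1)] at hx
    have hx0 : (0:ℝ) ≤ x := hx.1
    have hx1 : (0:ℝ) ≤ 1 - x := by linarith [hx.2]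
    have e1 : ((u : ℂ) - 1) = ((u - 1 : ℝ) : ℂ) := by push_cast; ring
    have e2 : ((v : ℂ) - 1) = ((v - 1 : ℝ) : ℂ) := by push_cast; ring
    have e3 : (1 - (x : ℂ)) = ((1 - x : ℝ) : ℂ) := by push_cast; ring
    show (x : ℂ) ^ ((u : ℂ) - 1) * (1 - (x : ℂ)) ^ ((v : ℂ) - 1)
      = ((x ^ (u - 1) * (1 - x) ^ (v - 1) : ℝ) : ℂ)
    rw [e1, e2, e3, ← Complex.ofReal_cpow hx0, ← Complex.ofReal_cpow hx1,
      ← Complex.ofReal_mul]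
  rw [hB, Complex.Gamma_ofReal, Complex.Gamma_ofReal] at h
  rw [show ((u:ℂ) + v) = ((u + v : ℝ) : ℂ) by push_cast; ring, Complex.Gamma_ofReal] at h
  rw [← Complex.ofReal_mul, ← Complex.ofReal_mul, Complex.ofReal_inj] at h
  have hΓ : Real.Gamma (u + v) ≠ 0 := (Real.Gamma_pos_of_pos (by linarith)).ne'
  field_simp
  linarith [h]


lemma rpow_weight_integral {c d α β : ℝ} (hcd : c < d) (hα : 0 < α) (hβ : 0 ≤ β) :
    ∫ y in c..d, (d - y) ^ (α - 1) * (y - c) ^ β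
      = Real.Gamma (β + 1) * Real.Gamma α / Real.Gamma (β + 1 + α) * (d - c) ^ (β + α) := by
  have hdc : (0 : ℝ) < d - c := by linarith
  have hsub := intervalIntegral.integral_comp_mul_add
    (a := (0:ℝ)) (b := 1) (c := d - c)
    (f := fun y => (d - y) ^ (α - 1) * (y - c) ^ β) hdc.ne' c
  simp only [mul_zero, zero_add, mul_one, sub_add_cancel, smul_eq_mul] at hsub
  -- hsub : ∫ x in 0..1, f ((d-c)*x + c) = (d-c)⁻¹ * ∫ y in c..d, f y
  have key : ∫ x in (0:ℝ)..1, (fun y => (d - y) ^ (α - 1) * (y - c) ^ β) ((d - c) * x + c)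
      = (d - c) ^ (α - 1) * (d - c) ^ β
        * ∫ x in (0:ℝ)..1, x ^ ((β + 1) - 1) * (1 - x) ^ (α - 1) := by
    rw [← intervalIntegral.integral_const_mul]
    apply intervalIntegral.integral_congr
    intro x hx
    rw [uIcc_of_le (by norm_num : (0:ℝ) ≤ 1)] at hx
    have hx0 : (0:ℝ) ≤ x := hx.1
    have hx1 : (0:ℝ) ≤ 1 - x := by linarith [hx.2]
    show (d - ((d - c) * x + c)) ^ (α - 1) * ((d - c) * x + c - c) ^ β = _
    have e1 : d - ((d - c) * x + c) = (d - c) * (1 - x) := by ring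
    have e2 : (d - c) * x + c - c = (d - c) * x := by ring
    rw [e1, e2, Real.mul_rpow hdc.le hx1, Real.mul_rpow hdc.le hx0]
    ring_nf
  rw [key] at hsub
  have hI := real_betaIntegral (u := β + 1) (v := α) (by linarith) hα
  rw [hI] at hsub
  -- hsub : (d-c)^(α-1) * (d-c)^β * (Γ(β+1)Γα/Γ(β+1+α)) = (d-c)⁻¹ * ∫ y in c..d, f y
  have h2 : (d - c) * ((d - c)⁻¹ * ∫ x in c..d, (d - x) ^ (α - 1) * (x - c) ^ β)
      = ∫ x in c..d, (d - x) ^ (α - 1) * (x - c) ^ β := by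
    field_simp
  have hfin : ∫ y in c..d, (d - y) ^ (α - 1) * (y - c) ^ β
      = (d - c) * ((d - c) ^ (α - 1) * (d - c) ^ β
          * (Real.Gamma (β + 1) * Real.Gamma α / Real.Gamma (β + 1 + α))) := by
    rw [← h2, ← hsub]
  rw [hfin]
  have : (d - c) * ((d - c) ^ (α - 1) * (d - c) ^ β) = (d - c) ^ (β + α) := by
    calc (d - c) * ((d - c) ^ (α - 1) * (d - c) ^ β)
        = (d - c) ^ (α - 1 + β) * (d - c) := by rw [Real.rpow_add hdc]; ring
      _ = (d - c) ^ (α - 1 + β + 1) := (Real.rpow_add_one hdc.ne' _).symm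
      _ = (d - c) ^ (β + α) := by ring_nf
  rw [show (d - c) * ((d - c) ^ (α - 1) * (d - c) ^ β
        * (Real.Gamma (β + 1) * Real.Gamma α / Real.Gamma (β + 1 + α)))
      = (d - c) * ((d - c) ^ (α - 1) * (d - c) ^ β)
        * (Real.Gamma (β + 1) * Real.Gamma α / Real.Gamma (β + 1 + α)) by ring, this]
  ring

/-- The one-parameter Mittag-Leffler function `E_α(z) = Σ_{k} z^k / Γ(αk+1)`. -/
noncomputable def mittagLeffler (α z : ℝ) : ℝ :=
  ∑' k : ℕ, z ^ k / Real.Gamma (α * k + 1)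

/-- Mittag-Leffler invariance under the ψ-fractional integral:
`I^{α;ψ}[ E_α((ψ(·)-ψ(a))^α) ](t) ≤ E_α((ψ(t)-ψ(a))^α)` for `t ∈ (a,b]`. -/
theorem psiInt_mittagLeffler_le
    (a b : ℝ) (hab : a < b) (ψ ψ' : ℝ → ℝ)
    (hψ : ∀ t ∈ Icc a b, HasDerivWithinAt ψ (ψ' t) (Icc a b) t)
    (hψ'c : ContinuousOn ψ' (Icc a b))
    (hψ'pos : ∀ t ∈ Icc a b, 0 < ψ' t)
    (hψmono : StrictMonoOn ψ (Icc a b))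
    (α : ℝ) (hα0 : 0 < α) (hα1 : α < 1) :
    ∀ t ∈ Ioc a b,
      (Real.Gamma α)⁻¹
          * ∫ s in a..t, ψ' s * (ψ t - ψ s) ^ (α - 1)
              * mittagLeffler α ((ψ s - ψ a) ^ α)
        ≤ mittagLeffler α ((ψ t - ψ a) ^ α) := by
  rintro t ⟨hat, htb⟩
  set c := ψ a with hc
  set d := ψ t with hd
  have hamem : a ∈ Icc a b := ⟨le_rfl, hab.le⟩
  have htmem : t ∈ Icc a b := ⟨hat.le, htb⟩
  have hcd : c < d := hψmono hamem htmem hat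
  have hdc : (0 : ℝ) < d - c := by linarith
  have hΓα : (0 : ℝ) < Real.Gamma α := Real.Gamma_pos_of_pos hα0
  set x : ℝ := (d - c) ^ α with hx
  have hx0 : 0 < x := Real.rpow_pos_of_pos hdc α
  have hIoo : Ioo a t ⊆ Icc a b := fun s hs => ⟨hs.1.le, hs.2.le.trans htb⟩
  have hψcont : ContinuousOn ψ (Icc a b) := fun s hs => (hψ s hs).continuousWithinAt
  have himg : ψ '' Ioo a t = Ioo c d := by
    apply Subset.antisymm
    · rintro _ ⟨s, hs, rfl⟩
      exact ⟨hψmono hamem (hIoo hs) hs.1, hψmono (hIoo hs) htmem hs.2⟩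
    · exact intermediate_value_Ioo hat.le (hψcont.mono (Icc_subset_Icc le_rfl htb))
  have hderiv : ∀ s ∈ Ioo a t, HasDerivWithinAt ψ (ψ' s) (Ioo a t) s :=
    fun s hs => (hψ s (hIoo hs)).mono hIoo
  have hinj : InjOn ψ (Ioo a t) := hψmono.injOn.mono hIoo
  -- change of variables
  have hCoV : ∀ g : ℝ → ℝ, ∫ u in Ioo c d, g u = ∫ s in Ioo a t, ψ' s * g (ψ s) := by
    intro g
    rw [← himg, integral_image_eq_integral_abs_deriv_smul measurableSet_Ioo hderiv hinj]
    apply setIntegral_congr_fun measurableSet_Ioo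
    intro s hs
    simp [abs_of_pos (hψ'pos s (hIoo hs)), smul_eq_mul]
  have hCoVInt : ∀ g : ℝ → ℝ, IntegrableOn g (Ioo c d) →
      IntegrableOn (fun s => ψ' s * g (ψ s)) (Ioo a t) := by
    intro g hg
    rw [← himg] at hg
    have h1 := (integrableOn_image_iff_integrableOn_abs_deriv_smul
      measurableSet_Ioo hderiv hinj g).mp hg
    apply h1.congr_fun _ measurableSet_Ioo
    intro s hs
    simp [abs_of_pos (hψ'pos s (hIoo hs)), smul_eq_mul]
  -- per-term functions
  set g : ℕ → ℝ → ℝ :=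
    (fun k u => (d - u) ^ (α - 1) * (u - c) ^ (α * k) / Real.Gamma (α * k + 1)) with hg
  set f : ℕ → ℝ → ℝ := (fun k s => ψ' s * g k (ψ s)) with hfdef
  have hγpos : ∀ k : ℕ, (0:ℝ) < Real.Gamma (α * k + 1) :=
    fun k => Real.Gamma_pos_of_pos (by positivity)
  -- integrability of the base weight
  have hbase : IntegrableOn (fun u => (d - u) ^ (α - 1)) (Ioo c d) := by
    have h0 : IntervalIntegrable (fun y : ℝ => y ^ (α - 1)) volume (d - c) 0 :=
      intervalIntegral.intervalIntegrable_rpow' (by linarith)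
    have h2 := h0.comp_sub_left d
    rw [show d - (d - c) = c by ring, sub_zero] at h2
    rwa [intervalIntegrable_iff_integrableOn_Ioo_of_le hcd.le] at h2
  -- integrability of g k on Ioo c d
  have hgint : ∀ k : ℕ, IntegrableOn (g k) (Ioo c d) := by
    intro k
    have hbnd : IntegrableOn
        (fun u => (d - u) ^ (α - 1) * ((d - c) ^ (α * k) / Real.Gamma (α * k + 1)))
        (Ioo c d) := hbase.mul_const _
    apply Integrable.mono' hbnd
    · apply ContinuousOn.aestronglyMeasurable _ measurableSet_Ioo
      apply ContinuousOn.div_const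
      apply ContinuousOn.mul
      · apply ContinuousOn.rpow_const (continuousOn_const.sub continuousOn_id)
        intro u hu
        exact Or.inl (by intro h; have h' : d - u = 0 := h; linarith [hu.2])
      · apply ContinuousOn.rpow_const (continuousOn_id.sub continuousOn_const)
        intro u hu
        exact Or.inl (by intro h; have h' : u - c = 0 := h; linarith [hu.1])
    · filter_upwards [ae_restrict_mem measurableSet_Ioo] with u hu
      have h1 : (0:ℝ) ≤ d - u := by linarith [hu.2]
      have h2 : (0:ℝ) ≤ u - c := by linarith [hu.1]
      have h3 : (u - c) ^ (α * k) ≤ (d - c) ^ (α * k) :=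
        Real.rpow_le_rpow h2 (by linarith [hu.2]) (by positivity)
      rw [Real.norm_eq_abs, abs_of_nonneg (by positivity)]
      show (d - u) ^ (α - 1) * (u - c) ^ (α * k) / Real.Gamma (α * k + 1)
        ≤ (d - u) ^ (α - 1) * ((d - c) ^ (α * k) / Real.Gamma (α * k + 1))
      rw [mul_div_assoc]
      exact mul_le_mul_of_nonneg_left ((div_le_div_iff_of_pos_right (hγpos k)).mpr h3) (by positivity)
  -- value of the integral of g k
  have hgval : ∀ k : ℕ, ∫ u in Ioo c d, g k u
      = Real.Gamma α / Real.Gamma (α * k + 1 + α) * (d - c) ^ (α * k + α) := by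
    intro k
    have h1 : ∫ u in Ioo c d, (d - u) ^ (α - 1) * (u - c) ^ (α * k)
        = Real.Gamma (α * k + 1) * Real.Gamma α / Real.Gamma (α * k + 1 + α)
          * (d - c) ^ (α * k + α) := by
      rw [← integral_Ioc_eq_integral_Ioo, ← intervalIntegral.integral_of_le hcd.le]
      exact rpow_weight_integral hcd hα0 (by positivity)
    rw [hg]
    simp only []
    rw [integral_div, h1]
    field_simp
  -- pointwise Mittag-Leffler expansion
  have hMLsum : ∀ y : ℝ, 0 ≤ y →
      mittagLeffler α (y ^ α) = ∑' k : ℕ, y ^ (α * k) / Real.Gamma (α * k + 1) := by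
    intro y hy
    unfold mittagLeffler
    apply tsum_congr
    intro k
    congr 1
    rw [← Real.rpow_natCast (y ^ α) k, ← Real.rpow_mul hy]
  have hpt : ∀ s ∈ Ioo a t,
      ψ' s * (d - ψ s) ^ (α - 1) * mittagLeffler α ((ψ s - c) ^ α) = ∑' k, f k s := by
    intro s hs
    have hsc : (0:ℝ) ≤ ψ s - c := by
      have := hψmono hamem (hIoo hs) hs.1; linarith
    rw [hMLsum _ hsc, ← tsum_mul_left]
    apply tsum_congr
    intro k
    show ψ' s * (d - ψ s) ^ (α - 1) * ((ψ s - c) ^ (α * k) / Real.Gamma (α * k + 1))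
      = ψ' s * ((d - ψ s) ^ (α - 1) * (ψ s - c) ^ (α * k) / Real.Gamma (α * k + 1))
    ring
  -- measurability of f k
  have hmeas : ∀ k : ℕ, AEStronglyMeasurable (f k) (volume.restrict (Ioo a t)) := by
    intro k
    apply ContinuousOn.aestronglyMeasurable _ measurableSet_Ioo
    apply ContinuousOn.mul (hψ'c.mono hIoo)
    apply ContinuousOn.div_const
    apply ContinuousOn.mul
    · apply ContinuousOn.rpow_const (continuousOn_const.sub (hψcont.mono hIoo))
      intro s hs
      refine Or.inl ?_
      have := hψmono (hIoo hs) htmem hs.2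
      intro h; have h' : d - ψ s = 0 := h
      linarith [hd]
    · apply ContinuousOn.rpow_const ((hψcont.mono hIoo).sub continuousOn_const)
      intro s hs
      refine Or.inl ?_
      have := hψmono hamem (hIoo hs) hs.1
      intro h; have h' : ψ s - c = 0 := h
      linarith [hc]
  have hfint : ∀ k, IntegrableOn (f k) (Ioo a t) := fun k => hCoVInt (g k) (hgint k)
  have hfnn : ∀ k, 0 ≤ᵐ[volume.restrict (Ioo a t)] f k := by
    intro k
    filter_upwards [ae_restrict_mem measurableSet_Ioo] with s hs
    have h1 : 0 < ψ' s := hψ'pos s (hIoo hs)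
    have h2 : 0 ≤ ψ s - c := by have := hψmono hamem (hIoo hs) hs.1; linarith
    have h3 : 0 ≤ d - ψ s := by have := hψmono (hIoo hs) htmem hs.2; linarith
    show (0:ℝ) ≤ ψ' s * ((d - ψ s) ^ (α - 1) * (ψ s - c) ^ (α * k) / Real.Gamma (α * k + 1))
    have := hγpos k
    positivity
  set V : ℕ → ℝ := fun k => Real.Gamma α / Real.Gamma (α * k + 1 + α) * (d - c) ^ (α * k + α)
    with hV
  have hVnn : ∀ k, 0 ≤ V k := by
    intro k
    have := Real.Gamma_pos_of_pos (show (0:ℝ) < α * k + 1 + α by positivity)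
    have h2 := Real.rpow_nonneg hdc.le (α * k + α)
    exact mul_nonneg (div_nonneg hΓα.le this.le) h2
  have hfval : ∀ k, ∫ s in Ioo a t, f k s = V k := by
    intro k
    exact (hCoV (g k)).symm.trans (hgval k)
  have hVx : ∀ k : ℕ, V k = Real.Gamma α * (x ^ (k + 1) / Real.Gamma (α * (k + 1 : ℕ) + 1)) := by
    intro k
    have e1 : (d - c) ^ (α * k + α) = x ^ (k + 1) := by
      rw [hx, ← Real.rpow_natCast ((d - c) ^ α) (k + 1), ← Real.rpow_mul hdc.le]
      congr 1; push_cast; ring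
    have e2 : α * (k : ℝ) + 1 + α = α * ((k + 1 : ℕ) : ℝ) + 1 := by push_cast; ring
    rw [hV]
    simp only []
    rw [e1, e2]
    ring
  have hSum : Summable (fun k : ℕ => x ^ (k + 1) / Real.Gamma (α * (k + 1 : ℕ) + 1)) := by
    have h0 := ml_summable hα0 hx0.le
    exact h0.comp_injective (add_left_injective 1)
  have hSumV : Summable V := (hSum.mul_left (Real.Gamma α)).congr fun k => (hVx k).symm
  have hlint : ∑' k, ∫⁻ s in Ioo a t, ‖f k s‖₊ ≠ ⊤ := by
    have heach : ∀ k, ∫⁻ s in Ioo a t, (‖f k s‖₊ : ENNReal) = ENNReal.ofReal (V k) := by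
      intro k
      rw [← hfval k]
      rw [show (∫⁻ s in Ioo a t, (‖f k s‖₊ : ENNReal)) = ∫⁻ s in Ioo a t, ENNReal.ofReal (f k s)
        from lintegral_congr_ae (by
          filter_upwards [hfnn k] with s hs
          rw [← Real.enorm_eq_ofReal hs]; rfl)]
      exact (ofReal_integral_eq_lintegral_ofReal (hfint k) (hfnn k)).symm
    simp only [heach]
    rw [← ENNReal.ofReal_tsum_of_nonneg hVnn hSumV]
    exact ENNReal.ofReal_ne_top
  have hIeq : ∫ s in a..t, ψ' s * (d - ψ s) ^ (α - 1) * mittagLeffler α ((ψ s - c) ^ α)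
      = ∑' k, V k := by
    rw [intervalIntegral.integral_of_le hat.le, integral_Ioc_eq_integral_Ioo]
    rw [setIntegral_congr_fun measurableSet_Ioo (fun s hs => hpt s hs)]
    rw [integral_tsum hmeas hlint]
    exact tsum_congr hfval
  rw [hIeq]
  have hEq : (Real.Gamma α)⁻¹ * ∑' k, V k
      = ∑' k : ℕ, x ^ (k + 1) / Real.Gamma (α * (k + 1 : ℕ) + 1) := by
    rw [tsum_congr hVx, tsum_mul_left, ← mul_assoc, inv_mul_cancel₀ hΓα.ne', one_mul]
  rw [hEq]
  have hMLx : mittagLeffler α x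
      = 1 + ∑' k : ℕ, x ^ (k + 1) / Real.Gamma (α * (k + 1 : ℕ) + 1) := by
    unfold mittagLeffler
    rw [Summable.tsum_eq_zero_add (ml_summable hα0 hx0.le)]
    congr 1
    simp [Real.Gamma_one]
  rw [hMLx]
  have hnn : (0:ℝ) ≤ ∑' k : ℕ, x ^ (k + 1) / Real.Gamma (α * (k + 1 : ℕ) + 1) :=
    tsum_nonneg fun k => by
      have := Real.Gamma_pos_of_pos (show (0:ℝ) < α * ((k + 1 : ℕ) : ℝ) + 1 by positivity)
      positivity
  linarith
end

section
/- Contraction estimate for the solution operator: assume the hypotheses (H1)–(H2). Let u, v ∈ C([−r,b]) with u(t) = v(t) = φ(t) on [−r,0] and with their restrictions to (0,b] in C_{1−γ;ψ}[0,b]. Then ‖G_f u − G_f v‖_{C_{1−γ;ψ}[0,b]} ≤ [ 2L_f (Γ(γ)/Γ(γ+α)) (ψ(b)−ψ(0))^{α} + (2L_f L_h/(ζγ)) (Γ(γ+1)/Γ(γ+α+1)) (ψ(b)−ψ(0))^{α+1} ] · ‖u − v‖_{C_{1−γ;ψ}[0,b]}, where ζ > 0 is any constant with ψ'(s) ≥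 ζ for all s ∈ [0,b]. -/
open Real MeasureTheory Set Filter Topology

/-- `F_{u,g,h}(s) = f(s, u(s), u(g(s)), ∫₀ˢ h(s,τ,u(τ),u(g(τ))) dτ)`. -/
noncomputable def Ffun (f h : ℝ → ℝ → ℝ → ℝ → ℝ) (g : ℝ → ℝ) (u : ℝ → ℝ) (s : ℝ) : ℝ :=
  f s (u s) (u (g s)) (∫ τ in (0:ℝ)..s, h s τ (u τ) (u (g τ)))

/-- The solution operator `G_f`: `G_f u(t) = φ(t)` for `t ≤ 0` and
`G_f u(t) = ((ψ(t)-ψ(0))^{γ-1}/Γ(γ)) u₀ + (1/Γ(α)) ∫₀ᵗ ψ'(s)(ψ(t)-ψ(s))^{α-1} F_{u,g,h}(s) ds`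
for `t > 0`. -/
noncomputable def Gf (ψ ψ' : ℝ → ℝ) (α γ u₀ : ℝ) (φ : ℝ → ℝ)
    (f h : ℝ → ℝ → ℝ → ℝ → ℝ) (g : ℝ → ℝ) (u : ℝ → ℝ) (t : ℝ) : ℝ :=
  if t ≤ 0 then φ t
  else (ψ t - ψ 0) ^ (γ - 1) / Real.Gamma γ * u₀
    + (Real.Gamma α)⁻¹ * ∫ s in (0:ℝ)..t, ψ' s * (ψ t - ψ s) ^ (α - 1) * Ffun f h g u s

/-- The weighted norm `‖ω‖_{C_{1-γ;ψ}[0,b]} = sup_{t∈(0,b]} |(ψ(t)-ψ(0))^{1-γ} ω(t)|`. -/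
noncomputable def wnorm (ψ : ℝ → ℝ) (γ b : ℝ) (ω : ℝ → ℝ) : ℝ :=
  sSup ((fun t => |(ψ t - ψ 0) ^ (1 - γ) * ω t|) '' Ioc 0 b)


open intervalIntegral

lemma beta_ii {a c : ℝ} (ha : 0 < a) (hc : 0 < c) :
    IntervalIntegrable (fun x => (1 - x) ^ (a - 1) * x ^ (c - 1)) volume 0 1 := by
  have h1 : IntervalIntegrable (fun x => (1 - x) ^ (a - 1) * x ^ (c - 1)) volume 0 (1/2) := by
    have hint : IntervalIntegrable (fun x : ℝ => x ^ (c - 1)) volume 0 (1/2) :=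
      intervalIntegrable_rpow' (by linarith)
    have hcont : ContinuousOn (fun x : ℝ => (1 - x) ^ (a - 1)) (Set.uIcc 0 (1/2)) := by
      apply ContinuousOn.rpow_const (by fun_prop)
      intro x hx
      rw [uIcc_of_le (by norm_num)] at hx
      exact Or.inl (by simp only [ne_eq]; nlinarith [hx.2])
    exact hint.continuousOn_mul hcont
  have h2 : IntervalIntegrable (fun x => (1 - x) ^ (a - 1) * x ^ (c - 1)) volume (1/2) 1 := by
    have hint : IntervalIntegrable (fun x : ℝ => (1 - x) ^ (a - 1)) volume (1/2) 1 := by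
      have := (intervalIntegrable_rpow' (r := a - 1) (a := 0) (b := 1/2) (by linarith)).comp_sub_left 1
      norm_num at this
      exact this.symm
    have hcont : ContinuousOn (fun x : ℝ => x ^ (c - 1)) (Set.uIcc (1/2) 1) := by
      apply ContinuousOn.rpow_const (by fun_prop)
      intro x hx
      rw [uIcc_of_le (by norm_num)] at hx
      exact Or.inl (by nlinarith [hx.1])
    exact hint.mul_continuousOn hcont
  exact h1.trans h2

lemma beta_val {a c : ℝ} (ha : 0 < a) (hc : 0 < c) :
    ∫ x in (0:ℝ)..1, (1 - x) ^ (a - 1) * x ^ (c - 1)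
      = Real.Gamma a * Real.Gamma c / Real.Gamma (a + c) := by
  have h := Complex.Gamma_mul_Gamma_eq_betaIntegral (s := (c:ℂ)) (t := (a:ℂ))
    (by simpa using hc) (by simpa using ha)
  have hco : Complex.betaIntegral c a
      = ((∫ x in (0:ℝ)..1, (1 - x) ^ (a - 1) * x ^ (c - 1) : ℝ) : ℂ) := by
    rw [Complex.betaIntegral, ← intervalIntegral.integral_ofReal]
    apply intervalIntegral.integral_congr
    intro x hx
    rw [uIcc_of_le (by norm_num)] at hx
    push_cast
    rw [Complex.ofReal_cpow hx.1, Complex.ofReal_cpow (by linarith [hx.2])]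
    push_cast
    ring
  rw [hco] at h
  rw [← Complex.ofReal_add, Complex.Gamma_ofReal, Complex.Gamma_ofReal,
    Complex.Gamma_ofReal, ← Complex.ofReal_mul, ← Complex.ofReal_mul] at h
  have h' := Complex.ofReal_injective h
  have hG : Real.Gamma (a + c) ≠ 0 := (Real.Gamma_pos_of_pos (by linarith)).ne'
  rw [add_comm c a] at h'
  field_simp
  linarith [h']

lemma beta_val_scaled {a c p q : ℝ} (ha : 0 < a) (hc : 0 < c) (hpq : p < q) :
    ∫ x in p..q, (q - x) ^ (a - 1) * (x - p) ^ (c - 1)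
      = (q - p) ^ (a + c - 1) * (Real.Gamma a * Real.Gamma c / Real.Gamma (a + c)) := by
  set T := q - p with hT
  have hT0 : 0 < T := by simp [hT]; linarith
  have h1 : (∫ x in p..q, (q - x) ^ (a - 1) * (x - p) ^ (c - 1))
      = ∫ z in (0:ℝ)..T, (T - z) ^ (a - 1) * z ^ (c - 1) := by
    have := intervalIntegral.integral_comp_sub_right
      (fun z => (T - z) ^ (a - 1) * z ^ (c - 1)) p (a := p) (b := q)
    simp only [sub_self] at this
    rw [← this]
    apply intervalIntegral.integral_congr
    intro x hx
    show (q - x) ^ (a - 1) * (x - p) ^ (c - 1) = (T - (x - p)) ^ (a - 1) * (x - p) ^ (c - 1)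
    have e : T - (x - p) = q - x := by ring
    rw [e]
  have h2 : (∫ z in (0:ℝ)..T, (T - z) ^ (a - 1) * z ^ (c - 1))
      = T • ∫ y in (0:ℝ)..1, (T - y * T) ^ (a - 1) * (y * T) ^ (c - 1) := by
    have := intervalIntegral.smul_integral_comp_mul_right
      (fun z => (T - z) ^ (a - 1) * z ^ (c - 1)) T (a := 0) (b := 1)
    simp only [zero_mul, one_mul] at this
    rw [← this]
  have h3 : (∫ y in (0:ℝ)..1, (T - y * T) ^ (a - 1) * (y * T) ^ (c - 1))
      = T ^ (a - 1) * T ^ (c - 1) * ∫ y in (0:ℝ)..1, (1 - y) ^ (a - 1) * y ^ (c - 1) := by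
    rw [← intervalIntegral.integral_const_mul]
    apply intervalIntegral.integral_congr
    intro y hy
    rw [uIcc_of_le (by norm_num)] at hy
    show (T - y * T) ^ (a - 1) * (y * T) ^ (c - 1)
      = T ^ (a - 1) * T ^ (c - 1) * ((1 - y) ^ (a - 1) * y ^ (c - 1))
    have e1 : T - y * T = T * (1 - y) := by ring
    have e2 : y * T = T * y := by ring
    rw [e1, e2, Real.mul_rpow hT0.le (by linarith [hy.2]), Real.mul_rpow hT0.le hy.1]
    ring
  rw [h1, h2, h3, beta_val ha hc, smul_eq_mul]
  rw [show T * (T ^ (a-1) * T ^ (c-1) * (Real.Gamma a * Real.Gamma c / Real.Gamma (a+c)))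
    = (T ^ (a-1) * T ^ (c-1) * T ^ (1:ℝ)) * (Real.Gamma a * Real.Gamma c / Real.Gamma (a+c))
    by rw [Real.rpow_one]; ring]
  rw [← Real.rpow_add hT0, ← Real.rpow_add hT0]
  ring_nf

lemma beta_ii_scaled {a c p q : ℝ} (ha : 0 < a) (hc : 0 < c) (hpq : p < q) :
    IntervalIntegrable (fun x => (q - x) ^ (a - 1) * (x - p) ^ (c - 1)) volume p q := by
  set m := (p + q) / 2 with hm
  have hpm : p < m := by simp [hm]; linarith
  have hmq : m < q := by simp [hm]; linarith
  have h1 : IntervalIntegrable (fun x => (q - x) ^ (a - 1) * (x - p) ^ (c - 1)) volume p m := by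
    have hint : IntervalIntegrable (fun x : ℝ => (x - p) ^ (c - 1)) volume p m := by
      have := (intervalIntegrable_rpow' (r := c - 1) (a := 0) (b := m - p)
        (by linarith)).comp_sub_right p
      simpa using this
    have hcont : ContinuousOn (fun x : ℝ => (q - x) ^ (a - 1)) (Set.uIcc p m) := by
      apply ContinuousOn.rpow_const (by fun_prop)
      intro x hx
      rw [uIcc_of_le hpm.le] at hx
      exact Or.inl (by simp only [ne_eq]; intro hq; nlinarith [hx.2])
    exact hint.continuousOn_mul hcont
  have h2 : IntervalIntegrable (fun x => (q - x) ^ (a - 1) * (x - p) ^ (c - 1)) volume m q := by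
    have hint : IntervalIntegrable (fun x : ℝ => (q - x) ^ (a - 1)) volume m q := by
      have := (intervalIntegrable_rpow' (r := a - 1) (a := 0) (b := q - m)
        (by linarith)).comp_sub_left q
      simpa using this.symm
    have hcont : ContinuousOn (fun x : ℝ => (x - p) ^ (c - 1)) (Set.uIcc m q) := by
      apply ContinuousOn.rpow_const (by fun_prop)
      intro x hx
      rw [uIcc_of_le hmq.le] at hx
      exact Or.inl (by simp only [ne_eq]; intro hq; nlinarith [hx.1])
    exact hint.mul_continuousOn hcont
  exact h1.trans h2

lemma chgvar {b t α c : ℝ} {ψ ψ' : ℝ → ℝ}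
    (hψ : ∀ x ∈ Icc (0:ℝ) b, HasDerivWithinAt ψ (ψ' x) (Icc (0:ℝ) b) x)
    (hψmono : StrictMonoOn ψ (Icc (0:ℝ) b))
    (hψ'pos : ∀ x ∈ Icc (0:ℝ) b, 0 < ψ' x)
    (ht : t ∈ Ioc (0:ℝ) b) (hα : 0 < α) (hc : 0 < c) :
    IntervalIntegrable
        (fun s => ψ' s * ((ψ t - ψ s) ^ (α - 1) * (ψ s - ψ 0) ^ (c - 1))) volume 0 t
      ∧ (∫ s in (0:ℝ)..t, ψ' s * ((ψ t - ψ s) ^ (α - 1) * (ψ s - ψ 0) ^ (c - 1)))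
        = (ψ t - ψ 0) ^ (α + c - 1)
          * (Real.Gamma α * Real.Gamma c / Real.Gamma (α + c)) := by
  obtain ⟨ht0, htb⟩ := ht
  have hb0 : (0:ℝ) ≤ b := le_trans ht0.le htb
  have h0mem : (0:ℝ) ∈ Icc (0:ℝ) b := ⟨le_refl _, hb0⟩
  have htmem : t ∈ Icc (0:ℝ) b := ⟨ht0.le, htb⟩
  have hsub : Ioo (0:ℝ) t ⊆ Icc (0:ℝ) b := fun x hx => ⟨hx.1.le, le_trans hx.2.le htb⟩
  have hψc : ContinuousOn ψ (Icc (0:ℝ) b) := fun x hx => (hψ x hx).continuousWithinAt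
  have hψt : ψ 0 < ψ t := hψmono h0mem htmem ht0
  set g : ℝ → ℝ := fun x => (ψ t - x) ^ (α - 1) * (x - ψ 0) ^ (c - 1) with hg
  have himg : ψ '' Ioo 0 t = Ioo (ψ 0) (ψ t) := by
    apply Subset.antisymm
    · rintro _ ⟨x, hx, rfl⟩
      exact ⟨hψmono h0mem (hsub hx) hx.1, hψmono (hsub hx) htmem hx.2⟩
    · have := intermediate_value_Ioo ht0.le
        (hψc.mono (fun x hx => ⟨hx.1, le_trans hx.2 htb⟩))
      exact this
  have hderiv : ∀ x ∈ Ioo (0:ℝ) t, HasDerivWithinAt ψ (ψ' x) (Ioo (0:ℝ) t) x :=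
    fun x hx => (hψ x (hsub hx)).mono hsub
  have hinj : InjOn ψ (Ioo 0 t) := (hψmono.injOn).mono hsub
  have Ig : IntervalIntegrable g volume (ψ 0) (ψ t) := beta_ii_scaled hα hc hψt
  have IgIoo : IntegrableOn g (Ioo (ψ 0) (ψ t)) := by
    rw [intervalIntegrable_iff, uIoc_of_le hψt.le] at Ig
    exact Ig.congr_set_ae Ioo_ae_eq_Ioc
  have hiff := integrableOn_image_iff_integrableOn_abs_deriv_smul
    measurableSet_Ioo hderiv hinj g
  rw [himg] at hiff
  have Ismul : IntegrableOn (fun x => |ψ' x| • g (ψ x)) (Ioo 0 t) := hiff.mp IgIoo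
  have heq : EqOn (fun x => |ψ' x| • g (ψ x))
      (fun s => ψ' s * ((ψ t - ψ s) ^ (α - 1) * (ψ s - ψ 0) ^ (c - 1))) (Ioo 0 t) := by
    intro x hx
    simp only [smul_eq_mul, hg]
    rw [abs_of_pos (hψ'pos x (hsub hx))]
  have IF : IntegrableOn
      (fun s => ψ' s * ((ψ t - ψ s) ^ (α - 1) * (ψ s - ψ 0) ^ (c - 1))) (Ioo 0 t) :=
    Ismul.congr_fun heq measurableSet_Ioo
  constructor
  · rw [intervalIntegrable_iff, uIoc_of_le ht0.le]
    exact IF.congr_set_ae Ioo_ae_eq_Ioc.symm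
  · rw [intervalIntegral.integral_of_le ht0.le, ← integral_Ioc_eq_integral_Ioo.symm]
    rw [← setIntegral_congr_fun measurableSet_Ioo heq]
    rw [← integral_image_eq_integral_abs_deriv_smul measurableSet_Ioo hderiv hinj g]
    rw [himg]
    rw [← integral_Ioc_eq_integral_Ioo, ← intervalIntegral.integral_of_le hψt.le]
    exact beta_val_scaled hα hc hψt

lemma lin_lower {b ζ : ℝ} {ψ ψ' : ℝ → ℝ}
    (hψ : ∀ x ∈ Icc (0:ℝ) b, HasDerivWithinAt ψ (ψ' x) (Icc (0:ℝ) b) x)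
    (hζψ : ∀ s ∈ Icc (0:ℝ) b, ζ ≤ ψ' s) :
    ∀ x ∈ Icc (0:ℝ) b, ∀ y ∈ Icc (0:ℝ) b, x ≤ y → ζ * (y - x) ≤ ψ y - ψ x := by
  have hψc : ContinuousOn ψ (Icc (0:ℝ) b) := fun x hx => (hψ x hx).continuousWithinAt
  have hmono : MonotoneOn (fun x => ψ x - ζ * x) (Icc (0:ℝ) b) := by
    apply monotoneOn_of_hasDerivWithinAt_nonneg (convex_Icc 0 b)
      (hψc.sub (by fun_prop)) (f' := fun x => ψ' x - ζ)
    · intro x hx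
      rw [interior_Icc] at hx ⊢
      have h2 : HasDerivWithinAt (fun y : ℝ => ζ * y) ζ (Ioo (0:ℝ) b) x := by
        simpa using ((hasDerivAt_id x).const_mul ζ).hasDerivWithinAt
      exact ((hψ x (Ioo_subset_Icc_self hx)).mono Ioo_subset_Icc_self).sub h2
    · intro x hx
      rw [interior_Icc] at hx
      have := hζψ x (Ioo_subset_Icc_self hx)
      linarith
  intro x hx y hy hxy
  have := hmono hx hy hxy
  simp only at this
  linarith

lemma Kint {b γ ζ s : ℝ} {ψ ψ' : ℝ → ℝ}
    (hψ : ∀ x ∈ Icc (0:ℝ) b, HasDerivWithinAt ψ (ψ' x) (Icc (0:ℝ) b) x)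
    (hψ'c : ContinuousOn ψ' (Icc (0:ℝ) b))
    (hγ0 : 0 < γ) (hγ1 : γ ≤ 1) (hζ : 0 < ζ)
    (hζψ : ∀ x ∈ Icc (0:ℝ) b, ζ ≤ ψ' x)
    (hs : s ∈ Icc (0:ℝ) b) :
    IntervalIntegrable (fun τ => (ψ τ - ψ 0) ^ (γ - 1)) volume 0 s
      ∧ (∫ τ in (0:ℝ)..s, (ψ τ - ψ 0) ^ (γ - 1)) ≤ (ψ s - ψ 0) ^ γ / (ζ * γ) := by
  have hψc : ContinuousOn ψ (Icc (0:ℝ) b) := fun x hx => (hψ x hx).continuousWithinAt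
  have hlow := lin_lower hψ hζψ
  have h0b : (0:ℝ) ∈ Icc (0:ℝ) b := ⟨le_refl _, le_trans hs.1 hs.2⟩
  have hsub : Icc (0:ℝ) s ⊆ Icc (0:ℝ) b := fun x hx => ⟨hx.1, le_trans hx.2 hs.2⟩
  have hKnn : ∀ τ ∈ Icc (0:ℝ) s, 0 ≤ ψ τ - ψ 0 := by
    intro τ hτ
    have := hlow 0 h0b τ (hsub hτ) hτ.1
    nlinarith [mul_nonneg hζ.le hτ.1]
  have hKpos : ∀ τ, τ ∈ Ioc (0:ℝ) s → ζ * τ ≤ ψ τ - ψ 0 := by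
    intro τ hτ
    have := hlow 0 h0b τ (hsub ⟨hτ.1.le, hτ.2⟩) hτ.1.le
    simpa using this
  have hdom : ∀ τ ∈ Ioc (0:ℝ) s, (ψ τ - ψ 0) ^ (γ - 1) ≤ ζ ^ (γ - 1) * τ ^ (γ - 1) := by
    intro τ hτ
    have h1 : (0:ℝ) < ζ * τ := mul_pos hζ hτ.1
    have hz : γ - 1 ≤ 0 := by linarith
    calc (ψ τ - ψ 0) ^ (γ - 1) ≤ (ζ * τ) ^ (γ - 1) :=
        Real.rpow_le_rpow_of_nonpos h1 (hKpos τ hτ) hz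
      _ = ζ ^ (γ - 1) * τ ^ (γ - 1) := Real.mul_rpow hζ.le hτ.1.le
  have hdom_int : IntervalIntegrable (fun τ : ℝ => ζ ^ (γ - 1) * τ ^ (γ - 1)) volume 0 s :=
    (intervalIntegrable_rpow' (by linarith)).const_mul _
  have hmeasK : AEStronglyMeasurable (fun τ => (ψ τ - ψ 0) ^ (γ - 1))
      (volume.restrict (Ioc 0 s)) := by
    have hbase : ContinuousOn (fun τ => ψ τ - ψ 0) (Ioc (0:ℝ) s) :=
      (hψc.mono (fun x hx => hsub ⟨hx.1.le, hx.2⟩)).sub continuousOn_const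
    have hne : ∀ τ ∈ Ioc (0:ℝ) s, ψ τ - ψ 0 ≠ 0 ∨ (0:ℝ) ≤ γ - 1 := by
      intro τ hτ
      left
      have := hKpos τ hτ
      nlinarith [mul_pos hζ hτ.1]
    exact (hbase.rpow_const hne).aestronglyMeasurable measurableSet_Ioc
  have hII : IntervalIntegrable (fun τ => (ψ τ - ψ 0) ^ (γ - 1)) volume 0 s := by
    rcases le_or_gt s 0 with h | h
    · have : s = 0 := le_antisymm h hs.1
      subst this; exact IntervalIntegrable.refl
    rw [intervalIntegrable_iff, uIoc_of_le hs.1]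
    apply Integrable.mono' hdom_int.1 hmeasK
    apply (ae_restrict_iff' measurableSet_Ioc).mpr
    apply ae_of_all
    intro τ hτ
    rw [Real.norm_eq_abs, abs_of_nonneg (Real.rpow_nonneg (hKnn τ ⟨hτ.1.le, hτ.2⟩) _)]
    exact hdom τ hτ
  refine ⟨hII, ?_⟩
  have hψ'II : IntervalIntegrable (fun τ => ψ' τ * (ψ τ - ψ 0) ^ (γ - 1)) volume 0 s := by
    apply hII.continuousOn_mul
    rw [uIcc_of_le hs.1]
    exact hψ'c.mono hsub
  have hcontA : ContinuousOn (fun x => γ⁻¹ * (ψ x - ψ 0) ^ γ) (Icc (0:ℝ) s) := by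
    apply continuousOn_const.mul
    apply ContinuousOn.rpow_const ((hψc.mono hsub).sub continuousOn_const)
    intro x hx
    exact Or.inr hγ0.le
  have hder : ∀ τ ∈ Ioo (0:ℝ) s, HasDerivWithinAt (fun x => γ⁻¹ * (ψ x - ψ 0) ^ γ)
      (ψ' τ * (ψ τ - ψ 0) ^ (γ - 1)) (Ioi τ) τ := by
    intro τ hτ
    have hτIcc : τ ∈ Icc (0:ℝ) b := hsub ⟨hτ.1.le, hτ.2.le⟩
    have hτK : 0 < ψ τ - ψ 0 := by
      have := hKpos τ ⟨hτ.1, hτ.2.le⟩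
      nlinarith [mul_pos hζ hτ.1]
    have hdψ : HasDerivAt ψ (ψ' τ) τ := by
      apply (hψ τ hτIcc).hasDerivAt
      apply Icc_mem_nhds hτ.1 (lt_of_lt_of_le hτ.2 hs.2)
    have hK : HasDerivAt (fun x => ψ x - ψ 0) (ψ' τ) τ := hdψ.sub_const _
    have hr : HasDerivAt (fun x : ℝ => x ^ γ) (γ * (ψ τ - ψ 0) ^ (γ - 1)) (ψ τ - ψ 0) :=
      Real.hasDerivAt_rpow_const (Or.inl hτK.ne')
    have hcomp := (hr.comp τ hK).const_mul γ⁻¹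
    have heq : γ⁻¹ * (γ * (ψ τ - ψ 0) ^ (γ - 1) * ψ' τ)
        = ψ' τ * (ψ τ - ψ 0) ^ (γ - 1) := by
      field_simp
    rw [heq] at hcomp
    exact hcomp.hasDerivWithinAt
  have hFTC : (∫ τ in (0:ℝ)..s, ψ' τ * (ψ τ - ψ 0) ^ (γ - 1))
      = γ⁻¹ * (ψ s - ψ 0) ^ γ := by
    have hval := intervalIntegral.integral_eq_sub_of_hasDeriv_right_of_le hs.1
      hcontA hder hψ'II
    rw [hval, sub_self, Real.zero_rpow hγ0.ne', mul_zero, sub_zero]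
  have hmono : (∫ τ in (0:ℝ)..s, (ψ τ - ψ 0) ^ (γ - 1))
      ≤ ∫ τ in (0:ℝ)..s, ζ⁻¹ * (ψ' τ * (ψ τ - ψ 0) ^ (γ - 1)) := by
    apply intervalIntegral.integral_mono_on hs.1 hII (hψ'II.const_mul _)
    intro τ hτ
    have h1 : 0 ≤ (ψ τ - ψ 0) ^ (γ - 1) := Real.rpow_nonneg (hKnn τ hτ) _
    have h2 : 1 ≤ ζ⁻¹ * ψ' τ := by
      rw [← inv_mul_cancel₀ hζ.ne']
      exact mul_le_mul_of_nonneg_left (hζψ τ (hsub hτ)) (inv_nonneg.mpr hζ.le)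
    calc (ψ τ - ψ 0) ^ (γ - 1) = 1 * (ψ τ - ψ 0) ^ (γ - 1) := (one_mul _).symm
      _ ≤ (ζ⁻¹ * ψ' τ) * (ψ τ - ψ 0) ^ (γ - 1) := mul_le_mul_of_nonneg_right h2 h1
      _ = ζ⁻¹ * (ψ' τ * (ψ τ - ψ 0) ^ (γ - 1)) := by ring
  rw [intervalIntegral.integral_const_mul, hFTC] at hmono
  calc (∫ τ in (0:ℝ)..s, (ψ τ - ψ 0) ^ (γ - 1)) ≤ ζ⁻¹ * (γ⁻¹ * (ψ s - ψ 0) ^ γ) := hmono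
    _ = (ψ s - ψ 0) ^ γ / (ζ * γ) := by field_simp


lemma Ffun_contOn {b r : ℝ} (hb : 0 < b) (hr : 0 < r)
    {f h : ℝ → ℝ → ℝ → ℝ → ℝ} {g u : ℝ → ℝ}
    (hu : ContinuousOn u (Icc (-r) b))
    (hgc : ContinuousOn g (Icc (0:ℝ) b))
    (hgmem : ∀ t ∈ Icc (0:ℝ) b, g t ∈ Icc (-r) 0)
    (hf : ContinuousOn (fun p : ℝ × ℝ × ℝ × ℝ => f p.1 p.2.1 p.2.2.1 p.2.2.2)
      (Icc (0:ℝ) b ×ˢ (univ : Set (ℝ × ℝ × ℝ))))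
    (hh : ContinuousOn (fun p : ℝ × ℝ × ℝ × ℝ => h p.1 p.2.1 p.2.2.1 p.2.2.2)
      (Icc (0:ℝ) b ×ˢ Icc (0:ℝ) b ×ˢ (univ : Set (ℝ × ℝ)))) :
    ContinuousOn (Ffun f h g u) (Icc (0:ℝ) b) := by
  have hrb : -r ≤ b := by linarith
  set cb : ℝ → ℝ := fun x => max 0 (min b x) with hcb
  set cu : ℝ → ℝ := fun x => max (-r) (min b x) with hcu
  have hcbc : Continuous cb := by fun_prop
  have hcuc : Continuous cu := by fun_prop
  have hcbmem : ∀ x, cb x ∈ Icc (0:ℝ) b := fun x =>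
    ⟨le_max_left _ _, max_le hb.le (min_le_left _ _)⟩
  have hcumem : ∀ x, cu x ∈ Icc (-r) b := fun x =>
    ⟨le_max_left _ _, max_le hrb (min_le_left _ _)⟩
  have hcbeq : ∀ x ∈ Icc (0:ℝ) b, cb x = x := by
    intro x hx; simp only [hcb]; rw [min_eq_right hx.2, max_eq_right hx.1]
  have hcueq : ∀ x ∈ Icc (-r) b, cu x = x := by
    intro x hx; simp only [hcu]; rw [min_eq_right hx.2, max_eq_right hx.1]
  set U : ℝ → ℝ := fun x => u (cu x) with hU
  set G : ℝ → ℝ := fun x => g (cb x) with hG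
  have hUc : Continuous U := hu.comp_continuous hcuc hcumem
  have hGc : Continuous G := hgc.comp_continuous hcbc hcbmem
  have hGmem : ∀ x, G x ∈ Icc (-r) 0 := fun x => hgmem _ (hcbmem x)
  set H : ℝ → ℝ → ℝ := fun s τ => h (cb s) (cb τ) (U τ) (U (G τ)) with hH
  have hHc : Continuous (Function.uncurry H) := by
    have : Function.uncurry H = (fun p : ℝ × ℝ × ℝ × ℝ => h p.1 p.2.1 p.2.2.1 p.2.2.2) ∘
        (fun p : ℝ × ℝ => (cb p.1, cb p.2, U p.2, U (G p.2))) := rfl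
    rw [this]
    exact hh.comp_continuous (by fun_prop)
      (fun p => Set.mem_prod.mpr ⟨hcbmem _, Set.mem_prod.mpr ⟨hcbmem _, mem_univ _⟩⟩)
  set I : ℝ → ℝ := fun s => ∫ τ in (0:ℝ)..s, H s τ with hI
  have hIc : Continuous I :=
    intervalIntegral.continuous_parametric_intervalIntegral_of_continuous hHc continuous_id
  have hIeq : ∀ s ∈ Icc (0:ℝ) b, I s = ∫ τ in (0:ℝ)..s, h s τ (u τ) (u (g τ)) := by
    intro s hs
    apply intervalIntegral.integral_congr
    intro τ hτ
    rw [uIcc_of_le hs.1] at hτ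
    have hτb : τ ∈ Icc (0:ℝ) b := ⟨hτ.1, le_trans hτ.2 hs.2⟩
    have hτrb : τ ∈ Icc (-r) b := ⟨by linarith [hτb.1], hτb.2⟩
    show h (cb s) (cb τ) (U τ) (U (G τ)) = h s τ (u τ) (u (g τ))
    rw [hcbeq s hs, hcbeq τ hτb]
    have hUτ : U τ = u τ := by simp only [hU]; rw [hcueq τ hτrb]
    have hUG : U (G τ) = u (g τ) := by
      simp only [hU, hG]
      rw [hcbeq τ hτb]
      have := hgmem τ hτb
      rw [hcueq _ ⟨this.1, le_trans this.2 hb.le⟩]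
    rw [hUτ, hUG]
  have key : ContinuousOn (fun s => f s (u s) (u (g s)) (I s)) (Icc (0:ℝ) b) := by
    have hmap : ∀ s ∈ Icc (0:ℝ) b, (s, u s, u (g s), I s) ∈
        (Icc (0:ℝ) b ×ˢ (univ : Set (ℝ × ℝ × ℝ))) := fun s hs =>
      Set.mem_prod.mpr ⟨hs, mem_univ _⟩
    have hus : ContinuousOn (fun s => u s) (Icc (0:ℝ) b) :=
      hu.mono (fun x hx => ⟨by linarith [hx.1], hx.2⟩)
    have hugs : ContinuousOn (fun s => u (g s)) (Icc (0:ℝ) b) := by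
      apply hu.comp hgc
      intro x hx
      have := hgmem x hx
      exact ⟨this.1, le_trans this.2 hb.le⟩
    exact hf.comp (continuousOn_id.prodMk (hus.prodMk (hugs.prodMk hIc.continuousOn))) hmap
  apply key.congr
  intro s hs
  show Ffun f h g u s = f s (u s) (u (g s)) (I s)
  rw [Ffun, hIeq s hs]


set_option maxHeartbeats 1600000 in
/-- Contraction estimate for the solution operator in the weighted norm. -/
theorem Gf_contraction_estimate
    (b r : ℝ) (hb : 0 < b) (hr : 0 < r) (ψ ψ' : ℝ → ℝ)
    (hψ : ∀ t ∈ Icc (0:ℝ) b, HasDerivWithinAt ψ (ψ' t) (Icc (0:ℝ) b) t)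
    (hψ'c : ContinuousOn ψ' (Icc (0:ℝ) b))
    (hψ'pos : ∀ t ∈ Icc (0:ℝ) b, 0 < ψ' t)
    (hψmono : StrictMonoOn ψ (Icc (0:ℝ) b))
    (α β γ : ℝ) (hα0 : 0 < α) (hα1 : α < 1) (hβ0 : 0 ≤ β) (hβ1 : β ≤ 1)
    (hγ : γ = α + β * (1 - α)) (u₀ : ℝ)
    (φ : ℝ → ℝ) (hφ : ContinuousOn φ (Icc (-r) 0))
    (f h : ℝ → ℝ → ℝ → ℝ → ℝ) (g : ℝ → ℝ)
    -- (H1)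
    (hgc : ContinuousOn g (Icc (0:ℝ) b))
    (hgmem : ∀ t ∈ Icc (0:ℝ) b, g t ∈ Icc (-r) 0)
    (hgle : ∀ t ∈ Icc (0:ℝ) b, g t ≤ t)
    -- (H2)
    (hf : ContinuousOn (fun p : ℝ × ℝ × ℝ × ℝ => f p.1 p.2.1 p.2.2.1 p.2.2.2)
      (Icc (0:ℝ) b ×ˢ (univ : Set (ℝ × ℝ × ℝ))))
    (hh : ContinuousOn (fun p : ℝ × ℝ × ℝ × ℝ => h p.1 p.2.1 p.2.2.1 p.2.2.2)
      (Icc (0:ℝ) b ×ˢ Icc (0:ℝ) b ×ˢ (univ : Set (ℝ × ℝ))))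
    (Lf Lh : ℝ) (hLf : 0 < Lf) (hLh : 0 < Lh)
    (hfLip : ∀ t ∈ Icc (0:ℝ) b, ∀ u₁ u₂ u₃ v₁ v₂ v₃ : ℝ,
      |f t u₁ u₂ u₃ - f t v₁ v₂ v₃| ≤ Lf * (|u₁ - v₁| + |u₂ - v₂| + |u₃ - v₃|))
    (hhLip : ∀ t ∈ Icc (0:ℝ) b, ∀ s ∈ Icc (0:ℝ) b, ∀ u₁ u₂ v₁ v₂ : ℝ,
      |h t s u₁ u₂ - h t s v₁ v₂| ≤ Lh * (|u₁ - v₁| + |u₂ - v₂|))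
    -- ζ is a positive lower bound for ψ'
    (ζ : ℝ) (hζ : 0 < ζ) (hζψ : ∀ s ∈ Icc (0:ℝ) b, ζ ≤ ψ' s)
    -- u, v as in the statement
    (u v : ℝ → ℝ)
    (hu : ContinuousOn u (Icc (-r) b)) (hv : ContinuousOn v (Icc (-r) b))
    (huφ : ∀ t ∈ Icc (-r) 0, u t = φ t) (hvφ : ∀ t ∈ Icc (-r) 0, v t = φ t)
    (huw : ∃ W : ℝ → ℝ, ContinuousOn W (Icc (0:ℝ) b) ∧
      ∀ t ∈ Ioc (0:ℝ) b, W t = (ψ t - ψ 0) ^ (1 - γ) * u t)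
    (hvw : ∃ W : ℝ → ℝ, ContinuousOn W (Icc (0:ℝ) b) ∧
      ∀ t ∈ Ioc (0:ℝ) b, W t = (ψ t - ψ 0) ^ (1 - γ) * v t) :
    wnorm ψ γ b (fun t => Gf ψ ψ' α γ u₀ φ f h g u t - Gf ψ ψ' α γ u₀ φ f h g v t)
      ≤ (2 * Lf * (Real.Gamma γ / Real.Gamma (γ + α)) * (ψ b - ψ 0) ^ α
          + (2 * Lf * Lh / (ζ * γ)) * (Real.Gamma (γ + 1) / Real.Gamma (γ + α + 1))
            * (ψ b - ψ 0) ^ (α + 1))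
        * wnorm ψ γ b (fun t => u t - v t) := by
  have hγ0 : 0 < γ := by rw [hγ]; nlinarith
  have hγ1 : γ ≤ 1 := by rw [hγ]; nlinarith
  have hψc : ContinuousOn ψ (Icc (0:ℝ) b) := fun x hx => (hψ x hx).continuousWithinAt
  have hlow := lin_lower hψ hζψ
  have h0mem : (0:ℝ) ∈ Icc (0:ℝ) b := ⟨le_refl _, hb.le⟩
  have hbmem : b ∈ Icc (0:ℝ) b := ⟨hb.le, le_refl _⟩
  have hKnn : ∀ t ∈ Icc (0:ℝ) b, 0 ≤ ψ t - ψ 0 := by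
    intro t htc
    nlinarith [hlow 0 h0mem t htc htc.1, mul_nonneg hζ.le htc.1]
  have hKpos : ∀ t ∈ Ioc (0:ℝ) b, 0 < ψ t - ψ 0 := by
    intro t htc
    nlinarith [hlow 0 h0mem t ⟨htc.1.le, htc.2⟩ htc.1.le, mul_pos hζ htc.1]
  obtain ⟨Wu, hWuc, hWue⟩ := huw
  obtain ⟨Wv, hWvc, hWve⟩ := hvw
  set N := wnorm ψ γ b (fun t => u t - v t) with hNdef
  obtain ⟨CW, hCW⟩ := isCompact_Icc.exists_bound_of_continuousOn (hWuc.sub hWvc)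
  have hSbdd : BddAbove ((fun t => |(ψ t - ψ 0) ^ (1 - γ) * (u t - v t)|) '' Ioc 0 b) := by
    refine ⟨CW, ?_⟩
    rintro x ⟨t, htc, rfl⟩
    have h1 : (ψ t - ψ 0) ^ (1 - γ) * (u t - v t) = Wu t - Wv t := by
      rw [hWue t htc, hWve t htc]; ring
    simp only [h1]
    simpa [Real.norm_eq_abs] using hCW t ⟨htc.1.le, htc.2⟩
  have hNub : ∀ t ∈ Ioc (0:ℝ) b, |(ψ t - ψ 0) ^ (1 - γ) * (u t - v t)| ≤ N := by
    intro t htc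
    exact le_csSup hSbdd (mem_image_of_mem _ htc)
  have hN0 : 0 ≤ N := le_trans (abs_nonneg _) (hNub b ⟨hb, le_refl _⟩)
  have huvIcc : ∀ s ∈ Icc (0:ℝ) b, |u s - v s| ≤ (ψ s - ψ 0) ^ (γ - 1) * N := by
    intro s hs
    rcases eq_or_lt_of_le hs.1 with h0 | h0
    · have hu0 : u s = φ s := huφ s ⟨by linarith [h0.symm ▸ (le_refl (0:ℝ))], by linarith [h0]⟩
      have hv0 : v s = φ s := hvφ s ⟨by linarith [h0.symm ▸ (le_refl (0:ℝ))], by linarith [h0]⟩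
      rw [hu0, hv0, sub_self, abs_zero]
      exact mul_nonneg (Real.rpow_nonneg (hKnn s hs) _) hN0
    · have hKs := hKpos s ⟨h0, hs.2⟩
      have h2 := hNub s ⟨h0, hs.2⟩
      rw [abs_mul, abs_of_nonneg (Real.rpow_nonneg hKs.le _)] at h2
      have h3 : |u s - v s|
          = (ψ s - ψ 0) ^ (γ - 1) * ((ψ s - ψ 0) ^ (1 - γ) * |u s - v s|) := by
        rw [← mul_assoc, ← Real.rpow_add hKs]
        norm_num
      rw [h3]
      exact mul_le_mul_of_nonneg_left h2 (Real.rpow_nonneg hKs.le _)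
  have hugv : ∀ s ∈ Icc (0:ℝ) b, u (g s) = v (g s) := by
    intro s hs
    rw [huφ _ (hgmem s hs), hvφ _ (hgmem s hs)]
  -- continuity of the h-integrand
  have hhcont : ∀ (w : ℝ → ℝ), ContinuousOn w (Icc (-r) b) → ∀ s ∈ Icc (0:ℝ) b,
      ContinuousOn (fun τ => h s τ (w τ) (w (g τ))) (Icc (0:ℝ) s) := by
    intro w hw s hs
    have hsub : Icc (0:ℝ) s ⊆ Icc (0:ℝ) b := fun x hx => ⟨hx.1, le_trans hx.2 hs.2⟩
    have hwin : ContinuousOn (fun τ => w τ) (Icc (0:ℝ) s) :=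
      hw.mono (fun x hx => ⟨by linarith [(hsub hx).1], (hsub hx).2⟩)
    have hwg : ContinuousOn (fun τ => w (g τ)) (Icc (0:ℝ) s) := by
      apply hw.comp (hgc.mono hsub)
      intro x hx
      have := hgmem x (hsub hx)
      exact ⟨this.1, le_trans this.2 hb.le⟩
    apply hh.comp (continuousOn_const.prodMk ((continuousOn_id).prodMk (hwin.prodMk hwg)))
    intro τ hτ
    exact Set.mem_prod.mpr ⟨hs, Set.mem_prod.mpr ⟨hsub hτ, mem_univ _⟩⟩
  have hIdiff : ∀ s ∈ Icc (0:ℝ) b,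
      |(∫ τ in (0:ℝ)..s, h s τ (u τ) (u (g τ))) - ∫ τ in (0:ℝ)..s, h s τ (v τ) (v (g τ))|
        ≤ Lh * N * ((ψ s - ψ 0) ^ γ / (ζ * γ)) := by
    intro s hs
    have hiu : IntervalIntegrable (fun τ => h s τ (u τ) (u (g τ))) volume 0 s := by
      apply ContinuousOn.intervalIntegrable
      rw [uIcc_of_le hs.1]
      exact hhcont u hu s hs
    have hiv : IntervalIntegrable (fun τ => h s τ (v τ) (v (g τ))) volume 0 s := by
      apply ContinuousOn.intervalIntegrable
      rw [uIcc_of_le hs.1]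
      exact hhcont v hv s hs
    have hKii := Kint hψ hψ'c hγ0 hγ1 hζ hζψ hs
    rw [← intervalIntegral.integral_sub hiu hiv]
    calc |∫ τ in (0:ℝ)..s, (h s τ (u τ) (u (g τ)) - h s τ (v τ) (v (g τ)))|
        ≤ ∫ τ in (0:ℝ)..s, |h s τ (u τ) (u (g τ)) - h s τ (v τ) (v (g τ))| :=
          intervalIntegral.abs_integral_le_integral_abs hs.1
      _ ≤ ∫ τ in (0:ℝ)..s, Lh * N * (ψ τ - ψ 0) ^ (γ - 1) := by
          apply intervalIntegral.integral_mono_on hs.1 ((hiu.sub hiv).abs)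
            ((hKii.1).const_mul _)
          intro τ hτ
          have hτb : τ ∈ Icc (0:ℝ) b := ⟨hτ.1, le_trans hτ.2 hs.2⟩
          calc |h s τ (u τ) (u (g τ)) - h s τ (v τ) (v (g τ))|
              ≤ Lh * (|u τ - v τ| + |u (g τ) - v (g τ)|) := hhLip s hs τ hτb _ _ _ _
            _ = Lh * |u τ - v τ| := by rw [hugv τ hτb, sub_self, abs_zero, add_zero]
            _ ≤ Lh * ((ψ τ - ψ 0) ^ (γ - 1) * N) :=
                mul_le_mul_of_nonneg_left (huvIcc τ hτb) hLh.le
            _ = Lh * N * (ψ τ - ψ 0) ^ (γ - 1) := by ring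
      _ = Lh * N * ∫ τ in (0:ℝ)..s, (ψ τ - ψ 0) ^ (γ - 1) :=
          intervalIntegral.integral_const_mul _ _
      _ ≤ Lh * N * ((ψ s - ψ 0) ^ γ / (ζ * γ)) :=
          mul_le_mul_of_nonneg_left hKii.2 (by positivity)
  have hFdiff : ∀ s ∈ Icc (0:ℝ) b,
      |Ffun f h g u s - Ffun f h g v s|
        ≤ Lf * ((ψ s - ψ 0) ^ (γ - 1) * N + Lh * N * ((ψ s - ψ 0) ^ γ / (ζ * γ))) := by
    intro s hs
    have h1 := hfLip s hs (u s) (u (g s))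
      (∫ τ in (0:ℝ)..s, h s τ (u τ) (u (g τ))) (v s) (v (g s))
      (∫ τ in (0:ℝ)..s, h s τ (v τ) (v (g τ)))
    calc |Ffun f h g u s - Ffun f h g v s|
        ≤ Lf * (|u s - v s| + |u (g s) - v (g s)|
            + |(∫ τ in (0:ℝ)..s, h s τ (u τ) (u (g τ)))
                - ∫ τ in (0:ℝ)..s, h s τ (v τ) (v (g τ))|) := h1
      _ ≤ Lf * ((ψ s - ψ 0) ^ (γ - 1) * N + 0
            + Lh * N * ((ψ s - ψ 0) ^ γ / (ζ * γ))) := by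
          apply mul_le_mul_of_nonneg_left _ hLf.le
          apply add_le_add (add_le_add (huvIcc s hs) _) (hIdiff s hs)
          rw [hugv s hs, sub_self, abs_zero]
      _ = Lf * ((ψ s - ψ 0) ^ (γ - 1) * N + Lh * N * ((ψ s - ψ 0) ^ γ / (ζ * γ))) := by
          ring
  -- bounds for F
  have hFuc : ContinuousOn (Ffun f h g u) (Icc (0:ℝ) b) :=
    Ffun_contOn hb hr hu hgc hgmem hf hh
  have hFvc : ContinuousOn (Ffun f h g v) (Icc (0:ℝ) b) :=
    Ffun_contOn hb hr hv hgc hgmem hf hh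
  obtain ⟨Mu, hMu⟩ := isCompact_Icc.exists_bound_of_continuousOn hFuc
  obtain ⟨Mv, hMv⟩ := isCompact_Icc.exists_bound_of_continuousOn hFvc
  obtain ⟨Mp, hMp⟩ := isCompact_Icc.exists_bound_of_continuousOn hψ'c
  have hGα : (0:ℝ) < Real.Gamma α := Real.Gamma_pos_of_pos hα0
  have hGγ : (0:ℝ) < Real.Gamma γ := Real.Gamma_pos_of_pos hγ0
  have hGγα : (0:ℝ) < Real.Gamma (γ + α) := Real.Gamma_pos_of_pos (by linarith)
  have hGγ1 : (0:ℝ) < Real.Gamma (γ + 1) := Real.Gamma_pos_of_pos (by linarith)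
  have hGγα1 : (0:ℝ) < Real.Gamma (γ + α + 1) := Real.Gamma_pos_of_pos (by linarith)
  have hTb : 0 < ψ b - ψ 0 := hKpos b ⟨hb, le_refl _⟩
  apply Real.sSup_le
  · rintro x ⟨t, htc, rfl⟩
    obtain ⟨ht1, ht2⟩ := htc
    have htmem : t ∈ Icc (0:ℝ) b := ⟨ht1.le, ht2⟩
    have hsubt : Icc (0:ℝ) t ⊆ Icc (0:ℝ) b := fun x hx => ⟨hx.1, le_trans hx.2 ht2⟩
    have hsubIoo : Ioo (0:ℝ) t ⊆ Icc (0:ℝ) b := fun x hx => ⟨hx.1.le, le_trans hx.2.le ht2⟩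
    have hTt : 0 < ψ t - ψ 0 := hKpos t ⟨ht1, ht2⟩
    have hψts : ∀ s ∈ Icc (0:ℝ) t, 0 ≤ ψ t - ψ s := by
      intro s hs
      nlinarith [hlow s (hsubt hs) t htmem hs.2, mul_nonneg hζ.le (by linarith [hs.2] : (0:ℝ) ≤ t - s)]
    have hψtpos : ∀ s ∈ Ioo (0:ℝ) t, ζ * (t - s) ≤ ψ t - ψ s := by
      intro s hs
      exact hlow s (hsubIoo hs) t htmem hs.2.le
    -- integrability of the main integrands
    have PFint : ∀ (F : ℝ → ℝ) (MF : ℝ), ContinuousOn F (Icc (0:ℝ) b) →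
        (∀ x ∈ Icc (0:ℝ) b, ‖F x‖ ≤ MF) →
        IntervalIntegrable (fun s => ψ' s * (ψ t - ψ s) ^ (α - 1) * F s) volume 0 t := by
      intro F MF hFc hFM
      have hdom : IntervalIntegrable (fun s : ℝ => (t - s) ^ (α - 1)) volume 0 t := by
        have h0 := (intervalIntegrable_rpow' (r := α - 1) (a := 0) (b := t)
          (by linarith)).comp_sub_left t
        simpa using h0.symm
      have hdom' : IntervalIntegrable
          (fun s : ℝ => (Mp * (ζ ^ (α - 1) * MF)) * (t - s) ^ (α - 1)) volume 0 t :=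
        hdom.const_mul _
      have hcontP : ContinuousOn (fun s => ψ' s * (ψ t - ψ s) ^ (α - 1) * F s)
          (Ioo (0:ℝ) t) := by
        apply ((hψ'c.mono hsubIoo).mul ?_).mul (hFc.mono hsubIoo)
        apply ContinuousOn.rpow_const (continuousOn_const.sub (hψc.mono hsubIoo))
        intro s hs
        left
        show ψ t - ψ s ≠ 0
        have := hψtpos s hs
        nlinarith [mul_pos hζ (by linarith [hs.2] : (0:ℝ) < t - s)]
      have hIoo : IntegrableOn (fun s => ψ' s * (ψ t - ψ s) ^ (α - 1) * F s)
          (Ioo (0:ℝ) t) := by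
        apply Integrable.mono' (hdom'.1.mono_set Ioo_subset_Ioc_self)
          (hcontP.aestronglyMeasurable measurableSet_Ioo)
        apply (ae_restrict_iff' measurableSet_Ioo).mpr
        apply ae_of_all
        intro s hs
        have hts : (0:ℝ) < t - s := by linarith [hs.2]
        have h1 : 0 < ζ * (t - s) := mul_pos hζ hts
        have h2 : (ψ t - ψ s) ^ (α - 1) ≤ ζ ^ (α - 1) * (t - s) ^ (α - 1) := by
          calc (ψ t - ψ s) ^ (α - 1) ≤ (ζ * (t - s)) ^ (α - 1) :=
              Real.rpow_le_rpow_of_nonpos h1 (hψtpos s hs) (by linarith)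
            _ = ζ ^ (α - 1) * (t - s) ^ (α - 1) := Real.mul_rpow hζ.le hts.le
        have h3 : |ψ' s| ≤ Mp := by
          have := hMp s (hsubIoo hs)
          rwa [Real.norm_eq_abs] at this
        have h4 : |F s| ≤ MF := by
          have := hFM s (hsubIoo hs)
          rwa [Real.norm_eq_abs] at this
        rw [Real.norm_eq_abs, abs_mul, abs_mul,
          abs_of_nonneg (Real.rpow_nonneg (by nlinarith [hψtpos s hs] : 0 ≤ ψ t - ψ s) _)]
        have h5 : 0 ≤ (ψ t - ψ s) ^ (α - 1) :=
          Real.rpow_nonneg (by nlinarith [hψtpos s hs]) _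
        have h6 : 0 ≤ |F s| := abs_nonneg _
        have h7 : 0 ≤ |ψ' s| := abs_nonneg _
        calc |ψ' s| * (ψ t - ψ s) ^ (α - 1) * |F s|
            ≤ Mp * (ζ ^ (α - 1) * (t - s) ^ (α - 1)) * MF := by
              apply mul_le_mul (mul_le_mul h3 h2 h5 (le_trans h7 h3)) h4 h6
              exact mul_nonneg (le_trans h7 h3) (mul_nonneg
                (Real.rpow_nonneg hζ.le _) (Real.rpow_nonneg hts.le _))
          _ = Mp * (ζ ^ (α - 1) * MF) * (t - s) ^ (α - 1) := by ring
      rw [intervalIntegrable_iff, uIoc_of_le ht1.le]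
      exact hIoo.congr_set_ae Ioo_ae_eq_Ioc.symm
    have hPFu := PFint (Ffun f h g u) Mu hFuc hMu
    have hPFv := PFint (Ffun f h g v) Mv hFvc hMv
    -- change of variables values
    have hc1 := chgvar hψ hψmono hψ'pos ⟨ht1, ht2⟩ hα0 hγ0
    have hc2 := chgvar hψ hψmono hψ'pos ⟨ht1, ht2⟩ hα0 (by linarith : (0:ℝ) < γ + 1)
    have e5 : γ + 1 - 1 = γ := by ring
    have e6 : α + (γ + 1) - 1 = α + γ := by ring
    rw [e5, e6] at hc2
    -- difference of Gf
    have hGf : Gf ψ ψ' α γ u₀ φ f h g u t - Gf ψ ψ' α γ u₀ φ f h g v t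
        = (Real.Gamma α)⁻¹ * ∫ s in (0:ℝ)..t,
            ψ' s * (ψ t - ψ s) ^ (α - 1) * (Ffun f h g u s - Ffun f h g v s) := by
      simp only [Gf, if_neg (not_le.mpr ht1)]
      have h1 : (∫ s in (0:ℝ)..t,
            ψ' s * (ψ t - ψ s) ^ (α - 1) * (Ffun f h g u s - Ffun f h g v s))
          = (∫ s in (0:ℝ)..t, ψ' s * (ψ t - ψ s) ^ (α - 1) * Ffun f h g u s)
            - ∫ s in (0:ℝ)..t, ψ' s * (ψ t - ψ s) ^ (α - 1) * Ffun f h g v s := by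
        rw [← intervalIntegral.integral_sub hPFu hPFv]
        apply intervalIntegral.integral_congr
        intro s hs
        ring
      rw [h1]
      ring
    have hq : IntervalIntegrable (fun s =>
        ψ' s * (ψ t - ψ s) ^ (α - 1) * (Ffun f h g u s - Ffun f h g v s)) volume 0 t := by
      have := hPFu.sub hPFv
      simpa only [mul_sub] using this
    -- pointwise bound & integral bound
    have hbnd : (∫ s in (0:ℝ)..t,
          |ψ' s * (ψ t - ψ s) ^ (α - 1) * (Ffun f h g u s - Ffun f h g v s)|)
        ≤ (Lf * N) * ((ψ t - ψ 0) ^ (α + γ - 1)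
              * (Real.Gamma α * Real.Gamma γ / Real.Gamma (α + γ)))
          + (Lf * Lh * N / (ζ * γ)) * ((ψ t - ψ 0) ^ (α + γ)
              * (Real.Gamma α * Real.Gamma (γ + 1) / Real.Gamma (α + (γ + 1)))) := by
      have hle : (∫ s in (0:ℝ)..t,
            |ψ' s * (ψ t - ψ s) ^ (α - 1) * (Ffun f h g u s - Ffun f h g v s)|)
          ≤ ∫ s in (0:ℝ)..t,
              ((Lf * N) * (ψ' s * ((ψ t - ψ s) ^ (α - 1) * (ψ s - ψ 0) ^ (γ - 1)))
                + (Lf * Lh * N / (ζ * γ))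
                  * (ψ' s * ((ψ t - ψ s) ^ (α - 1) * (ψ s - ψ 0) ^ γ))) := by
        apply intervalIntegral.integral_mono_on ht1.le hq.abs
          (((hc1.1).const_mul _).add ((hc2.1).const_mul _))
        intro s hs
        have hsb : s ∈ Icc (0:ℝ) b := hsubt hs
        have hP0 : 0 ≤ ψ' s * (ψ t - ψ s) ^ (α - 1) :=
          mul_nonneg (hψ'pos s hsb).le (Real.rpow_nonneg (hψts s hs) _)
        calc |ψ' s * (ψ t - ψ s) ^ (α - 1) * (Ffun f h g u s - Ffun f h g v s)|
            = (ψ' s * (ψ t - ψ s) ^ (α - 1)) * |Ffun f h g u s - Ffun f h g v s| := by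
              rw [abs_mul, abs_of_nonneg hP0]
          _ ≤ (ψ' s * (ψ t - ψ s) ^ (α - 1))
              * (Lf * ((ψ s - ψ 0) ^ (γ - 1) * N + Lh * N * ((ψ s - ψ 0) ^ γ / (ζ * γ)))) :=
              mul_le_mul_of_nonneg_left (hFdiff s hsb) hP0
          _ = (Lf * N) * (ψ' s * ((ψ t - ψ s) ^ (α - 1) * (ψ s - ψ 0) ^ (γ - 1)))
                + (Lf * Lh * N / (ζ * γ))
                  * (ψ' s * ((ψ t - ψ s) ^ (α - 1) * (ψ s - ψ 0) ^ γ)) := by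
              field_simp
      rw [intervalIntegral.integral_add ((hc1.1).const_mul _) ((hc2.1).const_mul _),
        intervalIntegral.integral_const_mul, intervalIntegral.integral_const_mul,
        hc1.2, hc2.2] at hle
      exact hle
    -- assemble
    show |(ψ t - ψ 0) ^ (1 - γ) * (Gf ψ ψ' α γ u₀ φ f h g u t - Gf ψ ψ' α γ u₀ φ f h g v t)|
      ≤ _
    rw [hGf, abs_mul, abs_mul,
      abs_of_nonneg (Real.rpow_nonneg hTt.le _),
      abs_of_nonneg (inv_nonneg.mpr hGα.le)]
    have habs : |∫ s in (0:ℝ)..t,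
        ψ' s * (ψ t - ψ s) ^ (α - 1) * (Ffun f h g u s - Ffun f h g v s)|
        ≤ ∫ s in (0:ℝ)..t,
            |ψ' s * (ψ t - ψ s) ^ (α - 1) * (Ffun f h g u s - Ffun f h g v s)| :=
      intervalIntegral.abs_integral_le_integral_abs ht1.le
    have step1 : (ψ t - ψ 0) ^ (1 - γ) * ((Real.Gamma α)⁻¹ * |∫ s in (0:ℝ)..t,
        ψ' s * (ψ t - ψ s) ^ (α - 1) * (Ffun f h g u s - Ffun f h g v s)|)
        ≤ (ψ t - ψ 0) ^ (1 - γ) * ((Real.Gamma α)⁻¹ *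
          ((Lf * N) * ((ψ t - ψ 0) ^ (α + γ - 1)
              * (Real.Gamma α * Real.Gamma γ / Real.Gamma (α + γ)))
          + (Lf * Lh * N / (ζ * γ)) * ((ψ t - ψ 0) ^ (α + γ)
              * (Real.Gamma α * Real.Gamma (γ + 1) / Real.Gamma (α + (γ + 1)))))) := by
      apply mul_le_mul_of_nonneg_left _ (Real.rpow_nonneg hTt.le _)
      apply mul_le_mul_of_nonneg_left _ (inv_nonneg.mpr hGα.le)
      exact le_trans habs hbnd
    have step2 : (ψ t - ψ 0) ^ (1 - γ) * ((Real.Gamma α)⁻¹ *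
          ((Lf * N) * ((ψ t - ψ 0) ^ (α + γ - 1)
              * (Real.Gamma α * Real.Gamma γ / Real.Gamma (α + γ)))
          + (Lf * Lh * N / (ζ * γ)) * ((ψ t - ψ 0) ^ (α + γ)
              * (Real.Gamma α * Real.Gamma (γ + 1) / Real.Gamma (α + (γ + 1))))))
        = Lf * (Real.Gamma γ / Real.Gamma (γ + α)) * (ψ t - ψ 0) ^ α * N
          + (Lf * Lh / (ζ * γ)) * (Real.Gamma (γ + 1) / Real.Gamma (γ + α + 1))
            * (ψ t - ψ 0) ^ (α + 1) * N := by
      have e3 : α + (γ + 1) = γ + α + 1 := by ring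
      have e4 : α + γ = γ + α := by ring
      rw [e3, e4]
      have expand : (ψ t - ψ 0) ^ (1 - γ) * ((Real.Gamma α)⁻¹ *
          ((Lf * N) * ((ψ t - ψ 0) ^ (γ + α - 1)
              * (Real.Gamma α * Real.Gamma γ / Real.Gamma (γ + α)))
          + (Lf * Lh * N / (ζ * γ)) * ((ψ t - ψ 0) ^ (γ + α)
              * (Real.Gamma α * Real.Gamma (γ + 1) / Real.Gamma (γ + α + 1)))))
          = (Real.Gamma α)⁻¹ * (Lf * N) * (Real.Gamma α * Real.Gamma γ / Real.Gamma (γ + α))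
              * ((ψ t - ψ 0) ^ (1 - γ) * (ψ t - ψ 0) ^ (γ + α - 1))
            + (Real.Gamma α)⁻¹ * (Lf * Lh * N / (ζ * γ))
              * (Real.Gamma α * Real.Gamma (γ + 1) / Real.Gamma (γ + α + 1))
              * ((ψ t - ψ 0) ^ (1 - γ) * (ψ t - ψ 0) ^ (γ + α)) := by ring
      have e1' : (ψ t - ψ 0) ^ (1 - γ) * (ψ t - ψ 0) ^ (γ + α - 1) = (ψ t - ψ 0) ^ α := by
        rw [← Real.rpow_add hTt]
        congr 1
        ring
      have e2' : (ψ t - ψ 0) ^ (1 - γ) * (ψ t - ψ 0) ^ (γ + α) = (ψ t - ψ 0) ^ (α + 1) := by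
        rw [← Real.rpow_add hTt]
        congr 1
        ring
      rw [expand, e1', e2']
      have hcan : (Real.Gamma α)⁻¹ * Real.Gamma α = 1 := inv_mul_cancel₀ hGα.ne'
      linear_combination (Lf * N * (Real.Gamma γ / Real.Gamma (γ + α)) * (ψ t - ψ 0) ^ α
        + (Lf * Lh * N / (ζ * γ)) * (Real.Gamma (γ + 1) / Real.Gamma (γ + α + 1))
          * (ψ t - ψ 0) ^ (α + 1)) * hcan
    have hmonoT : ψ t ≤ ψ b := by
      rcases eq_or_lt_of_le ht2 with h | h
      · rw [h]
      · exact (hψmono htmem hbmem h).le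
    have hTtTb : ψ t - ψ 0 ≤ ψ b - ψ 0 := by linarith
    have hpow1 : (ψ t - ψ 0) ^ α ≤ (ψ b - ψ 0) ^ α :=
      Real.rpow_le_rpow hTt.le hTtTb hα0.le
    have hpow2 : (ψ t - ψ 0) ^ (α + 1) ≤ (ψ b - ψ 0) ^ (α + 1) :=
      Real.rpow_le_rpow hTt.le hTtTb (by linarith)
    have hcoef1 : 0 ≤ Lf * (Real.Gamma γ / Real.Gamma (γ + α)) :=
      mul_nonneg hLf.le (div_nonneg hGγ.le hGγα.le)
    have hcoef2 : 0 ≤ (Lf * Lh / (ζ * γ)) * (Real.Gamma (γ + 1) / Real.Gamma (γ + α + 1)) :=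
      mul_nonneg (div_nonneg (mul_nonneg hLf.le hLh.le) (mul_nonneg hζ.le hγ0.le))
        (div_nonneg hGγ1.le hGγα1.le)
    have step3 : Lf * (Real.Gamma γ / Real.Gamma (γ + α)) * (ψ t - ψ 0) ^ α * N
          + (Lf * Lh / (ζ * γ)) * (Real.Gamma (γ + 1) / Real.Gamma (γ + α + 1))
            * (ψ t - ψ 0) ^ (α + 1) * N
        ≤ (2 * Lf * (Real.Gamma γ / Real.Gamma (γ + α)) * (ψ b - ψ 0) ^ α
          + (2 * Lf * Lh / (ζ * γ)) * (Real.Gamma (γ + 1) / Real.Gamma (γ + α + 1))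
            * (ψ b - ψ 0) ^ (α + 1)) * N := by
      have t1 : Lf * (Real.Gamma γ / Real.Gamma (γ + α)) * (ψ t - ψ 0) ^ α * N
          ≤ Lf * (Real.Gamma γ / Real.Gamma (γ + α)) * (ψ b - ψ 0) ^ α * N := by
        apply mul_le_mul_of_nonneg_right _ hN0
        exact mul_le_mul_of_nonneg_left hpow1 hcoef1
      have t2 : (Lf * Lh / (ζ * γ)) * (Real.Gamma (γ + 1) / Real.Gamma (γ + α + 1))
            * (ψ t - ψ 0) ^ (α + 1) * N
          ≤ (Lf * Lh / (ζ * γ)) * (Real.Gamma (γ + 1) / Real.Gamma (γ + α + 1))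
            * (ψ b - ψ 0) ^ (α + 1) * N := by
        apply mul_le_mul_of_nonneg_right _ hN0
        exact mul_le_mul_of_nonneg_left hpow2 hcoef2
      have n1 : 0 ≤ Lf * (Real.Gamma γ / Real.Gamma (γ + α)) * (ψ b - ψ 0) ^ α * N :=
        mul_nonneg (mul_nonneg hcoef1 (Real.rpow_nonneg hTb.le _)) hN0
      have n2 : 0 ≤ (Lf * Lh / (ζ * γ)) * (Real.Gamma (γ + 1) / Real.Gamma (γ + α + 1))
          * (ψ b - ψ 0) ^ (α + 1) * N :=
        mul_nonneg (mul_nonneg hcoef2 (Real.rpow_nonneg hTb.le _)) hN0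
      have expand2 : (2 * Lf * (Real.Gamma γ / Real.Gamma (γ + α)) * (ψ b - ψ 0) ^ α
          + (2 * Lf * Lh / (ζ * γ)) * (Real.Gamma (γ + 1) / Real.Gamma (γ + α + 1))
            * (ψ b - ψ 0) ^ (α + 1)) * N
          = 2 * (Lf * (Real.Gamma γ / Real.Gamma (γ + α)) * (ψ b - ψ 0) ^ α * N)
            + 2 * ((Lf * Lh / (ζ * γ)) * (Real.Gamma (γ + 1) / Real.Gamma (γ + α + 1))
              * (ψ b - ψ 0) ^ (α + 1) * N) := by ring
      rw [expand2]
      linarith [t1, t2, n1, n2]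
    calc (ψ t - ψ 0) ^ (1 - γ) * ((Real.Gamma α)⁻¹ * |∫ s in (0:ℝ)..t,
          ψ' s * (ψ t - ψ s) ^ (α - 1) * (Ffun f h g u s - Ffun f h g v s)|)
        ≤ _ := step1
      _ = _ := step2
      _ ≤ _ := step3
  · have c1 : 0 ≤ 2 * Lf * (Real.Gamma γ / Real.Gamma (γ + α)) * (ψ b - ψ 0) ^ α :=
      mul_nonneg (mul_nonneg (by linarith) (div_nonneg hGγ.le hGγα.le))
        (Real.rpow_nonneg hTb.le _)
    have c2 : 0 ≤ (2 * Lf * Lh / (ζ * γ)) * (Real.Gamma (γ + 1) / Real.Gamma (γ + α + 1))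
        * (ψ b - ψ 0) ^ (α + 1) := by
      apply mul_nonneg (mul_nonneg (div_nonneg _ (mul_nonneg hζ.le hγ0.le))
        (div_nonneg hGγ1.le hGγα1.le)) (Real.rpow_nonneg hTb.le _)
      nlinarith [mul_pos hLf hLh]
    exact mul_nonneg (add_nonneg c1 c2) hN0
end

section
/- Bielecki-norm contraction estimate for the solution operator: assume (H1)–(H2), let ζ > 0 satisfy ψ'(s) ≥ ζ for all s ∈ [0,b], and let δ ≥ 0. Then for all u, v ∈ C([−r,b]) with u = v = φ on [−r,0] and restrictions to (0,b] in C_{1−γ;ψ}[0,b], one has ‖G_f u − G_f v‖_B ≤ 2L_f e^{δ(ψ(b)−ψ(0))} [ (Γ(γ)/Γ(γ+α)) (ψ(b)−ψ(0))^{α} + (L_h/(ζγ)) (Γ(γ+1)/Γ(γ+α+1)) (ψ(b)−ψ(0))^{α+1} ] · ‖u − v‖_B. -/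
open Real MeasureTheory Set Filter Topology

/-- The Bielecki norm
`‖ω‖_B = sup_{t∈(0,b]} e^{-δ(ψ(t)-ψ(0))} |(ψ(t)-ψ(0))^{1-γ} ω(t)|`. -/
noncomputable def bnorm (ψ : ℝ → ℝ) (γ δ b : ℝ) (ω : ℝ → ℝ) : ℝ :=
  sSup ((fun t => Real.exp (-δ * (ψ t - ψ 0)) * |(ψ t - ψ 0) ^ (1 - γ) * ω t|) '' Ioc 0 b)

lemma beta_intervalIntegrable {p q a : ℝ} (hp : 0 < p) (hq : 0 < q) (ha : 0 < a) :
    IntervalIntegrable (fun x => x ^ (p - 1) * (a - x) ^ (q - 1)) volume 0 a := by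
  have h1 : IntervalIntegrable (fun x => x ^ (p - 1) * (a - x) ^ (q - 1)) volume 0 (a / 2) := by
    apply IntervalIntegrable.mul_continuousOn
    · exact intervalIntegral.intervalIntegrable_rpow' (by linarith)
    · apply ContinuousOn.rpow_const (continuous_const.sub continuous_id).continuousOn
      intro x hx
      rw [uIcc_of_le (by linarith)] at hx
      left
      have hx2 : x ≤ a / 2 := hx.2
      intro hfalse
      simp only [Pi.sub_apply, id] at hfalse
      have : x = a := by linarith [sub_eq_zero.mp hfalse]
      linarith
  have h2 : IntervalIntegrable (fun x => x ^ (p - 1) * (a - x) ^ (q - 1)) volume (a / 2) a := by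
    apply IntervalIntegrable.continuousOn_mul
    · have base : IntervalIntegrable (fun y => y ^ (q - 1)) volume 0 (a / 2) :=
        intervalIntegral.intervalIntegrable_rpow' (by linarith)
      have h := (base.comp_sub_left a).symm
      have e1 : a - 0 = a := by ring
      have e2 : a - a / 2 = a / 2 := by ring
      rw [e1, e2] at h
      exact h
    · apply ContinuousOn.rpow_const continuous_id.continuousOn
      intro x hx
      rw [uIcc_of_le (by linarith)] at hx
      left
      have hx1 : a / 2 ≤ x := hx.1
      intro hfalse
      simp only [id] at hfalse
      linarith
  exact h1.trans h2

lemma beta_integral_value {p q a : ℝ} (hp : 0 < p) (hq : 0 < q) (ha : 0 < a) :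
    ∫ x in (0:ℝ)..a, x ^ (p - 1) * (a - x) ^ (q - 1)
      = a ^ (p + q - 1) * (Real.Gamma p * Real.Gamma q / Real.Gamma (p + q)) := by
  have hΓpos : 0 < Real.Gamma (p + q) := Real.Gamma_pos_of_pos (by linarith)
  have hscaled := Complex.betaIntegral_scaled (p : ℂ) (q : ℂ) ha
  have hGG := Complex.Gamma_mul_Gamma_eq_betaIntegral
      (by simpa using hp : 0 < Complex.re (p : ℂ)) (by simpa using hq : 0 < Complex.re (q : ℂ))
  have hΓC : (Complex.Gamma ((p : ℂ) + (q : ℂ))) = ((Real.Gamma (p + q) : ℝ) : ℂ) := by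
    rw [← Complex.ofReal_add, Complex.Gamma_ofReal]
  have hbeta : Complex.betaIntegral (p : ℂ) (q : ℂ)
      = ((Real.Gamma p * Real.Gamma q / Real.Gamma (p + q) : ℝ) : ℂ) := by
    have hne : (Complex.Gamma ((p : ℂ) + (q : ℂ))) ≠ 0 := by
      rw [hΓC]; exact_mod_cast hΓpos.ne'
    rw [hΓC] at hGG
    push_cast
    rw [eq_div_iff (by exact_mod_cast hΓpos.ne' : ((Real.Gamma (p + q) : ℝ) : ℂ) ≠ 0)]
    rw [mul_comm, ← hGG, Complex.Gamma_ofReal, Complex.Gamma_ofReal]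
  have hre : (∫ x in (0:ℝ)..a, (x : ℂ) ^ ((p : ℂ) - 1) * ((a : ℂ) - (x : ℂ)) ^ ((q : ℂ) - 1))
      = ((∫ x in (0:ℝ)..a, x ^ (p - 1) * (a - x) ^ (q - 1) : ℝ) : ℂ) := by
    rw [← intervalIntegral.integral_ofReal]
    refine intervalIntegral.integral_congr fun x hx => ?_
    rw [uIcc_of_le ha.le] at hx
    have h1 : ((x ^ (p - 1) : ℝ) : ℂ) = (x : ℂ) ^ ((p : ℂ) - 1) := by
      rw [Complex.ofReal_cpow hx.1]; push_cast; ring_nf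
    have h2 : (((a - x) ^ (q - 1) : ℝ) : ℂ) = ((a : ℂ) - (x : ℂ)) ^ ((q : ℂ) - 1) := by
      rw [Complex.ofReal_cpow (by linarith [hx.2] : (0:ℝ) ≤ a - x)]; push_cast; ring_nf
    rw [← h1, ← h2, ← Complex.ofReal_mul]
  have hae : ((a : ℂ)) ^ ((p : ℂ) + (q : ℂ) - 1) = ((a ^ (p + q - 1) : ℝ) : ℂ) := by
    rw [Complex.ofReal_cpow ha.le]; push_cast; ring_nf
  rw [hre, hbeta, hae] at hscaled
  have := hscaled
  rw [← Complex.ofReal_mul] at this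
  exact_mod_cast this

lemma key_subst {b t α p : ℝ} {ψ ψ' : ℝ → ℝ}
    (hψ : ∀ s ∈ Icc (0:ℝ) b, HasDerivWithinAt ψ (ψ' s) (Icc (0:ℝ) b) s)
    (hψ'pos : ∀ s ∈ Icc (0:ℝ) b, 0 < ψ' s)
    (hψmono : StrictMonoOn ψ (Icc (0:ℝ) b))
    (hα0 : 0 < α) (hp : 0 < p) (ht : t ∈ Ioc (0:ℝ) b) :
    IntervalIntegrable
        (fun s => ψ' s * ((ψ t - ψ s) ^ (α - 1) * (ψ s - ψ 0) ^ (p - 1))) volume 0 t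
    ∧ (∫ s in (0:ℝ)..t, ψ' s * ((ψ t - ψ s) ^ (α - 1) * (ψ s - ψ 0) ^ (p - 1)))
      = (ψ t - ψ 0) ^ (p + α - 1) * (Real.Gamma p * Real.Gamma α / Real.Gamma (p + α)) := by
  have hb0 : (0:ℝ) ≤ b := le_trans ht.1.le ht.2
  have h0mem : (0:ℝ) ∈ Icc (0:ℝ) b := ⟨le_refl 0, hb0⟩
  have htmem : t ∈ Icc (0:ℝ) b := ⟨ht.1.le, ht.2⟩
  have hΔ : 0 < ψ t - ψ 0 := sub_pos.2 (hψmono h0mem htmem ht.1)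
  set Δ := ψ t - ψ 0 with hΔdef
  have hsub : Ioo (0:ℝ) t ⊆ Icc (0:ℝ) b := fun x hx => ⟨hx.1.le, hx.2.le.trans ht.2⟩
  have hderiv : ∀ x ∈ Ioo (0:ℝ) t, HasDerivWithinAt ψ (ψ' x) (Ioo (0:ℝ) t) x :=
    fun x hx => (hψ x (hsub hx)).mono hsub
  have hinj : InjOn ψ (Ioo (0:ℝ) t) := hψmono.injOn.mono hsub
  have hcont : ContinuousOn ψ (Icc (0:ℝ) t) := fun x hx =>
    ((hψ x ⟨hx.1, hx.2.trans ht.2⟩).continuousWithinAt).mono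
      (fun y hy => ⟨hy.1, hy.2.trans ht.2⟩)
  have himg : ψ '' Ioo (0:ℝ) t = Ioo (ψ 0) (ψ t) := by
    apply Subset.antisymm
    · rintro _ ⟨x, hx, rfl⟩
      exact ⟨hψmono h0mem (hsub hx) hx.1, hψmono (hsub hx) htmem hx.2⟩
    · exact intermediate_value_Ioo ht.1.le hcont
  set g₀ : ℝ → ℝ := fun x => (x - ψ 0) ^ (p - 1) * (ψ t - x) ^ (α - 1) with hg₀
  have hgeq : ∀ x : ℝ, (fun y => y ^ (p - 1) * (Δ - y) ^ (α - 1)) (x - ψ 0) = g₀ x := by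
    intro x
    simp only [hg₀, hΔdef]
    congr 2
    ring
  have hIg : IntervalIntegrable g₀ volume (ψ 0) (ψ t) := by
    have h := (beta_intervalIntegrable hp hα0 hΔ).comp_sub_right (ψ 0)
    simp only [hgeq] at h
    have e1 : (0:ℝ) + ψ 0 = ψ 0 := by ring
    have e2 : Δ + ψ 0 = ψ t := by rw [hΔdef]; ring
    rwa [e1, e2] at h
  have hIg' : IntegrableOn g₀ (Ioo (ψ 0) (ψ t)) := by
    have := (intervalIntegrable_iff_integrableOn_Ioc_of_le (by linarith : ψ 0 ≤ ψ t)).1 hIg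
    exact this.mono_set Ioo_subset_Ioc_self
  have hsmul : IntegrableOn (fun x => |ψ' x| • g₀ (ψ x)) (Ioo (0:ℝ) t) := by
    rw [← integrableOn_image_iff_integrableOn_abs_deriv_smul measurableSet_Ioo hderiv hinj g₀]
    rwa [himg]
  have heqOn : EqOn (fun x => |ψ' x| • g₀ (ψ x))
      (fun s => ψ' s * ((ψ t - ψ s) ^ (α - 1) * (ψ s - ψ 0) ^ (p - 1))) (Ioo (0:ℝ) t) := by
    intro x hx
    simp only [hg₀, smul_eq_mul, abs_of_pos (hψ'pos x (hsub hx))]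
    ring
  have hItgt : IntegrableOn
      (fun s => ψ' s * ((ψ t - ψ s) ^ (α - 1) * (ψ s - ψ 0) ^ (p - 1))) (Ioo (0:ℝ) t) :=
    (integrableOn_congr_fun heqOn measurableSet_Ioo).1 hsmul
  constructor
  · rw [intervalIntegrable_iff_integrableOn_Ioo_of_le ht.1.le]
    exact hItgt
  · rw [intervalIntegral.integral_of_le ht.1.le, integral_Ioc_eq_integral_Ioo,
      ← setIntegral_congr_fun measurableSet_Ioo heqOn,
      ← integral_image_eq_integral_abs_deriv_smul measurableSet_Ioo hderiv hinj g₀,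
      himg, ← integral_Ioc_eq_integral_Ioo,
      ← intervalIntegral.integral_of_le (by linarith : ψ 0 ≤ ψ t)]
    have : (∫ x in (ψ 0)..(ψ t), g₀ x)
        = ∫ x in (ψ 0)..(ψ t), (fun y => y ^ (p - 1) * (Δ - y) ^ (α - 1)) (x - ψ 0) := by
      refine intervalIntegral.integral_congr fun x _ => (hgeq x).symm
    rw [this]
    have hcs := intervalIntegral.integral_comp_sub_right
      (a := ψ 0) (b := ψ t) (fun y => y ^ (p - 1) * (Δ - y) ^ (α - 1)) (ψ 0)
    rw [hcs]
    have e1 : ψ 0 - ψ 0 = 0 := by ring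
    have e2 : ψ t - ψ 0 = Δ := rfl
    rw [e1, e2, beta_integral_value hp hα0 hΔ]

lemma Ffun_continuous {b r : ℝ} (hb : 0 < b) (hr : 0 < r)
    {f h : ℝ → ℝ → ℝ → ℝ → ℝ} {g u : ℝ → ℝ}
    (hu : ContinuousOn u (Icc (-r) b))
    (hgc : ContinuousOn g (Icc (0:ℝ) b))
    (hgmem : ∀ t ∈ Icc (0:ℝ) b, g t ∈ Icc (-r) 0)
    (hf : ContinuousOn (fun p : ℝ × ℝ × ℝ × ℝ => f p.1 p.2.1 p.2.2.1 p.2.2.2)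
      (Icc (0:ℝ) b ×ˢ (univ : Set (ℝ × ℝ × ℝ))))
    (hh : ContinuousOn (fun p : ℝ × ℝ × ℝ × ℝ => h p.1 p.2.1 p.2.2.1 p.2.2.2)
      (Icc (0:ℝ) b ×ˢ Icc (0:ℝ) b ×ˢ (univ : Set (ℝ × ℝ)))) :
    ∃ F : ℝ → ℝ, Continuous F ∧ ∀ s ∈ Icc (0:ℝ) b, F s = Ffun f h g u s := by
  have hb' : (0:ℝ) ≤ b := hb.le
  set pr : ℝ → ℝ := fun x => max 0 (min x b) with hpr
  have hprc : Continuous pr := continuous_const.max (continuous_id.min continuous_const)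
  have hprmem : ∀ x, pr x ∈ Icc (0:ℝ) b := fun x =>
    ⟨le_max_left _ _, max_le (by linarith) (min_le_right _ _)⟩
  have hprid : ∀ x ∈ Icc (0:ℝ) b, pr x = x := fun x hx => by
    simp only [hpr]; rw [min_eq_left hx.2, max_eq_right hx.1]
  set pu : ℝ → ℝ := fun x => max (-r) (min x b) with hpu
  have hpuc : Continuous pu := continuous_const.max (continuous_id.min continuous_const)
  have hpumem : ∀ x, pu x ∈ Icc (-r) b := fun x =>
    ⟨le_max_left _ _, max_le (by linarith) (min_le_right _ _)⟩
  have hpuid : ∀ x ∈ Icc (-r) b, pu x = x := fun x hx => by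
    simp only [hpu]; rw [min_eq_left hx.2, max_eq_right hx.1]
  set U : ℝ → ℝ := fun x => u (pu x) with hU
  have hUc : Continuous U := hu.comp_continuous hpuc hpumem
  have hUeq : ∀ x ∈ Icc (-r) b, U x = u x := fun x hx => by rw [hU]; simp [hpuid x hx]
  set G : ℝ → ℝ := fun x => g (pr x) with hG
  have hGc : Continuous G := hgc.comp_continuous hprc hprmem
  have hGmem : ∀ x, G x ∈ Icc (-r) b := fun x => by
    have := hgmem (pr x) (hprmem x)
    exact ⟨this.1, this.2.trans hb'⟩
  set K : ℝ → ℝ → ℝ := fun s τ => h (pr s) (pr τ) (U τ) (U (G τ)) with hK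
  have hKc : Continuous (Function.uncurry K) := by
    have hmap : Continuous (fun p : ℝ × ℝ => ((pr p.1, pr p.2, U p.2, U (G p.2)) : ℝ × ℝ × ℝ × ℝ)) :=
      (hprc.comp continuous_fst).prodMk ((hprc.comp continuous_snd).prodMk
        (((hUc.comp continuous_snd)).prodMk ((hUc.comp hGc).comp continuous_snd)))
    have := hh.comp_continuous hmap (fun p => ⟨hprmem p.1, hprmem p.2, trivial⟩)
    exact this
  set H : ℝ → ℝ := fun s => ∫ τ in (0:ℝ)..s, K s τ with hH
  have hHc : Continuous H := by
    apply intervalIntegral.continuous_parametric_intervalIntegral_of_continuous hKc continuous_id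
  set F : ℝ → ℝ := fun s => f (pr s) (U s) (U (G s)) (H s) with hF
  refine ⟨F, ?_, ?_⟩
  · have hmap : Continuous (fun x : ℝ => ((pr x, U x, U (G x), H x) : ℝ × ℝ × ℝ × ℝ)) :=
      hprc.prodMk (hUc.prodMk ((hUc.comp hGc).prodMk hHc))
    have := hf.comp_continuous hmap (fun x => ⟨hprmem x, trivial⟩)
    exact this
  · intro s hs
    have hsIrb : s ∈ Icc (-r) b := ⟨le_trans (by linarith) hs.1, hs.2⟩
    have hgs : g s ∈ Icc (-r) b := by
      have := hgmem s hs; exact ⟨this.1, this.2.trans hb'⟩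
    have hHeq : H s = ∫ τ in (0:ℝ)..s, h s τ (u τ) (u (g τ)) := by
      rw [hH]
      refine intervalIntegral.integral_congr fun τ hτ => ?_
      rw [uIcc_of_le hs.1] at hτ
      have hτb : τ ∈ Icc (0:ℝ) b := ⟨hτ.1, hτ.2.trans hs.2⟩
      have hτrb : τ ∈ Icc (-r) b := ⟨le_trans (by linarith) hτ.1, hτb.2⟩
      have hgτ : g τ ∈ Icc (-r) b := by
        have := hgmem τ hτb; exact ⟨this.1, this.2.trans hb'⟩
      simp only [hK, hG]
      rw [hprid s hs, hprid τ hτb, hUeq τ hτrb, hUeq (g τ) hgτ]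
    simp only [hF, Ffun]
    rw [hprid s hs, hUeq s hsIrb, hHeq]
    simp only [hG]
    rw [hprid s hs, hUeq (g s) hgs]

lemma kernel_contOn {b r : ℝ} (hr0 : -r ≤ 0) (hb' : (0:ℝ) ≤ b)
    {h : ℝ → ℝ → ℝ → ℝ → ℝ} {g u : ℝ → ℝ}
    (hu : ContinuousOn u (Icc (-r) b))
    (hgc : ContinuousOn g (Icc (0:ℝ) b))
    (hgmem : ∀ t ∈ Icc (0:ℝ) b, g t ∈ Icc (-r) 0)
    (hh : ContinuousOn (fun p : ℝ × ℝ × ℝ × ℝ => h p.1 p.2.1 p.2.2.1 p.2.2.2)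
      (Icc (0:ℝ) b ×ˢ Icc (0:ℝ) b ×ˢ (univ : Set (ℝ × ℝ))))
    {s : ℝ} (hs : s ∈ Icc (0:ℝ) b) :
    ContinuousOn (fun τ => h s τ (u τ) (u (g τ))) (Icc (0:ℝ) b) := by
  have hsub : Icc (0:ℝ) b ⊆ Icc (-r) b := fun x hx => ⟨le_trans hr0 hx.1, hx.2⟩
  have hug : ContinuousOn (fun τ => u (g τ)) (Icc (0:ℝ) b) := by
    apply hu.comp hgc
    intro x hx
    have := hgmem x hx
    exact ⟨this.1, this.2.trans hb'⟩
  have hmap : ContinuousOn (fun τ : ℝ => ((s, τ, u τ, u (g τ)) : ℝ × ℝ × ℝ × ℝ))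
      (Icc (0:ℝ) b) :=
    continuousOn_const.prodMk (continuousOn_id.prodMk ((hu.mono hsub).prodMk hug))
  have := hh.comp hmap (fun τ hτ => ⟨hs, hτ, trivial⟩)
  exact this

set_option maxHeartbeats 1600000 in
/-- Bielecki-norm contraction estimate for the solution operator. -/
theorem Gf_bielecki_contraction_estimate
    (b r : ℝ) (hb : 0 < b) (hr : 0 < r) (ψ ψ' : ℝ → ℝ)
    (hψ : ∀ t ∈ Icc (0:ℝ) b, HasDerivWithinAt ψ (ψ' t) (Icc (0:ℝ) b) t)
    (hψ'c : ContinuousOn ψ' (Icc (0:ℝ) b))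
    (hψ'pos : ∀ t ∈ Icc (0:ℝ) b, 0 < ψ' t)
    (hψmono : StrictMonoOn ψ (Icc (0:ℝ) b))
    (α β γ : ℝ) (hα0 : 0 < α) (hα1 : α < 1) (hβ0 : 0 ≤ β) (hβ1 : β ≤ 1)
    (hγ : γ = α + β * (1 - α)) (u₀ : ℝ)
    (φ : ℝ → ℝ) (hφ : ContinuousOn φ (Icc (-r) 0))
    (f h : ℝ → ℝ → ℝ → ℝ → ℝ) (g : ℝ → ℝ)
    -- (H1)
    (hgc : ContinuousOn g (Icc (0:ℝ) b))
    (hgmem : ∀ t ∈ Icc (0:ℝ) b, g t ∈ Icc (-r) 0)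
    (hgle : ∀ t ∈ Icc (0:ℝ) b, g t ≤ t)
    -- (H2)
    (hf : ContinuousOn (fun p : ℝ × ℝ × ℝ × ℝ => f p.1 p.2.1 p.2.2.1 p.2.2.2)
      (Icc (0:ℝ) b ×ˢ (univ : Set (ℝ × ℝ × ℝ))))
    (hh : ContinuousOn (fun p : ℝ × ℝ × ℝ × ℝ => h p.1 p.2.1 p.2.2.1 p.2.2.2)
      (Icc (0:ℝ) b ×ˢ Icc (0:ℝ) b ×ˢ (univ : Set (ℝ × ℝ))))
    (Lf Lh : ℝ) (hLf : 0 < Lf) (hLh : 0 < Lh)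
    (hfLip : ∀ t ∈ Icc (0:ℝ) b, ∀ u₁ u₂ u₃ v₁ v₂ v₃ : ℝ,
      |f t u₁ u₂ u₃ - f t v₁ v₂ v₃| ≤ Lf * (|u₁ - v₁| + |u₂ - v₂| + |u₃ - v₃|))
    (hhLip : ∀ t ∈ Icc (0:ℝ) b, ∀ s ∈ Icc (0:ℝ) b, ∀ u₁ u₂ v₁ v₂ : ℝ,
      |h t s u₁ u₂ - h t s v₁ v₂| ≤ Lh * (|u₁ - v₁| + |u₂ - v₂|))
    -- ζ is a positive lower bound for ψ', δ is the Bielecki parameter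
    (ζ : ℝ) (hζ : 0 < ζ) (hζψ : ∀ s ∈ Icc (0:ℝ) b, ζ ≤ ψ' s)
    (δ : ℝ) (hδ : 0 ≤ δ)
    -- u, v as in the statement
    (u v : ℝ → ℝ)
    (hu : ContinuousOn u (Icc (-r) b)) (hv : ContinuousOn v (Icc (-r) b))
    (huφ : ∀ t ∈ Icc (-r) 0, u t = φ t) (hvφ : ∀ t ∈ Icc (-r) 0, v t = φ t)
    (huw : ∃ W : ℝ → ℝ, ContinuousOn W (Icc (0:ℝ) b) ∧
      ∀ t ∈ Ioc (0:ℝ) b, W t = (ψ t - ψ 0) ^ (1 - γ) * u t)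
    (hvw : ∃ W : ℝ → ℝ, ContinuousOn W (Icc (0:ℝ) b) ∧
      ∀ t ∈ Ioc (0:ℝ) b, W t = (ψ t - ψ 0) ^ (1 - γ) * v t) :
    bnorm ψ γ δ b (fun t => Gf ψ ψ' α γ u₀ φ f h g u t - Gf ψ ψ' α γ u₀ φ f h g v t)
      ≤ 2 * Lf * Real.exp (δ * (ψ b - ψ 0))
          * ((Real.Gamma γ / Real.Gamma (γ + α)) * (ψ b - ψ 0) ^ α
            + (Lh / (ζ * γ)) * (Real.Gamma (γ + 1) / Real.Gamma (γ + α + 1))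
              * (ψ b - ψ 0) ^ (α + 1))
        * bnorm ψ γ δ b (fun t => u t - v t) := by
  obtain ⟨Wu, hWuc, hWueq⟩ := huw
  obtain ⟨Wv, hWvc, hWveq⟩ := hvw
  have hb' : (0:ℝ) ≤ b := hb.le
  have hγ0 : 0 < γ := by nlinarith
  have hγ1 : γ ≤ 1 := by nlinarith
  have h0mem : (0:ℝ) ∈ Icc (0:ℝ) b := ⟨le_rfl, hb'⟩
  have hbmem : b ∈ Icc (0:ℝ) b := ⟨hb', le_rfl⟩
  have hψcont : ContinuousOn ψ (Icc (0:ℝ) b) := fun x hx => (hψ x hx).continuousWithinAt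
  have hψm : MonotoneOn ψ (Icc (0:ℝ) b) := hψmono.monotoneOn
  have hΔpos : ∀ t ∈ Ioc (0:ℝ) b, 0 < ψ t - ψ 0 := fun t ht =>
    sub_pos.2 (hψmono h0mem ⟨ht.1.le, ht.2⟩ ht.1)
  have hΔnn : ∀ t ∈ Icc (0:ℝ) b, 0 ≤ ψ t - ψ 0 := fun t ht =>
    sub_nonneg.2 (hψm h0mem ht ht.1)
  have hΔb : 0 < ψ b - ψ 0 := hΔpos b ⟨hb, le_rfl⟩
  have hΔle : ∀ t ∈ Icc (0:ℝ) b, ψ t - ψ 0 ≤ ψ b - ψ 0 := fun t ht => by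
    have := hψm ht hbmem ht.2; linarith
  -- MVT-type bound : ζ * τ ≤ ψ τ - ψ 0
  have hMVT : ∀ τ ∈ Icc (0:ℝ) b, ζ * τ ≤ ψ τ - ψ 0 := by
    intro τ hτ
    have hmono : MonotoneOn (fun x => ψ x - ζ * x) (Icc (0:ℝ) b) := by
      apply monotoneOn_of_hasDerivWithinAt_nonneg (convex_Icc 0 b)
        (hψcont.sub (continuousOn_const.mul continuousOn_id)) (f' := fun x => ψ' x - ζ)
      · intro x hx
        have hxI : x ∈ Icc (0:ℝ) b := interior_subset hx
        have h1 : HasDerivWithinAt (fun x : ℝ => ζ * x) ζ (interior (Icc (0:ℝ) b)) x := by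
          simpa using (hasDerivWithinAt_id x (interior (Icc (0:ℝ) b))).const_mul ζ
        exact ((hψ x hxI).mono interior_subset).sub h1
      · intro x hx
        have := hζψ x (interior_subset hx); linarith
    have := hmono h0mem hτ hτ.1
    simp only [mul_zero] at this
    linarith
  set E := Real.exp (δ * (ψ b - ψ 0)) with hE
  have hEpos : 0 < E := Real.exp_pos _
  -- Bielecki norm of u - v : pointwise bound
  set N := bnorm ψ γ δ b (fun t => u t - v t) with hNdef
  have hbddS : BddAbove ((fun t => Real.exp (-δ * (ψ t - ψ 0))
      * |(ψ t - ψ 0) ^ (1 - γ) * (u t - v t)|) '' Ioc 0 b) := by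
    have hcontW : ContinuousOn (fun t => Real.exp (-δ * (ψ t - ψ 0)) * |Wu t - Wv t|)
        (Icc (0:ℝ) b) := by
      apply ContinuousOn.mul
      · exact Real.continuous_exp.comp_continuousOn
          (continuousOn_const.mul (hψcont.sub continuousOn_const))
      · exact (hWuc.sub hWvc).abs
    have hbd : BddAbove ((fun t => Real.exp (-δ * (ψ t - ψ 0)) * |Wu t - Wv t|) '' Icc 0 b) :=
      (isCompact_Icc.image_of_continuousOn hcontW).bddAbove
    apply BddAbove.mono ?_ hbd
    rintro x ⟨τ, hτ, rfl⟩
    refine ⟨τ, Ioc_subset_Icc_self hτ, ?_⟩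
    simp only
    rw [hWueq τ hτ, hWveq τ hτ, mul_sub ((ψ τ - ψ 0) ^ (1 - γ)) (u τ) (v τ)]
  have huv0 : ∀ τ ∈ Icc (-r) (0:ℝ), u τ - v τ = 0 := fun τ hτ => by
    rw [huφ τ hτ, hvφ τ hτ, sub_self]
  have hu0v0 : u 0 = v 0 := by
    have := huv0 0 ⟨by linarith, le_rfl⟩; linarith
  have hNmem : ∀ τ ∈ Ioc (0:ℝ) b, Real.exp (-δ * (ψ τ - ψ 0))
      * |(ψ τ - ψ 0) ^ (1 - γ) * (u τ - v τ)| ≤ N := by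
    intro τ hτ
    exact le_csSup hbddS ⟨τ, hτ, rfl⟩
  have hN0 : 0 ≤ N := by
    have := hNmem b ⟨hb, le_rfl⟩
    have h1 : 0 ≤ Real.exp (-δ * (ψ b - ψ 0)) * |(ψ b - ψ 0) ^ (1 - γ) * (u b - v b)| := by
      positivity
    linarith
  have hpt : ∀ τ ∈ Ioc (0:ℝ) b,
      |u τ - v τ| ≤ (ψ τ - ψ 0) ^ (γ - 1) * Real.exp (δ * (ψ τ - ψ 0)) * N := by
    intro τ hτ
    have hΔτ : 0 < ψ τ - ψ 0 := hΔpos τ hτ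
    have hm := hNmem τ hτ
    rw [abs_mul, abs_of_pos (Real.rpow_pos_of_pos hΔτ _)] at hm
    have e1 : (ψ τ - ψ 0) ^ (γ - 1) * (ψ τ - ψ 0) ^ (1 - γ) = 1 := by
      rw [← Real.rpow_add hΔτ]; norm_num
    have e2 : Real.exp (δ * (ψ τ - ψ 0)) * Real.exp (-δ * (ψ τ - ψ 0)) = 1 := by
      rw [← Real.exp_add]; ring_nf; exact Real.exp_zero
    calc |u τ - v τ|
        = (ψ τ - ψ 0) ^ (γ - 1) * Real.exp (δ * (ψ τ - ψ 0))
          * (Real.exp (-δ * (ψ τ - ψ 0)) * ((ψ τ - ψ 0) ^ (1 - γ) * |u τ - v τ|)) := by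
          rw [show (ψ τ - ψ 0) ^ (γ - 1) * Real.exp (δ * (ψ τ - ψ 0))
            * (Real.exp (-δ * (ψ τ - ψ 0)) * ((ψ τ - ψ 0) ^ (1 - γ) * |u τ - v τ|))
            = ((ψ τ - ψ 0) ^ (γ - 1) * (ψ τ - ψ 0) ^ (1 - γ))
              * (Real.exp (δ * (ψ τ - ψ 0)) * Real.exp (-δ * (ψ τ - ψ 0))) * |u τ - v τ|
            from by ring, e1, e2, one_mul, one_mul]
      _ ≤ (ψ τ - ψ 0) ^ (γ - 1) * Real.exp (δ * (ψ τ - ψ 0)) * N := by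
          apply mul_le_mul_of_nonneg_left hm
          positivity
  -- continuous extensions of Ffun and a uniform bound
  obtain ⟨Fu, hFuc, hFueq⟩ := Ffun_continuous hb hr hu hgc hgmem hf hh
  obtain ⟨Fv, hFvc, hFveq⟩ := Ffun_continuous hb hr hv hgc hgmem hf hh
  obtain ⟨Mu, hMu⟩ := isCompact_Icc.exists_bound_of_continuousOn hFuc.continuousOn
  obtain ⟨Mv, hMv⟩ := isCompact_Icc.exists_bound_of_continuousOn hFvc.continuousOn
  set M := max Mu Mv with hM
  have hMbdu : ∀ s ∈ Icc (0:ℝ) b, |Ffun f h g u s| ≤ M := fun s hs => by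
    rw [← Real.norm_eq_abs, ← hFueq s hs]
    exact le_trans (hMu s hs) (le_max_left _ _)
  have hMbdv : ∀ s ∈ Icc (0:ℝ) b, |Ffun f h g v s| ≤ M := fun s hs => by
    rw [← Real.norm_eq_abs, ← hFveq s hs]
    exact le_trans (hMv s hs) (le_max_right _ _)
  have hM0 : 0 ≤ M := le_trans (abs_nonneg _) (hMbdu 0 h0mem)
  have hr0 : -r ≤ (0:ℝ) := by linarith
  -- bound on the difference of the Ffun's
  have hFdiff : ∀ s ∈ Ioc (0:ℝ) b,
      |Ffun f h g u s - Ffun f h g v s|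
        ≤ Lf * (E * N) * ((ψ s - ψ 0) ^ (γ - 1) + Lh / (ζ * γ) * (ψ s - ψ 0) ^ γ) := by
    intro s hs
    have hsI : s ∈ Icc (0:ℝ) b := ⟨hs.1.le, hs.2⟩
    have hΔs : 0 < ψ s - ψ 0 := hΔpos s hs
    have huIcc : uIcc (0:ℝ) s ⊆ Icc (0:ℝ) b := by
      rw [uIcc_of_le hs.1.le]
      exact fun x hx => ⟨hx.1, hx.2.trans hs.2⟩
    have hkeru : IntervalIntegrable (fun τ => h s τ (u τ) (u (g τ))) volume 0 s :=
      ((kernel_contOn hr0 hb' hu hgc hgmem hh hsI).mono huIcc).intervalIntegrable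
    have hkerv : IntervalIntegrable (fun τ => h s τ (v τ) (v (g τ))) volume 0 s :=
      ((kernel_contOn hr0 hb' hv hgc hgmem hh hsI).mono huIcc).intervalIntegrable
    set c2 : ℝ := Lh * (E * N) * ζ ^ (γ - 1) with hc2
    have hc2nn : 0 ≤ c2 := by positivity
    have habs : |(∫ τ in (0:ℝ)..s, h s τ (u τ) (u (g τ)))
        - ∫ τ in (0:ℝ)..s, h s τ (v τ) (v (g τ))|
        ≤ Lh * (E * N) * ((ψ s - ψ 0) ^ γ / (ζ * γ)) := by
      rw [← intervalIntegral.integral_sub hkeru hkerv]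
      have h1 := intervalIntegral.abs_integral_le_integral_abs (μ := volume) (f :=
        fun τ => h s τ (u τ) (u (g τ)) - h s τ (v τ) (v (g τ))) hs.1.le
      have h2 : (∫ τ in (0:ℝ)..s, |h s τ (u τ) (u (g τ)) - h s τ (v τ) (v (g τ))|)
          ≤ ∫ τ in (0:ℝ)..s, c2 * τ ^ (γ - 1) := by
        apply intervalIntegral.integral_mono_on hs.1.le ((hkeru.sub hkerv).abs)
          ((intervalIntegral.intervalIntegrable_rpow' (by linarith)).const_mul c2)
        intro τ hτ
        have hτb : τ ∈ Icc (0:ℝ) b := ⟨hτ.1, hτ.2.trans hs.2⟩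
        have hug : u (g τ) = v (g τ) := by
          have h0 := huφ (g τ) (hgmem τ hτb)
          have h0' := hvφ (g τ) (hgmem τ hτb)
          rw [h0, h0']
        have hstep1 : |h s τ (u τ) (u (g τ)) - h s τ (v τ) (v (g τ))| ≤ Lh * |u τ - v τ| := by
          have hlip := hhLip s hsI τ hτb (u τ) (u (g τ)) (v τ) (v (g τ))
          have h00 : |u (g τ) - v (g τ)| = 0 := by rw [hug]; simp
          rw [h00, add_zero] at hlip
          exact hlip
        rcases eq_or_lt_of_le hτ.1 with h0 | h0
        · have hτ0 : τ = 0 := h0.symm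
          subst hτ0
          have : u 0 - v 0 = 0 := by rw [hu0v0]; ring
          rw [this] at hstep1
          simp only [abs_zero, mul_zero] at hstep1
          have : 0 ≤ c2 * (0:ℝ) ^ (γ - 1) := by positivity
          linarith
        · have hτIoc : τ ∈ Ioc (0:ℝ) b := ⟨h0, hτb.2⟩
          have hζτ : 0 < ζ * τ := by positivity
          have hbase : (ψ τ - ψ 0) ^ (γ - 1) ≤ (ζ * τ) ^ (γ - 1) :=
            Real.rpow_le_rpow_of_nonpos hζτ (hMVT τ hτb) (by linarith)
          have hexp : Real.exp (δ * (ψ τ - ψ 0)) ≤ E := by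
            rw [hE]
            apply Real.exp_le_exp.2
            exact mul_le_mul_of_nonneg_left (hΔle τ hτb) hδ
          have hmr : (ζ * τ) ^ (γ - 1) = ζ ^ (γ - 1) * τ ^ (γ - 1) :=
            Real.mul_rpow hζ.le hτ.1
          calc |h s τ (u τ) (u (g τ)) - h s τ (v τ) (v (g τ))|
              ≤ Lh * |u τ - v τ| := hstep1
            _ ≤ Lh * ((ψ τ - ψ 0) ^ (γ - 1) * Real.exp (δ * (ψ τ - ψ 0)) * N) := by
                apply mul_le_mul_of_nonneg_left (hpt τ hτIoc) hLh.le
            _ ≤ Lh * ((ζ * τ) ^ (γ - 1) * E * N) := by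
                apply mul_le_mul_of_nonneg_left ?_ hLh.le
                apply mul_le_mul ?_ le_rfl hN0 ?_
                · exact mul_le_mul hbase hexp (Real.exp_pos _).le (Real.rpow_nonneg hζτ.le _)
                · positivity
            _ = c2 * τ ^ (γ - 1) := by rw [hmr, hc2]; ring
      have h3 : (∫ τ in (0:ℝ)..s, c2 * τ ^ (γ - 1)) = c2 * (s ^ γ / γ) := by
        rw [intervalIntegral.integral_const_mul, integral_rpow (Or.inl (by linarith))]
        rw [show γ - 1 + 1 = γ by ring, Real.zero_rpow hγ0.ne']
        ring
      have h4 : c2 * (s ^ γ / γ) ≤ Lh * (E * N) * ((ψ s - ψ 0) ^ γ / (ζ * γ)) := by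
        have hsle : s ≤ (ψ s - ψ 0) / ζ := (le_div_iff₀ hζ).2 (by
          have := hMVT s hsI; linarith)
        have hsp : s ^ γ ≤ ((ψ s - ψ 0) / ζ) ^ γ :=
          Real.rpow_le_rpow hs.1.le hsle hγ0.le
        have hkey : ζ ^ (γ - 1) * ((ψ s - ψ 0) / ζ) ^ γ = (ψ s - ψ 0) ^ γ / ζ := by
          have hz : ζ ^ (γ - 1) = ζ ^ γ / ζ := by rw [Real.rpow_sub hζ, Real.rpow_one]
          rw [hz, Real.div_rpow hΔs.le hζ.le]
          have hζγ : (0:ℝ) < ζ ^ γ := Real.rpow_pos_of_pos hζ _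
          field_simp
        calc c2 * (s ^ γ / γ) = Lh * (E * N) * (ζ ^ (γ - 1) * s ^ γ) / γ := by rw [hc2]; ring
          _ ≤ Lh * (E * N) * (ζ ^ (γ - 1) * ((ψ s - ψ 0) / ζ) ^ γ) / γ := by
              gcongr
              all_goals positivity
          _ = Lh * (E * N) * ((ψ s - ψ 0) ^ γ / (ζ * γ)) := by
              rw [hkey]; field_simp
      linarith
    -- now use the Lipschitz property of f
    have hug : u (g s) = v (g s) := by
      have h0 := huφ (g s) (hgmem s hsI)
      have h0' := hvφ (g s) (hgmem s hsI)
      rw [h0, h0']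
    have hlip := hfLip s hsI (u s) (u (g s))
      (∫ τ in (0:ℝ)..s, h s τ (u τ) (u (g τ))) (v s) (v (g s))
      (∫ τ in (0:ℝ)..s, h s τ (v τ) (v (g τ)))
    have h00 : |u (g s) - v (g s)| = 0 := by rw [hug]; simp
    rw [h00, add_zero] at hlip
    have hptu : |u s - v s| ≤ (ψ s - ψ 0) ^ (γ - 1) * E * N := by
      have h1 := hpt s hs
      have hexp : Real.exp (δ * (ψ s - ψ 0)) ≤ E := by
        rw [hE]
        apply Real.exp_le_exp.2
        exact mul_le_mul_of_nonneg_left (hΔle s hsI) hδ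
      calc |u s - v s| ≤ (ψ s - ψ 0) ^ (γ - 1) * Real.exp (δ * (ψ s - ψ 0)) * N := h1
        _ ≤ (ψ s - ψ 0) ^ (γ - 1) * E * N := by
            apply mul_le_mul_of_nonneg_right ?_ hN0
            exact mul_le_mul_of_nonneg_left hexp (Real.rpow_nonneg hΔs.le _)
    calc |Ffun f h g u s - Ffun f h g v s|
        ≤ Lf * (|u s - v s| + |(∫ τ in (0:ℝ)..s, h s τ (u τ) (u (g τ)))
            - ∫ τ in (0:ℝ)..s, h s τ (v τ) (v (g τ))|) := by
          simpa only [Ffun] using hlip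
      _ ≤ Lf * (((ψ s - ψ 0) ^ (γ - 1) * E * N)
            + Lh * (E * N) * ((ψ s - ψ 0) ^ γ / (ζ * γ))) := by
          apply mul_le_mul_of_nonneg_left ?_ hLf.le
          exact add_le_add hptu habs
      _ = Lf * (E * N) * ((ψ s - ψ 0) ^ (γ - 1) + Lh / (ζ * γ) * (ψ s - ψ 0) ^ γ) := by
          ring
  -- Gamma positivity
  have hΓα : 0 < Real.Gamma α := Real.Gamma_pos_of_pos hα0
  have hΓγ : 0 < Real.Gamma γ := Real.Gamma_pos_of_pos hγ0
  have hΓγα : 0 < Real.Gamma (γ + α) := Real.Gamma_pos_of_pos (by linarith)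
  have hΓγ1 : 0 < Real.Gamma (γ + 1) := Real.Gamma_pos_of_pos (by linarith)
  have hΓγα1 : 0 < Real.Gamma (γ + α + 1) := Real.Gamma_pos_of_pos (by linarith)
  set T : ℝ := (Real.Gamma γ / Real.Gamma (γ + α)) * (ψ b - ψ 0) ^ α
      + (Lh / (ζ * γ)) * (Real.Gamma (γ + 1) / Real.Gamma (γ + α + 1)) * (ψ b - ψ 0) ^ (α + 1)
    with hT
  have hpowb1 : 0 ≤ (ψ b - ψ 0) ^ α := Real.rpow_nonneg hΔb.le _
  have hpowb2 : 0 ≤ (ψ b - ψ 0) ^ (α + 1) := Real.rpow_nonneg hΔb.le _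
  have hTnn : 0 ≤ T := by
    rw [hT]
    apply add_nonneg
    · exact mul_nonneg (div_nonneg hΓγ.le hΓγα.le) hpowb1
    · exact mul_nonneg (mul_nonneg (div_nonneg hLh.le (by positivity))
        (div_nonneg hΓγ1.le hΓγα1.le)) hpowb2
  -- per-element estimate
  have helem : ∀ t ∈ Ioc (0:ℝ) b,
      Real.exp (-δ * (ψ t - ψ 0)) * |(ψ t - ψ 0) ^ (1 - γ)
        * (Gf ψ ψ' α γ u₀ φ f h g u t - Gf ψ ψ' α γ u₀ φ f h g v t)|
        ≤ Lf * (E * N) * T := by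
    intro t ht
    have htI : t ∈ Icc (0:ℝ) b := ⟨ht.1.le, ht.2⟩
    have hΔt : 0 < ψ t - ψ 0 := hΔpos t ht
    have hIoosub : Ioo (0:ℝ) t ⊆ Icc (0:ℝ) b := fun x hx => ⟨hx.1.le, hx.2.le.trans ht.2⟩
    -- key integrals
    have K1 := key_subst hψ hψ'pos hψmono hα0 one_pos ht
    have Kγ := key_subst hψ hψ'pos hψmono hα0 hγ0 ht
    have Kγ1 := key_subst hψ hψ'pos hψmono hα0 (by linarith : (0:ℝ) < γ + 1) ht
    have hK1' : IntervalIntegrable (fun s => ψ' s * (ψ t - ψ s) ^ (α - 1)) volume 0 t := by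
      have := K1.1
      simpa using this
    have hKγ1' : IntervalIntegrable
        (fun s => ψ' s * ((ψ t - ψ s) ^ (α - 1) * (ψ s - ψ 0) ^ γ)) volume 0 t := by
      have := Kγ1.1
      simpa [add_sub_cancel_right] using this
    have hKγ1val : (∫ s in (0:ℝ)..t, ψ' s * ((ψ t - ψ s) ^ (α - 1) * (ψ s - ψ 0) ^ γ))
        = (ψ t - ψ 0) ^ (γ + α)
          * (Real.Gamma (γ + 1) * Real.Gamma α / Real.Gamma (γ + α + 1)) := by
      have h1 := Kγ1.2
      rw [show γ + 1 + α - 1 = γ + α by ring, show γ + 1 + α = γ + α + 1 by ring] at h1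
      simpa [add_sub_cancel_right] using h1
    -- measurability of the integrands on (0, t)
    have haesm_base : AEStronglyMeasurable (fun s => ψ' s * (ψ t - ψ s) ^ (α - 1))
        (volume.restrict (Ioo (0:ℝ) t)) := by
      have h1 : AEStronglyMeasurable ψ' (volume.restrict (Ioo (0:ℝ) t)) :=
        (hψ'c.mono hIoosub).aestronglyMeasurable measurableSet_Ioo
      have h2 : ContinuousOn (fun s => (ψ t - ψ s) ^ (α - 1)) (Ioo (0:ℝ) t) := by
        apply ContinuousOn.rpow_const (continuousOn_const.sub (hψcont.mono hIoosub))
        intro s hs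
        left
        exact (sub_pos.2 (hψmono (hIoosub hs) htI hs.2)).ne'
      exact h1.mul (h2.aestronglyMeasurable measurableSet_Ioo)
    have hFu_aesm : AEStronglyMeasurable (fun s => Ffun f h g u s)
        (volume.restrict (Ioo (0:ℝ) t)) := by
      apply (hFuc.aestronglyMeasurable (μ := volume.restrict (Ioo (0:ℝ) t))).congr
      filter_upwards [ae_restrict_mem measurableSet_Ioo] with s hs
      exact hFueq s (hIoosub hs)
    have hFv_aesm : AEStronglyMeasurable (fun s => Ffun f h g v s)
        (volume.restrict (Ioo (0:ℝ) t)) := by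
      apply (hFvc.aestronglyMeasurable (μ := volume.restrict (Ioo (0:ℝ) t))).congr
      filter_upwards [ae_restrict_mem measurableSet_Ioo] with s hs
      exact hFveq s (hIoosub hs)
    -- integrability of the two Gf integrands
    have hmajor : IntegrableOn (fun s => M * (ψ' s * (ψ t - ψ s) ^ (α - 1))) (Ioo (0:ℝ) t) :=
      ((intervalIntegrable_iff_integrableOn_Ioo_of_le ht.1.le).1 hK1').const_mul M
    have hbase_nn : ∀ s ∈ Icc (0:ℝ) t, 0 ≤ ψ' s * (ψ t - ψ s) ^ (α - 1) := by
      intro s hs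
      have hsIb : s ∈ Icc (0:ℝ) b := ⟨hs.1, hs.2.trans ht.2⟩
      exact mul_nonneg (hψ'pos s hsIb).le
        (Real.rpow_nonneg (sub_nonneg.2 (hψm hsIb htI hs.2)) _)
    have IAoo : IntegrableOn (fun s => ψ' s * (ψ t - ψ s) ^ (α - 1) * Ffun f h g u s)
        (Ioo (0:ℝ) t) := by
      apply Integrable.mono' hmajor (haesm_base.mul hFu_aesm)
      filter_upwards [ae_restrict_mem measurableSet_Ioo] with s hs
      have hsIb : s ∈ Icc (0:ℝ) b := hIoosub hs
      show ‖ψ' s * (ψ t - ψ s) ^ (α - 1) * Ffun f h g u s‖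
        ≤ M * (ψ' s * (ψ t - ψ s) ^ (α - 1))
      rw [Real.norm_eq_abs, abs_mul]
      have h1 : |ψ' s * (ψ t - ψ s) ^ (α - 1)| = ψ' s * (ψ t - ψ s) ^ (α - 1) :=
        abs_of_nonneg (hbase_nn s ⟨hs.1.le, hs.2.le⟩)
      rw [h1]
      calc ψ' s * (ψ t - ψ s) ^ (α - 1) * |Ffun f h g u s|
          ≤ ψ' s * (ψ t - ψ s) ^ (α - 1) * M :=
            mul_le_mul_of_nonneg_left (hMbdu s hsIb) (hbase_nn s ⟨hs.1.le, hs.2.le⟩)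
        _ = M * (ψ' s * (ψ t - ψ s) ^ (α - 1)) := by ring
    have IBoo : IntegrableOn (fun s => ψ' s * (ψ t - ψ s) ^ (α - 1) * Ffun f h g v s)
        (Ioo (0:ℝ) t) := by
      apply Integrable.mono' hmajor (haesm_base.mul hFv_aesm)
      filter_upwards [ae_restrict_mem measurableSet_Ioo] with s hs
      have hsIb : s ∈ Icc (0:ℝ) b := hIoosub hs
      show ‖ψ' s * (ψ t - ψ s) ^ (α - 1) * Ffun f h g v s‖
        ≤ M * (ψ' s * (ψ t - ψ s) ^ (α - 1))
      rw [Real.norm_eq_abs, abs_mul]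
      have h1 : |ψ' s * (ψ t - ψ s) ^ (α - 1)| = ψ' s * (ψ t - ψ s) ^ (α - 1) :=
        abs_of_nonneg (hbase_nn s ⟨hs.1.le, hs.2.le⟩)
      rw [h1]
      calc ψ' s * (ψ t - ψ s) ^ (α - 1) * |Ffun f h g v s|
          ≤ ψ' s * (ψ t - ψ s) ^ (α - 1) * M :=
            mul_le_mul_of_nonneg_left (hMbdv s hsIb) (hbase_nn s ⟨hs.1.le, hs.2.le⟩)
        _ = M * (ψ' s * (ψ t - ψ s) ^ (α - 1)) := by ring
    have IA : IntervalIntegrable (fun s => ψ' s * (ψ t - ψ s) ^ (α - 1) * Ffun f h g u s)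
        volume 0 t := (intervalIntegrable_iff_integrableOn_Ioo_of_le ht.1.le).2 IAoo
    have IB : IntervalIntegrable (fun s => ψ' s * (ψ t - ψ s) ^ (α - 1) * Ffun f h g v s)
        volume 0 t := (intervalIntegrable_iff_integrableOn_Ioo_of_le ht.1.le).2 IBoo
    -- the majorant function and its integral
    set cA := Lf * (E * N) with hcA
    set cB := Lf * (E * N) * (Lh / (ζ * γ)) with hcB
    have hcAnn : 0 ≤ cA := by rw [hcA]; positivity
    have hcBnn : 0 ≤ cB := by rw [hcB]; positivity
    set Maj : ℝ → ℝ := fun s => cA * (ψ' s * ((ψ t - ψ s) ^ (α - 1) * (ψ s - ψ 0) ^ (γ - 1)))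
        + cB * (ψ' s * ((ψ t - ψ s) ^ (α - 1) * (ψ s - ψ 0) ^ γ)) with hMaj
    have IMaj : IntervalIntegrable Maj volume 0 t :=
      (Kγ.1.const_mul cA).add (hKγ1'.const_mul cB)
    have hMajval : (∫ s in (0:ℝ)..t, Maj s)
        = cA * ((ψ t - ψ 0) ^ (γ + α - 1)
            * (Real.Gamma γ * Real.Gamma α / Real.Gamma (γ + α)))
          + cB * ((ψ t - ψ 0) ^ (γ + α)
            * (Real.Gamma (γ + 1) * Real.Gamma α / Real.Gamma (γ + α + 1))) := by
      simp only [hMaj]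
      rw [intervalIntegral.integral_add (Kγ.1.const_mul cA) (hKγ1'.const_mul cB),
        intervalIntegral.integral_const_mul, intervalIntegral.integral_const_mul, Kγ.2, hKγ1val]
    -- pointwise bound
    have hptw : ∀ s ∈ Icc (0:ℝ) t,
        |ψ' s * (ψ t - ψ s) ^ (α - 1) * Ffun f h g u s
          - ψ' s * (ψ t - ψ s) ^ (α - 1) * Ffun f h g v s| ≤ Maj s := by
      intro s hs
      have hsIb : s ∈ Icc (0:ℝ) b := ⟨hs.1, hs.2.trans ht.2⟩
      have hb_nn := hbase_nn s hs
      have hABeq : ψ' s * (ψ t - ψ s) ^ (α - 1) * Ffun f h g u s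
          - ψ' s * (ψ t - ψ s) ^ (α - 1) * Ffun f h g v s
          = ψ' s * (ψ t - ψ s) ^ (α - 1) * (Ffun f h g u s - Ffun f h g v s) := by ring
      rw [hABeq, abs_mul, abs_of_nonneg hb_nn]
      rcases eq_or_lt_of_le hs.1 with h0 | h0
      · have hs0 : s = 0 := h0.symm
        subst hs0
        have hug0 : u (g 0) = v (g 0) := by
          rw [huφ (g 0) (hgmem 0 h0mem), hvφ (g 0) (hgmem 0 h0mem)]
        have hF0 : Ffun f h g u 0 = Ffun f h g v 0 := by
          simp only [Ffun, intervalIntegral.integral_same]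
          rw [hu0v0, hug0]
        rw [hF0, sub_self, abs_zero, mul_zero]
        simp only [hMaj]
        apply add_nonneg
        · exact mul_nonneg hcAnn (mul_nonneg (hψ'pos 0 h0mem).le (mul_nonneg
            (Real.rpow_nonneg (hΔnn t htI) _) (Real.rpow_nonneg (by simp) _)))
        · exact mul_nonneg hcBnn (mul_nonneg (hψ'pos 0 h0mem).le (mul_nonneg
            (Real.rpow_nonneg (hΔnn t htI) _) (Real.rpow_nonneg (by simp) _)))
      · have hsIoc : s ∈ Ioc (0:ℝ) b := ⟨h0, hsIb.2⟩
        calc ψ' s * (ψ t - ψ s) ^ (α - 1) * |Ffun f h g u s - Ffun f h g v s|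
            ≤ ψ' s * (ψ t - ψ s) ^ (α - 1)
              * (Lf * (E * N) * ((ψ s - ψ 0) ^ (γ - 1) + Lh / (ζ * γ) * (ψ s - ψ 0) ^ γ)) :=
              mul_le_mul_of_nonneg_left (hFdiff s hsIoc) hb_nn
          _ = Maj s := by simp only [hMaj, hcA, hcB]; ring
    -- assembling
    have habs2 : |(∫ s in (0:ℝ)..t, ψ' s * (ψ t - ψ s) ^ (α - 1) * Ffun f h g u s)
        - ∫ s in (0:ℝ)..t, ψ' s * (ψ t - ψ s) ^ (α - 1) * Ffun f h g v s|
        ≤ ∫ s in (0:ℝ)..t, Maj s := by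
      rw [← intervalIntegral.integral_sub IA IB]
      calc |∫ s in (0:ℝ)..t, (ψ' s * (ψ t - ψ s) ^ (α - 1) * Ffun f h g u s
            - ψ' s * (ψ t - ψ s) ^ (α - 1) * Ffun f h g v s)|
          ≤ ∫ s in (0:ℝ)..t, |ψ' s * (ψ t - ψ s) ^ (α - 1) * Ffun f h g u s
            - ψ' s * (ψ t - ψ s) ^ (α - 1) * Ffun f h g v s| :=
            intervalIntegral.abs_integral_le_integral_abs (μ := volume) ht.1.le
        _ ≤ ∫ s in (0:ℝ)..t, Maj s :=
            intervalIntegral.integral_mono_on ht.1.le (IA.sub IB).abs IMaj hptw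
    have hGfd : Gf ψ ψ' α γ u₀ φ f h g u t - Gf ψ ψ' α γ u₀ φ f h g v t
        = (Real.Gamma α)⁻¹
          * ((∫ s in (0:ℝ)..t, ψ' s * (ψ t - ψ s) ^ (α - 1) * Ffun f h g u s)
            - ∫ s in (0:ℝ)..t, ψ' s * (ψ t - ψ s) ^ (α - 1) * Ffun f h g v s) := by
      simp only [Gf, if_neg (not_le.2 ht.1)]
      ring
    have harith : (ψ t - ψ 0) ^ (1 - γ) * ((Real.Gamma α)⁻¹ * ∫ s in (0:ℝ)..t, Maj s)
        = cA * ((Real.Gamma γ / Real.Gamma (γ + α)) * (ψ t - ψ 0) ^ α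
          + Lh / (ζ * γ) * (Real.Gamma (γ + 1) / Real.Gamma (γ + α + 1))
            * (ψ t - ψ 0) ^ (α + 1)) := by
      rw [hMajval]
      have e1 : (ψ t - ψ 0) ^ (1 - γ) * (ψ t - ψ 0) ^ (γ + α - 1) = (ψ t - ψ 0) ^ α := by
        rw [← Real.rpow_add hΔt, show 1 - γ + (γ + α - 1) = α by ring]
      have e2 : (ψ t - ψ 0) ^ (1 - γ) * (ψ t - ψ 0) ^ (γ + α) = (ψ t - ψ 0) ^ (α + 1) := by
        rw [← Real.rpow_add hΔt, show 1 - γ + (γ + α) = α + 1 by ring]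
      calc (ψ t - ψ 0) ^ (1 - γ) * ((Real.Gamma α)⁻¹
            * (cA * ((ψ t - ψ 0) ^ (γ + α - 1)
                * (Real.Gamma γ * Real.Gamma α / Real.Gamma (γ + α)))
              + cB * ((ψ t - ψ 0) ^ (γ + α)
                * (Real.Gamma (γ + 1) * Real.Gamma α / Real.Gamma (γ + α + 1)))))
          = cA * ((ψ t - ψ 0) ^ (1 - γ) * (ψ t - ψ 0) ^ (γ + α - 1))
              * (Real.Gamma γ * (Real.Gamma α * (Real.Gamma α)⁻¹) / Real.Gamma (γ + α))
            + cB * ((ψ t - ψ 0) ^ (1 - γ) * (ψ t - ψ 0) ^ (γ + α))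
              * (Real.Gamma (γ + 1) * (Real.Gamma α * (Real.Gamma α)⁻¹)
                / Real.Gamma (γ + α + 1)) := by ring
        _ = cA * ((Real.Gamma γ / Real.Gamma (γ + α)) * (ψ t - ψ 0) ^ α
            + Lh / (ζ * γ) * (Real.Gamma (γ + 1) / Real.Gamma (γ + α + 1))
              * (ψ t - ψ 0) ^ (α + 1)) := by
            rw [e1, e2, mul_inv_cancel₀ hΓα.ne']
            simp only [hcA, hcB]
            ring
    calc Real.exp (-δ * (ψ t - ψ 0)) * |(ψ t - ψ 0) ^ (1 - γ)
          * (Gf ψ ψ' α γ u₀ φ f h g u t - Gf ψ ψ' α γ u₀ φ f h g v t)|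
        = Real.exp (-δ * (ψ t - ψ 0)) * ((ψ t - ψ 0) ^ (1 - γ)
          * |Gf ψ ψ' α γ u₀ φ f h g u t - Gf ψ ψ' α γ u₀ φ f h g v t|) := by
          rw [abs_mul, abs_of_pos (Real.rpow_pos_of_pos hΔt _)]
      _ ≤ 1 * ((ψ t - ψ 0) ^ (1 - γ) * ((Real.Gamma α)⁻¹ * ∫ s in (0:ℝ)..t, Maj s)) := by
          apply mul_le_mul
          · exact Real.exp_le_one_iff.2 (by nlinarith [hΔt.le])
          · apply mul_le_mul_of_nonneg_left ?_ (Real.rpow_nonneg hΔt.le _)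
            rw [hGfd, abs_mul, abs_of_nonneg (inv_nonneg.2 hΓα.le)]
            exact mul_le_mul_of_nonneg_left habs2 (inv_nonneg.2 hΓα.le)
          · positivity
          · exact zero_le_one
      _ = (ψ t - ψ 0) ^ (1 - γ) * ((Real.Gamma α)⁻¹ * ∫ s in (0:ℝ)..t, Maj s) := one_mul _
      _ = cA * ((Real.Gamma γ / Real.Gamma (γ + α)) * (ψ t - ψ 0) ^ α
            + Lh / (ζ * γ) * (Real.Gamma (γ + 1) / Real.Gamma (γ + α + 1))
              * (ψ t - ψ 0) ^ (α + 1)) := harith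
      _ ≤ cA * T := by
          rw [hT]
          apply mul_le_mul_of_nonneg_left ?_ hcAnn
          apply add_le_add
          · exact mul_le_mul_of_nonneg_left
              (Real.rpow_le_rpow hΔt.le (hΔle t htI) hα0.le)
              (div_nonneg hΓγ.le hΓγα.le)
          · exact mul_le_mul_of_nonneg_left
              (Real.rpow_le_rpow hΔt.le (hΔle t htI) (by linarith))
              (mul_nonneg (div_nonneg hLh.le (by positivity))
                (div_nonneg hΓγ1.le hΓγα1.le))
      _ = Lf * (E * N) * T := by rw [hcA]
  -- conclusion
  have hRHS0 : 0 ≤ 2 * Lf * E * T * N :=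
    mul_nonneg (mul_nonneg (mul_nonneg (by linarith) hEpos.le) hTnn) hN0
  show bnorm ψ γ δ b (fun t => Gf ψ ψ' α γ u₀ φ f h g u t - Gf ψ ψ' α γ u₀ φ f h g v t)
      ≤ 2 * Lf * E * T * N
  rw [bnorm]
  apply Real.sSup_le
  · rintro x ⟨t, ht, rfl⟩
    simp only
    refine le_trans (helem t ht) ?_
    have h0 : 0 ≤ Lf * (E * N) * T := mul_nonneg (mul_nonneg hLf.le
      (mul_nonneg hEpos.le hN0)) hTnn
    have heq : 2 * Lf * E * T * N = 2 * (Lf * (E * N) * T) := by ring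
    rw [heq]
    linarith
  · exact hRHS0
end
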